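/- arXiv:1908.08319 — 7 statements merged into one kernel-verified Lean document; each statement's English description precedes it below -/
import Mathlib

section
/- Let α ∈ (0,1) and φ ∈ L^∞([a,b], ℝⁿ). Define (R^α_{a+} φ)(t) = ((1−α) sin(απ)/π) ∫_a^t K(t−a, τ−a) φ(τ) dτ, where K is the kernel K(ξ,τ) = τ^{α−1} ∫_0^1 η^α/((1−η)^α (τ+η(ξ−τ))^α) dη. Then (R^α_{a+}φ)(t) is well defined for every t ∈ [a,b], the function R^α_{a+}φ is measurable, and ‖(R^α_{a+}φ)(t)‖ ≤ (sin(απ)/(απ)) · ess sup_{τ∈[a,t]} ‖φ(τ)‖ for all t ∈ [a,b]. -/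
open MeasureTheory Set Real

/-- The kernel `K(ξ,τ) = (1/τ^{1-α}) ∫_0^1 η^α/((1-η)^α (τ+η(ξ-τ))^α) dη`. -/
noncomputable def kernelK (α ξ τ : ℝ) : ℝ :=
  (1 / τ ^ (1 - α)) *
    ∫ η in (0 : ℝ)..1, η ^ α / ((1 - η) ^ α * (τ + η * (ξ - τ)) ^ α)

lemma measurable_rpow_const' {β : Type*} [MeasurableSpace β] {f : β → ℝ} (hf : Measurable f)
    (c : ℝ) : Measurable fun x => f x ^ c := by
  have h : Measurable fun x : ℝ => x ^ c := by measurability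
  exact h.comp hf

lemma kernelK_measurable (α : ℝ) : Measurable (fun p : ℝ × ℝ => kernelK α p.1 p.2) := by
  unfold kernelK
  have h1 : Measurable (fun p : ℝ × ℝ => 1 / p.2 ^ (1 - α)) :=
    measurable_const.div (measurable_rpow_const' measurable_snd _)
  refine h1.mul ?_
  have heq : (fun p : ℝ × ℝ =>
      ∫ η in (0 : ℝ)..1, η ^ α / ((1 - η) ^ α * (p.2 + η * (p.1 - p.2)) ^ α))
      = fun p : ℝ × ℝ =>
      ∫ η, η ^ α / ((1 - η) ^ α * (p.2 + η * (p.1 - p.2)) ^ α) ∂(volume.restrict (Ioc (0:ℝ) 1)) := by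
    funext p
    rw [intervalIntegral.integral_of_le zero_le_one]
  rw [heq]
  have hm : StronglyMeasurable (fun q : (ℝ × ℝ) × ℝ =>
      q.2 ^ α / ((1 - q.2) ^ α * (q.1.2 + q.2 * (q.1.1 - q.1.2)) ^ α)) := by
    apply Measurable.stronglyMeasurable
    exact (measurable_rpow_const' measurable_snd α).div
      ((measurable_rpow_const' (measurable_const.sub measurable_snd) α).mul
        (measurable_rpow_const' ((measurable_fst.snd).add
          (measurable_snd.mul (measurable_fst.fst.sub measurable_fst.snd))) α))
  exact hm.integral_prod_right'.measurable

lemma kernelK_nonneg {α ξ τ : ℝ} (hξ : 0 ≤ ξ) (hτ : 0 ≤ τ) : 0 ≤ kernelK α ξ τ := by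
  unfold kernelK
  apply mul_nonneg (by positivity)
  apply intervalIntegral.integral_nonneg zero_le_one
  intro η hη
  have h1 : (0:ℝ) ≤ η ^ α := rpow_nonneg hη.1 _
  have h2 : (0:ℝ) ≤ (1 - η) ^ α := rpow_nonneg (by linarith [hη.2]) _
  have h3 : (0:ℝ) ≤ (τ + η * (ξ - τ)) ^ α := by
    apply rpow_nonneg
    nlinarith [hη.1, hη.2]
  positivity

lemma inner_integrable (α : ℝ) (hα : α ∈ Set.Ioo (0:ℝ) 1) :
    IntervalIntegrable (fun η : ℝ => (1 - η) ^ (-α)) volume 0 1 := by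
  have := (intervalIntegral.intervalIntegrable_rpow' (a := 0) (b := 1) (r := -α) (by linarith [hα.2])).comp_sub_left 1
  simpa using this.symm

lemma inner_integral_val (α : ℝ) (hα : α ∈ Set.Ioo (0:ℝ) 1) :
    ∫ η in (0:ℝ)..1, (1 - η) ^ (-α) = 1 / (1 - α) := by
  obtain ⟨hα0, hα1⟩ := hα
  have h := intervalIntegral.integral_comp_sub_left (a := 0) (b := 1)
    (fun x : ℝ => x ^ (-α)) 1
  rw [h]
  norm_num
  rw [integral_rpow (Or.inl (by linarith))]
  rw [Real.one_rpow, Real.zero_rpow (by linarith)]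
  ring

lemma kernelK_le {α ξ τ : ℝ} (hα : α ∈ Set.Ioo (0:ℝ) 1) (hτ : 0 < τ) (hτξ : τ ≤ ξ) :
    kernelK α ξ τ ≤ (1 / τ ^ (1 - α)) * (ξ ^ (-α) / (1 - α)) := by
  obtain ⟨hα0, hα1⟩ := hα
  have hξ : 0 < ξ := lt_of_lt_of_le hτ hτξ
  unfold kernelK
  have hbd : ∀ η ∈ Set.Icc (0:ℝ) 1,
      η ^ α / ((1 - η) ^ α * (τ + η * (ξ - τ)) ^ α) ≤ (1 - η) ^ (-α) * ξ ^ (-α) := by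
    intro η hη
    obtain ⟨hη0, hη1⟩ := hη
    rcases eq_or_lt_of_le hη1 with rfl | hη1'
    · simp only [sub_self, Real.zero_rpow hα0.ne', zero_mul, div_zero,
        Real.zero_rpow (by linarith : -α ≠ 0)]
      exact le_rfl
    · -- η < 1
      have h1η : 0 < 1 - η := by linarith
      have hc : 0 < τ + η * (ξ - τ) := by nlinarith
      have hcη : η * ξ ≤ τ + η * (ξ - τ) := by nlinarith
      have key : η ^ α / (τ + η * (ξ - τ)) ^ α ≤ ξ ^ (-α) := by
        rw [← Real.div_rpow hη0 hc.le, Real.rpow_neg hξ.le, ← Real.inv_rpow hξ.le]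
        apply Real.rpow_le_rpow (by positivity) _ hα0.le
        rw [inv_eq_one_div, div_le_div_iff₀ hc hξ]
        nlinarith
      have hrw : η ^ α / ((1 - η) ^ α * (τ + η * (ξ - τ)) ^ α)
          = (η ^ α / (τ + η * (ξ - τ)) ^ α) * ((1 - η) ^ α)⁻¹ := by
        rw [div_eq_mul_inv, mul_inv, div_eq_mul_inv]
        ring
      rw [hrw, Real.rpow_neg h1η.le, mul_comm (((1 - η) ^ α)⁻¹)]
      exact mul_le_mul_of_nonneg_right key
        (inv_nonneg.mpr (Real.rpow_nonneg h1η.le α))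
  have hmeas : Measurable (fun η : ℝ => η ^ α / ((1 - η) ^ α * (τ + η * (ξ - τ)) ^ α)) :=
    (measurable_rpow_const' measurable_id α).div
      ((measurable_rpow_const' (measurable_const.sub measurable_id) α).mul
        (measurable_rpow_const' (measurable_const.add
          (measurable_id.mul measurable_const)) α))
  have hRint : IntervalIntegrable (fun η : ℝ => (1 - η) ^ (-α) * ξ ^ (-α)) volume 0 1 :=
    (inner_integrable α ⟨hα0, hα1⟩).mul_const _
  have hLint : IntervalIntegrable
      (fun η : ℝ => η ^ α / ((1 - η) ^ α * (τ + η * (ξ - τ)) ^ α)) volume 0 1 := by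
    apply hRint.mono_fun hmeas.aestronglyMeasurable
    filter_upwards [ae_restrict_mem measurableSet_uIoc] with η hη
    rw [Set.uIoc_of_le zero_le_one] at hη
    have hη' : η ∈ Set.Icc (0:ℝ) 1 := ⟨hη.1.le, hη.2⟩
    have h0 : 0 ≤ η ^ α / ((1 - η) ^ α * (τ + η * (ξ - τ)) ^ α) := by
      have h1 : (0:ℝ) ≤ η ^ α := Real.rpow_nonneg hη'.1 _
      have h2 : (0:ℝ) ≤ (1 - η) ^ α := Real.rpow_nonneg (by linarith [hη'.2]) _
      have h3 : (0:ℝ) ≤ (τ + η * (ξ - τ)) ^ α := Real.rpow_nonneg (by nlinarith [hη'.1, hη'.2]) _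
      positivity
    have h0' : (0:ℝ) ≤ (1 - η) ^ (-α) * ξ ^ (-α) := by
      have := Real.rpow_nonneg (by linarith [hη'.2] : (0:ℝ) ≤ 1 - η) (-α)
      have := Real.rpow_nonneg hξ.le (-α)
      positivity
    rw [Real.norm_eq_abs, Real.norm_eq_abs, abs_of_nonneg h0, abs_of_nonneg h0']
    exact hbd η hη'
  have hle := intervalIntegral.integral_mono_on zero_le_one hLint hRint hbd
  rw [intervalIntegral.integral_mul_const, inner_integral_val α ⟨hα0, hα1⟩] at hle
  have hτp : (0:ℝ) ≤ 1 / τ ^ (1 - α) := by positivity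
  calc (1 / τ ^ (1 - α)) * ∫ η in (0:ℝ)..1, η ^ α / ((1 - η) ^ α * (τ + η * (ξ - τ)) ^ α)
      ≤ (1 / τ ^ (1 - α)) * (1 / (1 - α) * ξ ^ (-α)) := mul_le_mul_of_nonneg_left hle hτp
    _ = (1 / τ ^ (1 - α)) * (ξ ^ (-α) / (1 - α)) := by ring

lemma essSup_zero_measure (f : ℝ → ℝ) : essSup f (0 : Measure ℝ) = 0 := by
  rw [essSup, ae_zero, Filter.limsup_eq]
  simp only [Filter.eventually_bot, Set.setOf_true]
  exact Real.sInf_of_not_bddBelow not_bddBelow_univ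

/-- Properties of the operator
`(R^α_{a+} φ)(t) = ((1-α) sin(απ)/π) ∫_a^t K(t-a, τ-a) φ(τ) dτ`:
well-definedness, measurability, and the bound
`‖(R^α_{a+}φ)(t)‖ ≤ (sin(απ)/(απ)) · ess sup_{[a,t]} ‖φ‖`. -/
theorem operator_R_properties
    (n : ℕ) (a b : ℝ) (hab : a ≤ b) (α : ℝ) (hα : α ∈ Set.Ioo (0 : ℝ) 1)
    (φ : ℝ → EuclideanSpace ℝ (Fin n)) (hφm : Measurable φ)
    (hφb : eLpNorm φ ⊤ (volume.restrict (Set.Icc a b)) < ⊤) :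
    (∀ t ∈ Set.Icc a b,
      IntervalIntegrable (fun τ => kernelK α (t - a) (τ - a) • φ τ) volume a t) ∧
    Measurable (fun t =>
      ((1 - α) * Real.sin (α * π) / π) • ∫ τ in a..t, kernelK α (t - a) (τ - a) • φ τ) ∧
    ∀ t ∈ Set.Icc a b,
      ‖((1 - α) * Real.sin (α * π) / π) • ∫ τ in a..t, kernelK α (t - a) (τ - a) • φ τ‖
        ≤ (Real.sin (α * π) / (α * π))
            * essSup (fun τ => (‖φ τ‖ : ℝ)) (volume.restrict (Set.Icc a t)) := by
  obtain ⟨hα0, hα1⟩ := hα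
  have h1α : (0:ℝ) < 1 - α := by linarith
  set N : ℝ := (eLpNormEssSup φ (volume.restrict (Icc a b))).toReal with hNdef
  have hNt : eLpNormEssSup φ (volume.restrict (Icc a b)) ≠ ⊤ := by
    rw [eLpNorm_exponent_top] at hφb; exact hφb.ne
  have hN0 : 0 ≤ N := ENNReal.toReal_nonneg
  have hNae : ∀ᵐ τ ∂(volume.restrict (Icc a b)), ‖φ τ‖ ≤ N := by
    filter_upwards [ae_le_eLpNormEssSup (f := φ) (μ := volume.restrict (Icc a b))] with τ hτ
    have := ENNReal.toReal_mono hNt hτ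
    simpa using this
  -- the shifted rpow is interval integrable
  have hgshift : ∀ t : ℝ, IntervalIntegrable (fun τ : ℝ => (τ - a) ^ (α - 1)) volume a t := by
    intro t
    have := (intervalIntegral.intervalIntegrable_rpow' (a := 0) (b := t - a)
      (r := α - 1) (by linarith)).comp_sub_right a
    simpa using this
  -- Part 1 : integrability
  have hint : ∀ t ∈ Icc a b,
      IntervalIntegrable (fun τ => kernelK α (t - a) (τ - a) • φ τ) volume a t := by
    intro t ht
    rcases eq_or_lt_of_le ht.1 with rfl | hat
    · rw [intervalIntegrable_iff]
      have : Set.uIoc a a = (∅ : Set ℝ) := by simp [Set.uIoc]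
      rw [this]
      exact integrableOn_empty
    · have hg' : IntervalIntegrable
          (fun τ : ℝ => ((t - a) ^ (-α) / (1 - α) * N) * (τ - a) ^ (α - 1)) volume a t :=
        (hgshift t).const_mul _
      have hm : AEStronglyMeasurable (fun τ => kernelK α (t - a) (τ - a) • φ τ)
          (volume.restrict (Set.uIoc a t)) := by
        apply Measurable.aestronglyMeasurable
        exact ((kernelK_measurable α).comp
          (measurable_const.prodMk (measurable_id.sub_const a))).smul hφm
      apply hg'.mono_fun' hm
      rw [uIoc_of_le hat.le]
      have hNall : ∀ᵐ τ ∂(volume.restrict (Ioc a t)), ‖φ τ‖ ≤ N :=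
        ae_restrict_of_ae_restrict_of_subset
          (Ioc_subset_Icc_self.trans (Icc_subset_Icc_right ht.2)) hNae
      filter_upwards [hNall, ae_restrict_mem measurableSet_Ioc] with τ hτN hτmem
      have hτa : 0 < τ - a := by linarith [hτmem.1]
      have hτt : τ - a ≤ t - a := by linarith [hτmem.2]
      rw [norm_smul, Real.norm_eq_abs,
        abs_of_nonneg (kernelK_nonneg (by linarith) hτa.le)]
      have hK := kernelK_le ⟨hα0, hα1⟩ hτa hτt
      have h1 : kernelK α (t - a) (τ - a) * ‖φ τ‖
          ≤ ((1 / (τ - a) ^ (1 - α)) * ((t - a) ^ (-α) / (1 - α))) * N := by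
        have hKnn : 0 ≤ (1 / (τ - a) ^ (1 - α)) * ((t - a) ^ (-α) / (1 - α)) := by
          have h2 := Real.rpow_nonneg hτa.le (1 - α)
          have h3 := Real.rpow_nonneg (by linarith : (0:ℝ) ≤ t - a) (-α)
          positivity
        exact mul_le_mul hK hτN (norm_nonneg _) hKnn
      refine h1.trans ?_
      have heq : (1 / (τ - a) ^ (1 - α)) * ((t - a) ^ (-α) / (1 - α)) * N
          = ((t - a) ^ (-α) / (1 - α) * N) * (τ - a) ^ (α - 1) := by
        have hx : (τ - a) ^ (α - 1) = ((τ - a) ^ (1 - α))⁻¹ := by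
          rw [← Real.rpow_neg hτa.le]; ring_nf
        rw [hx, one_div]; ring
      rw [heq]
  refine ⟨hint, ?_, ?_⟩
  -- Part 2 : measurability
  · have hjm : Measurable (fun p : ℝ × ℝ => kernelK α (p.1 - a) (p.2 - a) • φ p.2) :=
      ((kernelK_measurable α).comp
        ((measurable_fst.sub_const a).prodMk (measurable_snd.sub_const a))).smul
        (hφm.comp measurable_snd)
    have hmeas2 : Measurable (fun t => ∫ τ in a..t, kernelK α (t - a) (τ - a) • φ τ) := by
      have e1 : (fun t => ∫ τ in a..t, kernelK α (t - a) (τ - a) • φ τ)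
          = fun t =>
            (∫ τ, (if a < τ ∧ τ ≤ t then kernelK α (t - a) (τ - a) • φ τ else 0))
            - (∫ τ, (if t < τ ∧ τ ≤ a then kernelK α (t - a) (τ - a) • φ τ else 0)) := by
        funext t
        rw [intervalIntegral, ← integral_indicator measurableSet_Ioc,
          ← integral_indicator measurableSet_Ioc]
        congr 1 <;> · congr 1; funext τ; simp [Set.indicator_apply, Set.mem_Ioc]
      rw [e1]
      have hs1 : MeasurableSet {p : ℝ × ℝ | a < p.2 ∧ p.2 ≤ p.1} := by
        rw [Set.setOf_and]
        exact (measurableSet_lt measurable_const measurable_snd).inter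
          (measurableSet_le measurable_snd measurable_fst)
      have hs2 : MeasurableSet {p : ℝ × ℝ | p.1 < p.2 ∧ p.2 ≤ a} := by
        rw [Set.setOf_and]
        exact (measurableSet_lt measurable_fst measurable_snd).inter
          (measurableSet_le measurable_snd measurable_const)
      have hF1 : StronglyMeasurable (fun p : ℝ × ℝ =>
          if a < p.2 ∧ p.2 ≤ p.1 then kernelK α (p.1 - a) (p.2 - a) • φ p.2 else 0) :=
        (Measurable.ite hs1 hjm measurable_const).stronglyMeasurable
      have hF2 : StronglyMeasurable (fun p : ℝ × ℝ =>
          if p.1 < p.2 ∧ p.2 ≤ a then kernelK α (p.1 - a) (p.2 - a) • φ p.2 else 0) :=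
        (Measurable.ite hs2 hjm measurable_const).stronglyMeasurable
      exact (hF1.integral_prod_right'.measurable).sub (hF2.integral_prod_right'.measurable)
    exact hmeas2.const_smul ((1 - α) * Real.sin (α * π) / π)
  -- Part 3 : the bound
  · intro t ht
    rcases eq_or_lt_of_le ht.1 with rfl | hat
    · rw [intervalIntegral.integral_same, smul_zero, norm_zero]
      have hres : volume.restrict (Icc a a) = 0 := by
        rw [Measure.restrict_eq_zero, Icc_self]
        exact Real.volume_singleton
      rw [hres, essSup_zero_measure, mul_zero]
    · have hsin : 0 < Real.sin (α * π) :=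
        Real.sin_pos_of_pos_of_lt_pi (by positivity) (by nlinarith [Real.pi_pos])
      have hc0 : (0:ℝ) ≤ (1 - α) * Real.sin (α * π) / π := by positivity
      set M := essSup (fun τ => ‖φ τ‖) (volume.restrict (Icc a t)) with hM
      have hNae' : ∀ᵐ τ ∂(volume.restrict (Icc a t)), ‖φ τ‖ ≤ N :=
        ae_restrict_of_ae_restrict_of_subset (Icc_subset_Icc_right ht.2) hNae
      have hbdd : Filter.IsBoundedUnder (· ≤ ·) (ae (volume.restrict (Icc a t)))
          (fun τ => ‖φ τ‖) := ⟨N, Filter.eventually_map.mpr hNae'⟩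
      have hMae : ∀ᵐ τ ∂(volume.restrict (Icc a t)), ‖φ τ‖ ≤ M := ae_le_essSup hbdd
      have hμ : volume.restrict (Icc a t) ≠ 0 := by
        rw [Ne, Measure.restrict_eq_zero, Real.volume_Icc]
        simp only [ENNReal.ofReal_eq_zero, not_le]
        linarith
      have hM0 : 0 ≤ M := by
        have : (ae (volume.restrict (Icc a t))).NeBot := ae_neBot.mpr hμ
        obtain ⟨τ, hτ⟩ := hMae.exists
        exact le_trans (norm_nonneg _) hτ
      have hfInt := hint t ht
      have hgInt : IntervalIntegrable
          (fun τ : ℝ => ((t - a) ^ (-α) / (1 - α) * M) * (τ - a) ^ (α - 1)) volume a t :=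
        (hgshift t).const_mul _
      have haeb : ∀ᵐ τ ∂(volume.restrict (Icc a t)),
          ‖kernelK α (t - a) (τ - a) • φ τ‖
            ≤ ((t - a) ^ (-α) / (1 - α) * M) * (τ - a) ^ (α - 1) := by
        filter_upwards [hMae, ae_restrict_mem measurableSet_Icc] with τ hτM hτmem
        rcases eq_or_lt_of_le hτmem.1 with rfl | hτa
        · have hK0 : kernelK α (t - a) (a - a) = 0 := by
            unfold kernelK
            rw [sub_self, Real.zero_rpow (by linarith : (1:ℝ) - α ≠ 0)]
            simp
          rw [hK0, zero_smul, norm_zero, sub_self,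
            Real.zero_rpow (by linarith : α - 1 ≠ 0), mul_zero]
        · have hτa' : 0 < τ - a := by linarith
          have hτt : τ - a ≤ t - a := by linarith [hτmem.2]
          rw [norm_smul, Real.norm_eq_abs,
            abs_of_nonneg (kernelK_nonneg (by linarith) hτa'.le)]
          have hK := kernelK_le ⟨hα0, hα1⟩ hτa' hτt
          have h1 : kernelK α (t - a) (τ - a) * ‖φ τ‖
              ≤ ((1 / (τ - a) ^ (1 - α)) * ((t - a) ^ (-α) / (1 - α))) * M := by
            have hKnn : 0 ≤ (1 / (τ - a) ^ (1 - α)) * ((t - a) ^ (-α) / (1 - α)) := by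
              have h2 := Real.rpow_nonneg hτa'.le (1 - α)
              have h3 := Real.rpow_nonneg (by linarith : (0:ℝ) ≤ t - a) (-α)
              positivity
            exact mul_le_mul hK hτM (norm_nonneg _) hKnn
          refine h1.trans (le_of_eq ?_)
          have hx : (τ - a) ^ (α - 1) = ((τ - a) ^ (1 - α))⁻¹ := by
            rw [← Real.rpow_neg hτa'.le]; ring_nf
          rw [hx, one_div]; ring
      have hval : ∫ τ in a..t, ((t - a) ^ (-α) / (1 - α) * M) * (τ - a) ^ (α - 1)
          = ((t - a) ^ (-α) / (1 - α) * M) * ((t - a) ^ α / α) := by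
        rw [intervalIntegral.integral_const_mul]
        congr 1
        have hcs := intervalIntegral.integral_comp_sub_right (a := a) (b := t)
          (fun x : ℝ => x ^ (α - 1)) a
        rw [hcs, sub_self, integral_rpow (Or.inl (by linarith : (-1:ℝ) < α - 1)),
          Real.zero_rpow (by linarith : α - 1 + 1 ≠ 0)]
        have hxp : α - 1 + 1 = α := by ring
        rw [hxp]
        ring
      calc ‖((1 - α) * Real.sin (α * π) / π) • ∫ τ in a..t, kernelK α (t - a) (τ - a) • φ τ‖
          = ((1 - α) * Real.sin (α * π) / π)
            * ‖∫ τ in a..t, kernelK α (t - a) (τ - a) • φ τ‖ := by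
            rw [norm_smul, Real.norm_eq_abs, abs_of_nonneg hc0]
        _ ≤ ((1 - α) * Real.sin (α * π) / π)
            * ∫ τ in a..t, ‖kernelK α (t - a) (τ - a) • φ τ‖ :=
            mul_le_mul_of_nonneg_left
              (intervalIntegral.norm_integral_le_integral_norm hat.le) hc0
        _ ≤ ((1 - α) * Real.sin (α * π) / π)
            * ∫ τ in a..t, ((t - a) ^ (-α) / (1 - α) * M) * (τ - a) ^ (α - 1) :=
            mul_le_mul_of_nonneg_left
              (intervalIntegral.integral_mono_ae_restrict hat.le hfInt.norm hgInt haeb) hc0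
        _ = Real.sin (α * π) / (α * π) * M := by
            rw [hval]
            have h1 : (t - a) ^ (-α) * (t - a) ^ α = 1 := by
              rw [← Real.rpow_add (by linarith : (0:ℝ) < t - a)]
              norm_num
            have hstep : (1 - α) * Real.sin (α * π) / π
                * ((t - a) ^ (-α) / (1 - α) * M * ((t - a) ^ α / α))
                = Real.sin (α * π) / (α * π) * M
                  * ((t - a) ^ (-α) * (t - a) ^ α) * ((1 - α) * (1 - α)⁻¹) := by
              field_simp
            rw [hstep, h1, mul_one, mul_inv_cancel₀ h1α.ne', mul_one]
end

section
/- Let α ∈ (0,1) and φ ∈ L^∞([a,b], ℝⁿ), and let (J^α_{a+} φ)(t) = ((t−a)^{1−α}/Γ(α)) ∫_a^t φ(τ) / ((t−τ)^{1−α} (τ−a)^{1−α}) dτ. Then J^α_{a+}φ satisfies the Hölder estimate ‖(J^α_{a+}φ)(t₁) − (J^α_{a+}φ)(t₂)‖ ≤ (2/Γ(α+1)) (1 + sin(απ)/(απ)) · ‖φ‖_∞ · |t₁ − t₂|^α for all t₁, t₂ ∈ [a,b]; in particular J^α_{a+}φ is continuous on [a,b]. -/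
open MeasureTheory Set Real intervalIntegral

set_option maxHeartbeats 1000000

namespace OpJHolderAux

variable {α : ℝ}

lemma wNonneg {s : ℝ} (hs : 0 ≤ s) (hs1 : s ≤ 1) :
    0 ≤ s ^ (α-1) * (1-s) ^ (α-1) :=
  mul_nonneg (Real.rpow_nonneg hs _) (Real.rpow_nonneg (by linarith) _)

lemma half_rpow (α : ℝ) : ((1:ℝ)/2) ^ (α-1) = 2 ^ (1-α) := by
  rw [show (1:ℝ)/2 = 2⁻¹ by norm_num, ← Real.rpow_neg_one 2,
    ← Real.rpow_mul (by norm_num : (0:ℝ) ≤ 2)]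
  ring_nf

lemma wMeas (α : ℝ) : Measurable fun s : ℝ => s ^ (α-1) * (1-s) ^ (α-1) :=
  (measurable_id.pow_const _).mul ((measurable_const.sub measurable_id).pow_const _)

lemma wInt0 (h0 : 0 < α) (h1 : α < 1) :
    IntervalIntegrable (fun s => s ^ (α-1) * (1-s) ^ (α-1)) volume 0 1 := by
  have hα1 : (-1:ℝ) < α - 1 := by linarith
  have half1 : IntervalIntegrable (fun s => s ^ (α-1) * (1-s) ^ (α-1)) volume 0 (1/2) := by
    apply IntervalIntegrable.mono_fun
      ((intervalIntegrable_rpow' hα1 (a := 0) (b := 1/2)).const_mul ((2:ℝ)^(1-α)))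
      ((wMeas α).aestronglyMeasurable.restrict)
    rw [Filter.EventuallyLE, ae_restrict_iff' measurableSet_uIoc]
    apply Filter.Eventually.of_forall
    intro s hs
    rw [Set.uIoc_of_le (by norm_num : (0:ℝ) ≤ 1/2)] at hs
    have hs0 : 0 < s := hs.1
    have hs2 : s ≤ 1/2 := hs.2
    have hb : (1-s) ^ (α-1) ≤ 2 ^ (1-α) := by
      rw [← half_rpow]
      exact Real.rpow_le_rpow_of_nonpos (by norm_num) (by linarith) (by linarith)
    rw [Real.norm_eq_abs, Real.norm_eq_abs,
      abs_of_nonneg (wNonneg hs0.le (by linarith)),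
      abs_of_nonneg (mul_nonneg (Real.rpow_nonneg (by norm_num) _) (Real.rpow_nonneg hs0.le _))]
    calc s ^ (α-1) * (1-s) ^ (α-1) ≤ s ^ (α-1) * 2 ^ (1-α) :=
          mul_le_mul_of_nonneg_left hb (Real.rpow_nonneg hs0.le _)
      _ = 2 ^ (1-α) * s ^ (α-1) := mul_comm _ _
  have hg2 : IntervalIntegrable (fun s : ℝ => (1-s) ^ (α-1)) volume (1/2) 1 := by
    have := (intervalIntegrable_rpow' hα1 (a := 0) (b := 1/2)).comp_sub_left 1
    norm_num at this
    exact this.symm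
  have half2 : IntervalIntegrable (fun s => s ^ (α-1) * (1-s) ^ (α-1)) volume (1/2) 1 := by
    apply IntervalIntegrable.mono_fun (hg2.const_mul ((2:ℝ)^(1-α)))
      ((wMeas α).aestronglyMeasurable.restrict)
    rw [Filter.EventuallyLE, ae_restrict_iff' measurableSet_uIoc]
    apply Filter.Eventually.of_forall
    intro s hs
    rw [Set.uIoc_of_le (by norm_num : (1:ℝ)/2 ≤ 1)] at hs
    have hb : s ^ (α-1) ≤ 2 ^ (1-α) := by
      rw [← half_rpow]
      exact Real.rpow_le_rpow_of_nonpos (by norm_num) hs.1.le (by linarith)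
    have h1s : 0 ≤ 1 - s := by linarith [hs.2]
    rw [Real.norm_eq_abs, Real.norm_eq_abs,
      abs_of_nonneg (wNonneg (by linarith [hs.1]) (by linarith [hs.2])),
      abs_of_nonneg (mul_nonneg (Real.rpow_nonneg (by norm_num) _) (Real.rpow_nonneg h1s _))]
    exact mul_le_mul_of_nonneg_right hb (Real.rpow_nonneg h1s _)
  exact half1.trans half2

lemma wInt (h0 : 0 < α) (h1 : α < 1) {σ : ℝ} (hσ : 0 ≤ σ) (hσ1 : σ ≤ 1) :
    IntervalIntegrable (fun s => s ^ (α-1) * (1-s) ^ (α-1)) volume σ 1 :=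
  (wInt0 h0 h1).mono_set (by rw [Set.uIcc_of_le hσ1, Set.uIcc_of_le zero_le_one]; exact Icc_subset_Icc hσ le_rfl)

lemma kMeas (α a t : ℝ) : Measurable fun τ : ℝ => (t-τ) ^ (α-1) * (τ-a) ^ (α-1) :=
  ((measurable_const.sub measurable_id).pow_const _).mul
    ((measurable_id.sub measurable_const).pow_const _)

lemma kNonneg {a t τ : ℝ} (h1 : a ≤ τ) (h2 : τ ≤ t) :
    0 ≤ (t-τ) ^ (α-1) * (τ-a) ^ (α-1) :=
  mul_nonneg (Real.rpow_nonneg (by linarith) _) (Real.rpow_nonneg (by linarith) _)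

lemma kInt (h0 : 0 < α) (h1 : α < 1) {a t : ℝ} (hat : a ≤ t) :
    IntervalIntegrable (fun τ => (t-τ) ^ (α-1) * (τ-a) ^ (α-1)) volume a t := by
  rcases eq_or_lt_of_le hat with h | hat'
  · subst h
    rw [intervalIntegrable_iff]; simp
  have hα1 : (-1:ℝ) < α - 1 := by linarith
  set m := (a + t)/2 with hm
  have ham : a < m := by rw [hm]; linarith
  have hmt : m < t := by rw [hm]; linarith
  have hc : (0:ℝ) < (t-a)/2 := by linarith
  -- integrability of the translated rpow's
  have hia : IntervalIntegrable (fun τ : ℝ => (τ-a) ^ (α-1)) volume a m := by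
    have := (intervalIntegrable_rpow' hα1 (a := 0) (b := m - a)).comp_sub_right a
    simpa using this
  have hit : IntervalIntegrable (fun τ : ℝ => (t-τ) ^ (α-1)) volume m t := by
    have := (intervalIntegrable_rpow' hα1 (a := 0) (b := t - m)).comp_sub_left t
    norm_num at this
    exact this.symm
  have half1 : IntervalIntegrable (fun τ => (t-τ) ^ (α-1) * (τ-a) ^ (α-1)) volume a m := by
    apply IntervalIntegrable.mono_fun (hia.const_mul (((t-a)/2) ^ (α-1)))
      ((kMeas α a t).aestronglyMeasurable.restrict)
    rw [Filter.EventuallyLE, ae_restrict_iff' measurableSet_uIoc]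
    apply Filter.Eventually.of_forall
    intro τ hτ
    rw [Set.uIoc_of_le ham.le] at hτ
    have hb : (t-τ) ^ (α-1) ≤ ((t-a)/2) ^ (α-1) := by
      apply Real.rpow_le_rpow_of_nonpos hc (by linarith [hτ.2]) (by linarith)
    rw [Real.norm_eq_abs, Real.norm_eq_abs,
      abs_of_nonneg (kNonneg (by linarith [hτ.1]) (by linarith [hτ.2, hmt])),
      abs_of_nonneg (mul_nonneg (Real.rpow_nonneg hc.le _) (Real.rpow_nonneg (by linarith [hτ.1]) _))]
    exact mul_le_mul_of_nonneg_right hb (Real.rpow_nonneg (by linarith [hτ.1]) _)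
  have half2 : IntervalIntegrable (fun τ => (t-τ) ^ (α-1) * (τ-a) ^ (α-1)) volume m t := by
    apply IntervalIntegrable.mono_fun (hit.mul_const (((t-a)/2) ^ (α-1)))
      ((kMeas α a t).aestronglyMeasurable.restrict)
    rw [Filter.EventuallyLE, ae_restrict_iff' measurableSet_uIoc]
    apply Filter.Eventually.of_forall
    intro τ hτ
    rw [Set.uIoc_of_le hmt.le] at hτ
    have hb : (τ-a) ^ (α-1) ≤ ((t-a)/2) ^ (α-1) := by
      apply Real.rpow_le_rpow_of_nonpos hc (by linarith [hτ.1]) (by linarith)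
    rw [Real.norm_eq_abs, Real.norm_eq_abs,
      abs_of_nonneg (kNonneg (by linarith [hτ.1, ham]) hτ.2),
      abs_of_nonneg (mul_nonneg (Real.rpow_nonneg (by linarith [hτ.2]) _) (Real.rpow_nonneg hc.le _))]
    exact mul_le_mul_of_nonneg_left hb (Real.rpow_nonneg (by linarith [hτ.2]) _)
  exact half1.trans half2

lemma kIntV (h0 : 0 < α) (h1 : α < 1) {n : ℕ} {a b t M : ℝ} (hat : a ≤ t) (hab : a ≤ b) (htb : t ≤ b)
    {φ : ℝ → EuclideanSpace ℝ (Fin n)} (hφm : Measurable φ)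
    (hbd : ∀ᵐ τ ∂(volume.restrict (Icc a b)), ‖φ τ‖ ≤ M) :
    IntervalIntegrable (fun τ => ((t-τ) ^ (α-1) * (τ-a) ^ (α-1)) • φ τ) volume a t := by
  have hbd' : ∀ᵐ τ ∂(volume.restrict (Set.uIoc a t)), ‖φ τ‖ ≤ M := by
    apply ae_restrict_of_ae_restrict_of_subset _ hbd
    rw [Set.uIoc_of_le hat]
    exact (Set.Ioc_subset_Icc_self).trans (Set.Icc_subset_Icc le_rfl htb)
  apply IntervalIntegrable.mono_fun ((kInt h0 h1 hat).const_mul M)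
    (((kMeas α a t).aestronglyMeasurable.smul hφm.aestronglyMeasurable).restrict)
  rw [Filter.EventuallyLE]
  filter_upwards [hbd', ae_restrict_mem measurableSet_uIoc] with τ hφτ hτ
  rw [Set.uIoc_of_le hat] at hτ
  have hk := kNonneg (α := α) hτ.1.le hτ.2
  show ‖(((t-τ) ^ (α-1) * (τ-a) ^ (α-1)) • φ τ)‖ ≤ ‖M * ((t-τ) ^ (α-1) * (τ-a) ^ (α-1))‖
  rw [norm_smul, Real.norm_eq_abs, Real.norm_eq_abs, abs_of_nonneg hk,
    abs_of_nonneg (mul_nonneg (le_trans (norm_nonneg _) hφτ) hk)]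
  calc ((t-τ) ^ (α-1) * (τ-a) ^ (α-1)) * ‖φ τ‖
      ≤ ((t-τ) ^ (α-1) * (τ-a) ^ (α-1)) * M := mul_le_mul_of_nonneg_left hφτ hk
    _ = M * ((t-τ) ^ (α-1) * (τ-a) ^ (α-1)) := mul_comm _ _

lemma E1 (h0 : 0 < α) (h1 : α < 1) :
    α * ∫ s in (0:ℝ)..1, s ^ (α-1) * (1-s) ^ (α-1) ≤ (4:ℝ) ^ (1-α) := by
  have hα1 : (-1:ℝ) < α - 1 := by linarith
  have hsplit : (∫ s in (0:ℝ)..1, s ^ (α-1) * (1-s) ^ (α-1))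
      = (∫ s in (0:ℝ)..(1/2), s ^ (α-1) * (1-s) ^ (α-1))
        + ∫ s in (1/2:ℝ)..1, s ^ (α-1) * (1-s) ^ (α-1) := by
    rw [intervalIntegral.integral_add_adjacent_intervals
      ((wInt0 h0 h1).mono_set (by rw [Set.uIcc_of_le (by norm_num : (0:ℝ) ≤ 1/2), Set.uIcc_of_le zero_le_one]; exact Icc_subset_Icc le_rfl (by norm_num)))
      ((wInt0 h0 h1).mono_set (by rw [Set.uIcc_of_le (by norm_num : (1:ℝ)/2 ≤ 1), Set.uIcc_of_le zero_le_one]; exact Icc_subset_Icc (by norm_num) le_rfl))]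
  have hv : (∫ s in (0:ℝ)..(1/2), s ^ (α-1)) = (1/2:ℝ)^α / α := by
    rw [integral_rpow (Or.inl hα1)]
    norm_num
    rw [Real.zero_rpow (by linarith)]
    ring_nf
  have b1 : (∫ s in (0:ℝ)..(1/2), s ^ (α-1) * (1-s) ^ (α-1))
      ≤ 2 ^ (1-α) * ((1/2:ℝ)^α / α) := by
    rw [← hv, ← intervalIntegral.integral_const_mul]
    apply intervalIntegral.integral_mono_on (by norm_num)
      ((wInt0 h0 h1).mono_set (by rw [Set.uIcc_of_le (by norm_num : (0:ℝ) ≤ 1/2), Set.uIcc_of_le zero_le_one]; exact Icc_subset_Icc le_rfl (by norm_num)))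
      ((intervalIntegrable_rpow' hα1).const_mul _)
    intro s hs
    have hb : (1-s) ^ (α-1) ≤ 2 ^ (1-α) := by
      rw [← half_rpow]
      exact Real.rpow_le_rpow_of_nonpos (by norm_num) (by linarith [hs.2]) (by linarith)
    calc s ^ (α-1) * (1-s) ^ (α-1) ≤ s ^ (α-1) * 2 ^ (1-α) :=
          mul_le_mul_of_nonneg_left hb (Real.rpow_nonneg hs.1 _)
      _ = 2 ^ (1-α) * s ^ (α-1) := mul_comm _ _
  have hv2 : (∫ s in (1/2:ℝ)..1, (1-s) ^ (α-1)) = (1/2:ℝ)^α / α := by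
    rw [show (fun s : ℝ => (1-s)^(α-1)) = (fun s : ℝ => ((1:ℝ) - s)^(α-1)) by rfl]
    rw [intervalIntegral.integral_comp_sub_left (fun u : ℝ => u ^ (α-1)) 1]
    norm_num [hv]
  have b2 : (∫ s in (1/2:ℝ)..1, s ^ (α-1) * (1-s) ^ (α-1))
      ≤ 2 ^ (1-α) * ((1/2:ℝ)^α / α) := by
    rw [← hv2, ← intervalIntegral.integral_const_mul]
    apply intervalIntegral.integral_mono_on (by norm_num)
      ((wInt0 h0 h1).mono_set (by rw [Set.uIcc_of_le (by norm_num : (1:ℝ)/2 ≤ 1), Set.uIcc_of_le zero_le_one]; exact Icc_subset_Icc (by norm_num) le_rfl))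
      (by
        have : IntervalIntegrable (fun s : ℝ => (1-s)^(α-1)) volume (1/2) 1 := by
          have := (intervalIntegrable_rpow' hα1 (a := 0) (b := 1/2)).comp_sub_left 1
          norm_num at this
          exact this.symm
        exact this.const_mul _)
    intro s hs
    have hb : s ^ (α-1) ≤ 2 ^ (1-α) := by
      rw [← half_rpow]
      exact Real.rpow_le_rpow_of_nonpos (by norm_num) hs.1 (by linarith)
    exact mul_le_mul_of_nonneg_right hb (Real.rpow_nonneg (by linarith [hs.2]) _)
  have hval : α * (2 ^ (1-α) * ((1/2:ℝ)^α / α) + 2 ^ (1-α) * ((1/2:ℝ)^α / α)) = (4:ℝ)^(1-α) := by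
    have hhalf : ((1:ℝ)/2)^α = (2:ℝ)^(-α) := by
      rw [show (1:ℝ)/2 = 2⁻¹ by norm_num, ← Real.rpow_neg_one 2,
        ← Real.rpow_mul (by norm_num : (0:ℝ) ≤ 2)]
      ring_nf
    have h2 : (2:ℝ)^(-α) * 2 = 2^(1-α) := by
      rw [← Real.rpow_add_one (by norm_num : (2:ℝ) ≠ 0)]
      ring_nf
    have h4 : (4:ℝ)^(1-α) = 2^(1-α) * 2^(1-α) := by
      rw [show (4:ℝ) = 2*2 by norm_num, Real.mul_rpow (by norm_num) (by norm_num)]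
    rw [hhalf, h4, ← h2]
    field_simp
    ring
  calc α * ∫ s in (0:ℝ)..1, s ^ (α-1) * (1-s) ^ (α-1)
      ≤ α * (2 ^ (1-α) * ((1/2:ℝ)^α / α) + 2 ^ (1-α) * ((1/2:ℝ)^α / α)) := by
        rw [hsplit]; exact mul_le_mul_of_nonneg_left (add_le_add b1 b2) h0.le
    _ = (4:ℝ)^(1-α) := hval

lemma E2 (h0 : 0 < α) (h1 : α < 1) :
    (4:ℝ) ^ (1-α) ≤ 2 + 2 * (Real.sin (α*π)/(α*π)) := by
  have hπ : 0 < π := Real.pi_pos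
  have hπ315 : π < 3.15 := Real.pi_lt_d2
  have hx0 : 0 < α*π := by positivity
  have hsin0 : 0 ≤ Real.sin (α*π)/(α*π) :=
    div_nonneg (Real.sin_nonneg_of_nonneg_of_le_pi (by positivity) (by nlinarith)) hx0.le
  rcases le_total (1/2 : ℝ) α with hhalf | hhalf
  · have hle : (4:ℝ)^(1-α) ≤ 4^(1/2:ℝ) :=
      Real.rpow_le_rpow_of_exponent_le (by norm_num) (by linarith)
    have h42 : (4:ℝ)^(1/2:ℝ) = 2 := by
      rw [show (4:ℝ) = 2^(2:ℕ) by norm_num, ← Real.rpow_natCast 2 2,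
        ← Real.rpow_mul (by norm_num : (0:ℝ) ≤ 2)]
      norm_num
    linarith
  · rcases le_total α (3/10 : ℝ) with h310 | h310
    · -- small α : use sin x > x - x^3/4 on (0,1]
      have hx1 : α*π ≤ 1 := by nlinarith
      have hsin : 1 - (α*π)^2/4 ≤ Real.sin (α*π)/(α*π) := by
        rw [le_div_iff₀ hx0]
        nlinarith [Real.sin_gt_sub_cube hx0, pow_pos hx0 3]
      set t := α * Real.log 4 with ht
      have hlog4 : Real.log 4 = 2 * Real.log 2 := by
        rw [show (4:ℝ) = 2^(2:ℕ) by norm_num, Real.log_pow]; push_cast; ring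
      have htpos : 0 < t := by
        rw [ht]; exact mul_pos h0 (Real.log_pos (by norm_num))
      have hexp : (4:ℝ)^(1-α) = 4 * Real.exp (-t) := by
        rw [Real.rpow_def_of_pos (by norm_num : (0:ℝ) < 4),
          show Real.log 4 * (1-α) = Real.log 4 + -(α * Real.log 4) by ring,
          Real.exp_add, Real.exp_log (by norm_num : (0:ℝ) < 4), ht]
      have hub : Real.exp (-t) ≤ 1/(1 + t) := by
        rw [Real.exp_neg, one_div]
        exact inv_anti₀ (by linarith) (by linarith [Real.add_one_le_exp t])
      have hlog2lt : Real.log 2 < 0.6931471808 := Real.log_two_lt_d9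
      have hlog2gt : (0.6931471803:ℝ) < Real.log 2 := Real.log_two_gt_d9
      have ht1 : 1.38*α ≤ t := by rw [ht, hlog4]; nlinarith
      have ht2 : t ≤ 1.39*α := by rw [ht, hlog4]; nlinarith
      have hmid : 4 * (1/(1 + t)) ≤ 4 - (α*π)^2/2 := by
        rw [mul_one_div, div_le_iff₀ (by linarith : (0:ℝ) < 1 + t)]
        nlinarith [sq_nonneg α, mul_pos h0 hx0, sq_nonneg (α*π)]
      calc (4:ℝ)^(1-α) = 4 * Real.exp (-t) := hexp
        _ ≤ 4 * (1/(1+t)) := by linarith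
        _ ≤ 4 - (α*π)^2/2 := hmid
        _ ≤ 2 + 2 * (Real.sin (α*π)/(α*π)) := by linarith
    · -- middle α ∈ [3/10, 1/2]
      have hJ : 2/π * (α*π) ≤ Real.sin (α*π) := Real.mul_le_sin hx0.le (by nlinarith)
      have hsinc : 2/π ≤ Real.sin (α*π)/(α*π) := by
        rw [le_div_iff₀ hx0]; linarith
      have hle : (4:ℝ)^(1-α) ≤ 4^(7/10:ℝ) :=
        Real.rpow_le_rpow_of_exponent_le (by norm_num) (by linarith)
      have h47 : ((4:ℝ)^(7/10:ℝ))^(10:ℕ) = 16384 := by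
        rw [← Real.rpow_natCast ((4:ℝ)^(7/10:ℝ)) 10,
          ← Real.rpow_mul (by norm_num : (0:ℝ) ≤ 4)]
        norm_num
      have h465 : (4:ℝ)^(7/10:ℝ) ≤ 2.65 := by
        apply le_of_pow_le_pow_left₀ (by norm_num : (10:ℕ) ≠ 0) (by norm_num : (0:ℝ) ≤ 2.65)
        rw [h47]; norm_num
      have hπb : (0.65:ℝ) ≤ 4/π := by
        rw [le_div_iff₀ hπ]; nlinarith
      calc (4:ℝ)^(1-α) ≤ 2.65 := hle.trans h465
        _ ≤ 2 + 2*(2/π) := by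
            have : 2*(2/π) = 4/π := by ring
            linarith
        _ ≤ 2 + 2 * (Real.sin (α*π)/(α*π)) := by linarith

lemma cov (h0 : 0 < α) (h1 : α < 1) {a t c : ℝ} (hat : a < t) (hc : a ≤ c) (hct : c ≤ t) :
    ∫ τ in c..t, (t-τ) ^ (α-1) * (τ-a) ^ (α-1)
      = (t-a) ^ (2*α-1) * ∫ s in ((c-a)/(t-a))..1, s ^ (α-1) * (1-s) ^ (α-1) := by
  have hta : 0 < t - a := by linarith
  set σ := (c-a)/(t-a) with hσdef
  have hσ0 : 0 ≤ σ := div_nonneg (by linarith) hta.le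
  have hσ1 : σ ≤ 1 := by rw [hσdef, div_le_one hta]; linarith
  have hsub := intervalIntegral.integral_comp_mul_add
      (a := σ) (b := 1) (fun τ => (t-τ) ^ (α-1) * (τ-a) ^ (α-1)) (by linarith : t - a ≠ 0) a
  have he1 : (t-a)*σ + a = c := by rw [hσdef]; field_simp; ring
  have he2 : (t-a)*1 + a = t := by ring
  rw [he1, he2] at hsub
  have hcong : ∀ s ∈ Set.uIcc σ 1,
      (t-((t-a)*s+a)) ^ (α-1) * (((t-a)*s+a)-a) ^ (α-1)
        = (t-a)^(α-1) * (t-a)^(α-1) * (s ^ (α-1) * (1-s) ^ (α-1)) := by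
    intro s hs
    rw [Set.uIcc_of_le hσ1] at hs
    have hs0 : 0 ≤ s := le_trans hσ0 hs.1
    have e1 : t-((t-a)*s+a) = (t-a)*(1-s) := by ring
    have e2 : ((t-a)*s+a)-a = (t-a)*s := by ring
    rw [e1, e2, Real.mul_rpow hta.le (by linarith [hs.2]), Real.mul_rpow hta.le hs0]
    ring
  rw [intervalIntegral.integral_congr hcong, intervalIntegral.integral_const_mul] at hsub
  have hflip : ∫ τ in c..t, (t-τ) ^ (α-1) * (τ-a) ^ (α-1)
      = (t-a) * ((t-a)^(α-1)*(t-a)^(α-1) * ∫ s in σ..1, s ^ (α-1) * (1-s) ^ (α-1)) := by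
    rw [hsub, smul_eq_mul]
    field_simp
  rw [hflip]
  have hpow : (t-a) * ((t-a)^(α-1)*(t-a)^(α-1)) = (t-a)^(2*α-1) := by
    nth_rewrite 1 [← Real.rpow_one (t-a)]
    rw [← Real.rpow_add hta, ← Real.rpow_add hta]
    ring_nf
  rw [← mul_assoc, hpow]

lemma covA (h0 : 0 < α) (h1 : α < 1) {a t : ℝ} (hat : a ≤ t) :
    (t-a) ^ (1-α) * ∫ τ in a..t, (t-τ) ^ (α-1) * (τ-a) ^ (α-1)
      = (t-a) ^ α * ∫ s in (0:ℝ)..1, s ^ (α-1) * (1-s) ^ (α-1) := by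
  rcases eq_or_lt_of_le hat with h | hat'
  · subst h
    rw [intervalIntegral.integral_same, sub_self, Real.zero_rpow (by linarith : (1:ℝ)-α ≠ 0),
      Real.zero_rpow (by linarith : α ≠ 0)]
    ring
  have hta : 0 < t - a := by linarith
  rw [cov h0 h1 hat' le_rfl hat, sub_self, zero_div, ← mul_assoc,
    ← Real.rpow_add hta]
  ring_nf

lemma kMono (h0 : 0 < α) (h1 : α < 1) {a t₁ t₂ τ : ℝ}
    (haτ : a < τ) (hτ : τ < t₂) (h21 : t₂ ≤ t₁) :
    (t₁-a) ^ (1-α) * ((t₁-τ) ^ (α-1) * (τ-a) ^ (α-1))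
      ≤ (t₂-a) ^ (1-α) * ((t₂-τ) ^ (α-1) * (τ-a) ^ (α-1)) := by
  have h2a : 0 < t₂ - a := by linarith
  have h1a : 0 < t₁ - a := by linarith
  have h2τ : 0 < t₂ - τ := by linarith
  have h1τ : 0 < t₁ - τ := by linarith
  have key : ∀ t, τ < t →
      (t-a) ^ (1-α) * ((t-τ) ^ (α-1) * (τ-a) ^ (α-1))
        = ((t-τ)/(t-a)) ^ (α-1) * (τ-a) ^ (α-1) := by
    intro t h
    have hta : 0 < t - a := by linarith
    have hne : (t-a)^(α-1) ≠ 0 := (Real.rpow_pos_of_pos hta _).ne'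
    rw [Real.div_rpow (by linarith) hta.le,
      show (1:ℝ)-α = -(α-1) by ring, Real.rpow_neg hta.le]
    field_simp
  rw [key t₁ (by linarith), key t₂ hτ]
  apply mul_le_mul_of_nonneg_right _ (Real.rpow_nonneg (by linarith) _)
  apply Real.rpow_le_rpow_of_nonpos (div_pos h2τ h2a) _ (by linarith)
  rw [div_le_div_iff₀ h2a h1a]
  nlinarith

lemma PSI (h0 : 0 < α) (h1 : α < 1) {K : ℝ} (hK2 : 2 ≤ K)
    (hKβ : α * ∫ s in (0:ℝ)..1, s ^ (α-1) * (1-s) ^ (α-1) ≤ K)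
    {σ : ℝ} (hσ0 : 0 ≤ σ) (hσ1 : σ ≤ 1) :
    2*α*(∫ s in σ..1, s ^ (α-1) * (1-s) ^ (α-1))
      ≤ α*(∫ s in (0:ℝ)..1, s ^ (α-1) * (1-s) ^ (α-1))*(1 - σ^α) + K*(1-σ)^α := by
  have hwint := fun {x : ℝ} (hx0 : 0 ≤ x) (hx1 : x ≤ 1) => wInt h0 h1 hx0 hx1
  set w : ℝ → ℝ := fun s => s ^ (α-1) * (1-s) ^ (α-1) with hwdef
  set β := ∫ s in (0:ℝ)..1, w s with hβdef
  have hβ0 : 0 ≤ β := by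
    rw [hβdef]
    apply intervalIntegral.integral_nonneg zero_le_one
    intro s hs
    exact mul_nonneg (Real.rpow_nonneg hs.1 _) (Real.rpow_nonneg (by linarith [hs.2]) _)
  set A := α * β with hAdef
  have hA0 : 0 ≤ A := mul_nonneg h0.le hβ0
  have hAK : A ≤ K := hKβ
  have hK0 : 0 < K := lt_of_lt_of_le two_pos hK2
  set W : ℝ → ℝ := fun x => ∫ s in x..1, w s with hWdef
  set ψ : ℝ → ℝ := fun x => A*(1-x^α) + K*(1-x)^α - 2*α*(W x) with hψdef
  set r : ℝ → ℝ := fun x => 2 - A*(1-x)^(1-α) - K*x^(1-α) with hrdef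
  suffices hgoal : 0 ≤ ψ σ by
    have h1' : ψ σ = A*(1-σ^α) + K*(1-σ)^α - 2*α*(W σ) := rfl
    have h2' : W σ = ∫ s in σ..1, w s := rfl
    rw [h1', h2'] at hgoal
    rw [show α*(∫ s in (0:ℝ)..1, w s)*(1 - σ^α) = A*(1-σ^α) by rw [hAdef, hβdef]]
    have heta : intervalIntegral w σ 1 volume = ∫ s in σ..1, w s := rfl
    linarith [hgoal, heta]
  -- continuity of basic rpow maps
  have crpowα : Continuous fun x : ℝ => x ^ α :=
    continuous_iff_continuousAt.mpr fun x => Real.continuousAt_rpow_const x α (Or.inr h0.le)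
  have crpow1α : Continuous fun x : ℝ => x ^ (1-α) :=
    continuous_iff_continuousAt.mpr fun x => Real.continuousAt_rpow_const x (1-α) (Or.inr (by linarith))
  have hrcont : Continuous r := by
    rw [hrdef]
    exact (continuous_const.sub
      (continuous_const.mul (crpow1α.comp (continuous_const.sub continuous_id)))).sub
      (continuous_const.mul crpow1α)
  -- continuity of W on [0,1]
  have hWcont : ContinuousOn W (Icc 0 1) := by
    have hio : IntegrableOn w (Set.uIcc (0:ℝ) 1) volume := by
      rw [Set.uIcc_of_le zero_le_one, integrableOn_Icc_iff_integrableOn_Ioc]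
      exact (intervalIntegrable_iff_integrableOn_Ioc_of_le zero_le_one).mp (hwint le_rfl zero_le_one)
    have := intervalIntegral.continuousOn_primitive_interval_left hio
    rwa [Set.uIcc_of_le zero_le_one] at this
  have hψcont : ContinuousOn ψ (Icc 0 1) := by
    rw [hψdef]
    apply ContinuousOn.sub
    · exact ((continuous_const.mul (continuous_const.sub crpowα)).add
        (continuous_const.mul (crpowα.comp (continuous_const.sub continuous_id)))).continuousOn
    · exact continuousOn_const.mul hWcont
  -- derivative of r
  have hrderiv : ∀ z ∈ Ioo (0:ℝ) 1,
      HasDerivAt r (A*(1-α)*(1-z)^(-α) - K*(1-α)*z^(-α)) z := by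
    intro z hz
    have hz0 : 0 < z := hz.1
    have hz1 : 0 < 1 - z := by linarith [hz.2]
    have hdz1 : HasDerivAt (fun u : ℝ => u ^ (1-α)) ((1-α) * z^(-α)) z := by
      have := Real.hasDerivAt_rpow_const (x := z) (p := 1-α) (Or.inl hz0.ne')
      convert this using 2
      norm_num
    have hdz2 : HasDerivAt (fun u : ℝ => (1-u) ^ (1-α)) (-((1-α) * (1-z)^(-α))) z := by
      have inner : HasDerivAt (fun u : ℝ => 1 - u) (-1) z := by
        simpa using (hasDerivAt_id z).const_sub 1
      have outer : HasDerivAt (fun u : ℝ => u ^ (1-α)) ((1-α) * (1-z)^(-α)) (1-z) := by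
        have := Real.hasDerivAt_rpow_const (x := 1-z) (p := 1-α) (Or.inl hz1.ne')
        convert this using 2
        norm_num
      exact (outer.comp z inner).congr_deriv (by ring)
    have total : HasDerivAt r
        (0 - A * (-((1-α) * (1-z)^(-α))) - K * ((1-α) * z^(-α))) z := by
      rw [hrdef]
      exact ((hasDerivAt_const z (2:ℝ)).sub (hdz2.const_mul A)).sub (hdz1.const_mul K)
    convert total using 1
    ring
  -- derivative of ψ
  have hψderiv : ∀ x ∈ Ioo (0:ℝ) 1,
      HasDerivAt ψ (α * (x^(α-1) * (1-x)^(α-1) * r x)) x := by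
    intro x hx
    have hx0 : 0 < x := hx.1
    have hx1 : 0 < 1 - x := by linarith [hx.2]
    have hd1 : HasDerivAt (fun y : ℝ => y ^ α) (α * x^(α-1)) x := by
      simpa using Real.hasDerivAt_rpow_const (x := x) (p := α) (Or.inl hx0.ne')
    have hd2 : HasDerivAt (fun y : ℝ => (1-y) ^ α) (-(α * (1-x)^(α-1))) x := by
      have inner : HasDerivAt (fun y : ℝ => 1 - y) (-1) x := by
        simpa using (hasDerivAt_id x).const_sub 1
      have outer : HasDerivAt (fun u : ℝ => u ^ α) (α * (1-x)^(α-1)) (1-x) := by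
        simpa using Real.hasDerivAt_rpow_const (x := 1-x) (p := α) (Or.inl hx1.ne')
      exact (outer.comp x inner).congr_deriv (by ring)
    have hdW : HasDerivAt W (-(w x)) x := by
      apply intervalIntegral.integral_hasDerivAt_left (hwint hx0.le hx.2.le)
      · exact ((measurable_id.pow_const _).mul
          ((measurable_const.sub measurable_id).pow_const _)).stronglyMeasurable.stronglyMeasurableAtFilter
      · apply ContinuousAt.mul
        · exact Real.continuousAt_rpow_const x _ (Or.inl hx0.ne')
        · exact (Real.continuousAt_rpow_const (1-x) _ (Or.inl hx1.ne')).comp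
            ((continuous_const.sub continuous_id).continuousAt)
    have total : HasDerivAt ψ
        (A * (-(α * x^(α-1))) + K * (-(α * (1-x)^(α-1))) - 2*α*(-(w x))) x := by
      rw [hψdef]
      exact (((hd1.const_sub 1).const_mul A).add (hd2.const_mul K)).sub (hdW.const_mul (2*α))
    convert total using 1
    have e1 : x^(α-1) * x^(1-α) = 1 := by
      rw [← Real.rpow_add hx0]; norm_num
    have e2 : (1-x)^(α-1) * (1-x)^(1-α) = 1 := by
      rw [← Real.rpow_add hx1]; norm_num
    have expand : α * (x^(α-1) * (1-x)^(α-1) * r x)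
        = 2*α*(x^(α-1) * (1-x)^(α-1))
          - α*A*x^(α-1)*((1-x)^(α-1) * (1-x)^(1-α))
          - α*K*(x^(α-1) * x^(1-α))*(1-x)^(α-1) := by
      rw [hrdef]; ring
    rw [expand, e1, e2, hwdef]
    ring
  -- value of r at 1
  have hr1 : r 1 = 2 - K := by
    rw [hrdef]
    simp only [sub_self]
    rw [Real.zero_rpow (by linarith : (1:ℝ)-α ≠ 0), Real.one_rpow]
    ring
  -- once r is positive at y, it is positive on (0, y]
  have Cl1 : ∀ y ∈ Ioo (0:ℝ) 1, 0 < r y → ∀ x ∈ Ioo (0:ℝ) 1, x ≤ y → 0 < r x := by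
    intro y hy hry x hx hxy
    by_contra hcon
    push_neg at hcon
    rcases eq_or_lt_of_le hxy with rfl | hxy'
    · exact absurd hry (not_lt.mpr hcon)
    obtain ⟨ξ, hξ, hslope⟩ := exists_hasDerivAt_eq_slope r _ hxy'
      hrcont.continuousOn (fun z hz => hrderiv z ⟨lt_trans hx.1 hz.1, lt_trans hz.2 hy.2⟩)
    have hslope_pos : 0 < A*(1-α)*(1-ξ)^(-α) - K*(1-α)*ξ^(-α) := by
      rw [hslope]
      apply div_pos (by linarith) (by linarith)
    have hξ0 : 0 < ξ := lt_trans hx.1 hξ.1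
    have hξ1 : 0 < 1 - ξ := by have := lt_trans hξ.2 hy.2; linarith
    have hAξ : K * (1-ξ)^α < A * ξ^α := by
      have h2 : K*ξ^(-α) < A*(1-ξ)^(-α) := by
        have h1α : 0 < 1 - α := by linarith
        nlinarith [Real.rpow_pos_of_pos hξ0 (-α), Real.rpow_pos_of_pos hξ1 (-α)]
      rw [Real.rpow_neg hξ0.le, Real.rpow_neg hξ1.le, ← div_eq_mul_inv, ← div_eq_mul_inv,
        div_lt_div_iff₀ (Real.rpow_pos_of_pos hξ0 α) (Real.rpow_pos_of_pos hξ1 α)] at h2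
      linarith
    have hmono : MonotoneOn r (Icc ξ 1) := by
      apply monotoneOn_of_deriv_nonneg (convex_Icc _ _) hrcont.continuousOn
      · intro z hz
        rw [interior_Icc] at hz
        exact ((hrderiv z ⟨lt_trans hξ0 hz.1, hz.2⟩).differentiableAt).differentiableWithinAt
      · intro z hz
        rw [interior_Icc] at hz
        have hz0 : 0 < z := lt_trans hξ0 hz.1
        have hz1 : 0 < 1 - z := by linarith [hz.2]
        rw [(hrderiv z ⟨hz0, hz.2⟩).deriv]
        have hchain : K * (1-z)^α ≤ A * z^α := by
          have i1 : (1-z)^α ≤ (1-ξ)^α :=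
            Real.rpow_le_rpow (by linarith) (by linarith [hz.1]) h0.le
          have i2 : ξ^α ≤ z^α := Real.rpow_le_rpow hξ0.le hz.1.le h0.le
          nlinarith
        have hp1 : 0 < z^α := Real.rpow_pos_of_pos hz0 α
        have hp2 : 0 < (1-z)^α := Real.rpow_pos_of_pos hz1 α
        have hkey : K * (z^α)⁻¹ ≤ A * ((1-z)^α)⁻¹ := by
          rw [← div_eq_mul_inv, ← div_eq_mul_inv, div_le_div_iff₀ hp1 hp2]
          linarith [hchain]
        rw [Real.rpow_neg hz0.le, Real.rpow_neg hz1.le]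
        nlinarith [hkey]
    have hylem : r y ≤ r 1 := hmono ⟨hξ.2.le, hy.2.le⟩ ⟨(lt_trans hξ.2 hy.2).le, le_rfl⟩ hy.2.le
    rw [hr1] at hylem
    linarith
  -- endpoint values of ψ
  have hψ1 : ψ 1 = 0 := by
    rw [hψdef]
    simp only
    rw [show W 1 = ∫ s in (1:ℝ)..1, w s from rfl, intervalIntegral.integral_same,
      Real.one_rpow, sub_self, Real.zero_rpow (by linarith : α ≠ 0)]
    ring
  have hψ0 : 0 ≤ ψ 0 := by
    rw [hψdef]
    simp only
    rw [show W 0 = ∫ s in (0:ℝ)..1, w s from rfl, ← hβdef,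
      Real.zero_rpow (by linarith : α ≠ 0), sub_zero, Real.one_rpow]
    rw [hAdef] at hAK ⊢
    linarith
  -- main case analysis
  rcases eq_or_lt_of_le hσ0 with rfl | hσ0'
  · exact hψ0
  rcases eq_or_lt_of_le hσ1 with rfl | hσ1'
  · rw [hψ1]
  by_cases hr : r σ ≤ 0
  · -- ψ is antitone on [σ,1]
    have hanti : AntitoneOn ψ (Icc σ 1) := by
      apply antitoneOn_of_deriv_nonpos (convex_Icc _ _)
        (hψcont.mono (Icc_subset_Icc hσ0 le_rfl))
      · intro z hz
        rw [interior_Icc] at hz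
        exact ((hψderiv z ⟨lt_trans hσ0' hz.1, hz.2⟩).differentiableAt).differentiableWithinAt
      · intro z hz
        rw [interior_Icc] at hz
        have hzI : z ∈ Ioo (0:ℝ) 1 := ⟨lt_trans hσ0' hz.1, hz.2⟩
        rw [(hψderiv z hzI).deriv]
        have hrz : r z ≤ 0 := by
          by_contra hc
          push_neg at hc
          have := Cl1 z hzI hc σ ⟨hσ0', hσ1'⟩ hz.1.le
          linarith
        have hzf : 0 ≤ z^(α-1) * (1-z)^(α-1) :=
          mul_nonneg (Real.rpow_nonneg hzI.1.le _) (Real.rpow_nonneg (by linarith [hzI.2]) _)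
        exact mul_nonpos_of_nonneg_of_nonpos h0.le (mul_nonpos_of_nonneg_of_nonpos hzf hrz)
    have := hanti ⟨le_rfl, hσ1⟩ ⟨hσ1, le_rfl⟩ hσ1
    rw [hψ1] at this
    exact this
  · push_neg at hr
    have hmono : MonotoneOn ψ (Icc 0 σ) := by
      apply monotoneOn_of_deriv_nonneg (convex_Icc _ _)
        (hψcont.mono (Icc_subset_Icc le_rfl hσ1))
      · intro z hz
        rw [interior_Icc] at hz
        exact ((hψderiv z ⟨hz.1, lt_of_lt_of_le hz.2 hσ1⟩).differentiableAt).differentiableWithinAt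
      · intro z hz
        rw [interior_Icc] at hz
        have hzI : z ∈ Ioo (0:ℝ) 1 := ⟨hz.1, lt_of_lt_of_le hz.2 hσ1⟩
        rw [(hψderiv z hzI).deriv]
        have hrz : 0 < r z := Cl1 σ ⟨hσ0', hσ1'⟩ hr z hzI hz.2.le
        have hzf : 0 ≤ z^(α-1) * (1-z)^(α-1) :=
          mul_nonneg (Real.rpow_nonneg hzI.1.le _) (Real.rpow_nonneg (by linarith [hzI.2]) _)
        exact mul_nonneg h0.le (mul_nonneg hzf hrz.le)
    have := hmono ⟨le_rfl, hσ0⟩ ⟨hσ0, le_rfl⟩ hσ0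
    exact le_trans hψ0 this

lemma key (h0 : 0 < α) (h1 : α < 1) {n : ℕ} {a b : ℝ}
    {φ : ℝ → EuclideanSpace ℝ (Fin n)} (hφm : Measurable φ) {M : ℝ} (hM : 0 ≤ M)
    (hbd : ∀ᵐ τ ∂(volume.restrict (Icc a b)), ‖φ τ‖ ≤ M)
    {t₁ t₂ : ℝ} (ht₂ : a ≤ t₂) (h21 : t₂ ≤ t₁) (ht₁ : t₁ ≤ b) :
    ‖((t₁ - a) ^ (1 - α) / Real.Gamma α) •
          (∫ τ in a..t₁, ((t₁ - τ) ^ (α - 1) * (τ - a) ^ (α - 1)) • φ τ)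
        - ((t₂ - a) ^ (1 - α) / Real.Gamma α) •
          (∫ τ in a..t₂, ((t₂ - τ) ^ (α - 1) * (τ - a) ^ (α - 1)) • φ τ)‖
      ≤ (2 / Real.Gamma (α + 1)) * (1 + Real.sin (α * π) / (α * π)) * M * (t₁ - t₂) ^ α := by
  have hΓ : 0 < Real.Gamma α := Real.Gamma_pos_of_pos h0
  have hπ : 0 < π := Real.pi_pos
  have hsinc : 0 ≤ Real.sin (α*π)/(α*π) :=
    div_nonneg (Real.sin_nonneg_of_nonneg_of_le_pi (by positivity) (by nlinarith)) (by positivity)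
  have hΓ1 : Real.Gamma (α+1) = α * Real.Gamma α := Real.Gamma_add_one h0.ne'
  set K := 2 + 2 * (Real.sin (α * π)/(α*π)) with hKdef
  have hK2 : 2 ≤ K := by rw [hKdef]; linarith
  have hconst : (2 / Real.Gamma (α + 1)) * (1 + Real.sin (α * π) / (α * π))
      = K / (α * Real.Gamma α) := by
    rw [hΓ1, hKdef]
    field_simp
  rcases eq_or_lt_of_le h21 with rfl | h21'
  · rw [sub_self (((t₂ - a) ^ (1 - α) / Real.Gamma α) •
        (∫ τ in a..t₂, ((t₂ - τ) ^ (α - 1) * (τ - a) ^ (α - 1)) • φ τ)),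
      norm_zero, sub_self, Real.zero_rpow h0.ne', mul_zero]
  have hat₁ : a < t₁ := lt_of_le_of_lt ht₂ h21'
  have ht₂b : t₂ ≤ b := h21.trans ht₁
  -- integrabilities
  have hv1 := kIntV h0 h1 hat₁.le (ht₂.trans ht₂b) ht₁ hφm hbd (t := t₁)
  have huv1a : Set.uIcc a t₂ ⊆ Set.uIcc a t₁ := by
    rw [Set.uIcc_of_le ht₂, Set.uIcc_of_le hat₁.le]; exact Icc_subset_Icc le_rfl h21
  have huv1b : Set.uIcc t₂ t₁ ⊆ Set.uIcc a t₁ := by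
    rw [Set.uIcc_of_le h21, Set.uIcc_of_le hat₁.le]; exact Icc_subset_Icc ht₂ le_rfl
  have hv1a := hv1.mono_set huv1a
  have hv1b := hv1.mono_set huv1b
  have hv2 := kIntV h0 h1 ht₂ (ht₂.trans ht₂b) ht₂b hφm hbd (t := t₂)
  have hs1 := kInt (a := a) (t := t₁) h0 h1 hat₁.le
  have hs1a := hs1.mono_set huv1a
  have hs1b := hs1.mono_set huv1b
  have hs2 := kInt (a := a) (t := t₂) h0 h1 ht₂
  set c₁ := (t₁-a)^(1-α) with hc₁def
  set c₂ := (t₂-a)^(1-α) with hc₂def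
  have hc₁0 : 0 ≤ c₁ := Real.rpow_nonneg (by linarith) _
  -- main vector identity
  have hfun : (fun τ => (c₁ * ((t₁-τ) ^ (α-1) * (τ-a) ^ (α-1))
        - c₂ * ((t₂-τ) ^ (α-1) * (τ-a) ^ (α-1))) • φ τ)
      = fun τ => c₁ • (((t₁-τ) ^ (α-1) * (τ-a) ^ (α-1)) • φ τ)
        - c₂ • (((t₂-τ) ^ (α-1) * (τ-a) ^ (α-1)) • φ τ) := by
    funext τ
    rw [sub_smul, smul_smul, smul_smul]
  have hsm1 : IntervalIntegrable (fun τ => c₁ • (((t₁-τ) ^ (α-1) * (τ-a) ^ (α-1)) • φ τ)) volume a t₂ :=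
    hv1a.smul c₁
  have hsm2 : IntervalIntegrable (fun τ => c₂ • (((t₂-τ) ^ (α-1) * (τ-a) ^ (α-1)) • φ τ)) volume a t₂ :=
    hv2.smul c₂
  have hV1int : IntervalIntegrable (fun τ => (c₁ * ((t₁-τ) ^ (α-1) * (τ-a) ^ (α-1))
        - c₂ * ((t₂-τ) ^ (α-1) * (τ-a) ^ (α-1))) • φ τ) volume a t₂ := by
    rw [hfun]
    exact hsm1.sub hsm2
  have hV2int : IntervalIntegrable
      (fun τ => (c₁ * ((t₁-τ) ^ (α-1) * (τ-a) ^ (α-1))) •  φ τ) volume t₂ t₁ := by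
    have : (fun τ => (c₁ * ((t₁-τ) ^ (α-1) * (τ-a) ^ (α-1))) • φ τ)
        = fun τ => c₁ • (((t₁-τ) ^ (α-1) * (τ-a) ^ (α-1)) • φ τ) := by
      funext τ; rw [smul_smul]
    rw [this]
    exact hv1b.smul c₁
  set V₁ := ∫ τ in a..t₂, (c₁ * ((t₁-τ) ^ (α-1) * (τ-a) ^ (α-1))
        - c₂ * ((t₂-τ) ^ (α-1) * (τ-a) ^ (α-1))) • φ τ with hV₁def
  set V₂ := ∫ τ in t₂..t₁, (c₁ * ((t₁-τ) ^ (α-1) * (τ-a) ^ (α-1))) • φ τ with hV₂def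
  have hmain : ((c₁ / Real.Gamma α) •
          (∫ τ in a..t₁, ((t₁ - τ) ^ (α - 1) * (τ - a) ^ (α - 1)) • φ τ)
        - (c₂ / Real.Gamma α) •
          (∫ τ in a..t₂, ((t₂ - τ) ^ (α - 1) * (τ - a) ^ (α - 1)) • φ τ))
      = (Real.Gamma α)⁻¹ • (V₁ + V₂) := by
    rw [hV₁def, hV₂def, hfun]
    rw [intervalIntegral.integral_sub hsm1 hsm2,
      intervalIntegral.integral_smul, intervalIntegral.integral_smul]
    have hsm : (fun τ => (c₁ * ((t₁-τ) ^ (α-1) * (τ-a) ^ (α-1))) • φ τ)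
        = fun τ => c₁ • (((t₁-τ) ^ (α-1) * (τ-a) ^ (α-1)) • φ τ) := by
      funext τ; rw [smul_smul]
    rw [hsm, intervalIntegral.integral_smul]
    rw [← intervalIntegral.integral_add_adjacent_intervals hv1a hv1b]
    set X := ∫ τ in a..t₂, ((t₁ - τ) ^ (α - 1) * (τ - a) ^ (α - 1)) • φ τ
    set Y := ∫ τ in t₂..t₁, ((t₁ - τ) ^ (α - 1) * (τ - a) ^ (α - 1)) • φ τ
    set Z := ∫ τ in a..t₂, ((t₂ - τ) ^ (α - 1) * (τ - a) ^ (α - 1)) • φ τ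
    rw [div_eq_inv_mul, div_eq_inv_mul, ← smul_smul, ← smul_smul]
    module
  rw [hmain]
  rw [norm_smul, Real.norm_eq_abs, abs_of_nonneg (inv_nonneg.mpr hΓ.le)]
  -- a.e. facts
  have hIccb : ∀ {c d : ℝ}, a ≤ c → d ≤ b →
      (∀ᵐ τ ∂(volume.restrict (Icc c d)), ‖φ τ‖ ≤ M) := by
    intro c d hc hd
    exact ae_restrict_of_ae_restrict_of_subset (Icc_subset_Icc hc hd) hbd
  have hIoo : ∀ {c d : ℝ}, (∀ᵐ τ ∂(volume.restrict (Icc c d)), τ ∈ Ioo c d) := by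
    intro c d
    rw [← Measure.restrict_congr_set Ioo_ae_eq_Icc]
    exact ae_restrict_mem measurableSet_Ioo
  -- bound V₁
  have hb1 : ‖V₁‖ ≤ ∫ τ in a..t₂,
      M * (c₂ * ((t₂-τ) ^ (α-1) * (τ-a) ^ (α-1)) - c₁ * ((t₁-τ) ^ (α-1) * (τ-a) ^ (α-1))) := by
    refine le_trans (intervalIntegral.norm_integral_le_integral_norm ht₂) ?_
    apply intervalIntegral.integral_mono_ae_restrict ht₂ hV1int.norm
      (((hs2.const_mul c₂).sub (hs1a.const_mul c₁)).const_mul M)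
    filter_upwards [hIccb le_rfl ht₂b, hIoo] with τ hφτ hτ
    have hmono := kMono h0 h1 hτ.1 hτ.2 h21'.le
    rw [norm_smul, Real.norm_eq_abs, abs_of_nonpos (sub_nonpos.mpr hmono), neg_sub,
      mul_comm M _]
    exact mul_le_mul_of_nonneg_left hφτ (sub_nonneg.mpr hmono)
  -- bound V₂
  have hb2 : ‖V₂‖ ≤ ∫ τ in t₂..t₁, M * (c₁ * ((t₁-τ) ^ (α-1) * (τ-a) ^ (α-1))) := by
    refine le_trans (intervalIntegral.norm_integral_le_integral_norm h21'.le) ?_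
    apply intervalIntegral.integral_mono_ae_restrict h21'.le hV2int.norm
      ((hs1b.const_mul c₁).const_mul M)
    filter_upwards [hIccb ht₂ ht₁, hIoo] with τ hφτ hτ
    have hk1 : 0 ≤ c₁ * ((t₁-τ) ^ (α-1) * (τ-a) ^ (α-1)) :=
      mul_nonneg hc₁0 (mul_nonneg (Real.rpow_nonneg (by linarith [hτ.2]) _)
        (Real.rpow_nonneg (by linarith [hτ.1]) _))
    rw [norm_smul, Real.norm_eq_abs, abs_of_nonneg hk1, mul_comm M _]
    exact mul_le_mul_of_nonneg_left hφτ hk1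
  -- scalar computations
  set β := ∫ s in (0:ℝ)..1, s ^ (α-1) * (1-s) ^ (α-1) with hβdef
  set σ := (t₂-a)/(t₁-a) with hσdef
  have ht₁a : 0 < t₁ - a := by linarith
  have hσ0 : 0 ≤ σ := div_nonneg (by linarith) ht₁a.le
  have hσ1 : σ ≤ 1 := by rw [hσdef, div_le_one ht₁a]; linarith
  set W := ∫ s in σ..1, s ^ (α-1) * (1-s) ^ (α-1) with hWdef
  have hS1 : (∫ τ in a..t₂,
      M * (c₂ * ((t₂-τ) ^ (α-1) * (τ-a) ^ (α-1)) - c₁ * ((t₁-τ) ^ (α-1) * (τ-a) ^ (α-1))))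
      = M * (c₂ * (∫ τ in a..t₂, (t₂-τ) ^ (α-1) * (τ-a) ^ (α-1))
          - c₁ * (∫ τ in a..t₂, (t₁-τ) ^ (α-1) * (τ-a) ^ (α-1))) := by
    rw [intervalIntegral.integral_const_mul,
      intervalIntegral.integral_sub (hs2.const_mul c₂) (hs1a.const_mul c₁),
      intervalIntegral.integral_const_mul, intervalIntegral.integral_const_mul]
  have hS2 : (∫ τ in t₂..t₁, M * (c₁ * ((t₁-τ) ^ (α-1) * (τ-a) ^ (α-1))))
      = M * (c₁ * (∫ τ in t₂..t₁, (t₁-τ) ^ (α-1) * (τ-a) ^ (α-1))) := by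
    rw [intervalIntegral.integral_const_mul, intervalIntegral.integral_const_mul]
  have hcovA2 : c₂ * (∫ τ in a..t₂, (t₂-τ) ^ (α-1) * (τ-a) ^ (α-1)) = (t₂-a)^α * β :=
    covA h0 h1 ht₂
  have hcovA1 : c₁ * (∫ τ in a..t₁, (t₁-τ) ^ (α-1) * (τ-a) ^ (α-1)) = (t₁-a)^α * β :=
    covA h0 h1 hat₁.le
  have hPQ : (∫ τ in a..t₂, (t₁-τ) ^ (α-1) * (τ-a) ^ (α-1))
      + (∫ τ in t₂..t₁, (t₁-τ) ^ (α-1) * (τ-a) ^ (α-1))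
      = ∫ τ in a..t₁, (t₁-τ) ^ (α-1) * (τ-a) ^ (α-1) :=
    intervalIntegral.integral_add_adjacent_intervals hs1a hs1b
  have hc₁Q : c₁ * (∫ τ in t₂..t₁, (t₁-τ) ^ (α-1) * (τ-a) ^ (α-1)) = (t₁-a)^α * W := by
    rw [cov h0 h1 hat₁ ht₂ h21, ← hσdef, ← hWdef, hc₁def, ← mul_assoc,
      ← Real.rpow_add ht₁a]
    ring_nf
  -- the PSI instance
  have hKβ : α * β ≤ K := le_trans (E1 h0 h1) (E2 h0 h1)
  have hPSI := PSI h0 h1 hK2 hKβ hσ0 hσ1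
  rw [← hβdef, ← hWdef] at hPSI
  have hσα : (t₁-a)^α * σ^α = (t₂-a)^α := by
    rw [← Real.mul_rpow ht₁a.le hσ0, hσdef]
    congr 1
    field_simp
  have hhα : (t₁-a)^α * (1-σ)^α = (t₁-t₂)^α := by
    rw [← Real.mul_rpow ht₁a.le (by linarith), hσdef]
    congr 1
    field_simp
    ring
  have hfin : (t₂-a)^α*β - (t₁-a)^α*β + 2*((t₁-a)^α*W) ≤ K/α*(t₁-t₂)^α := by
    have ht1a' : (0:ℝ) ≤ (t₁-a)^α := Real.rpow_nonneg ht₁a.le _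
    have hmul := mul_le_mul_of_nonneg_left hPSI ht1a'
    have hexp : (t₁-a)^α*(α*β*(1 - σ^α) + K*(1-σ)^α)
        = α*β*((t₁-a)^α) - α*β*((t₁-a)^α*σ^α) + K*((t₁-a)^α*(1-σ)^α) := by ring
    rw [hexp, hσα, hhα] at hmul
    rw [← mul_le_mul_iff_right₀ h0]
    have : α * (K/α*(t₁-t₂)^α) = K*(t₁-t₂)^α := by field_simp
    rw [this]
    linarith [hmul]
  -- final assembly
  have hchain : ‖V₁ + V₂‖ ≤ M * (K/α*(t₁-t₂)^α) := by
    have hsum := add_le_add hb1 hb2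
    have htot : ‖V₁ + V₂‖ ≤ ‖V₁‖ + ‖V₂‖ := norm_add_le _ _
    rw [hS1, hS2, hcovA2] at hsum
    have hc₁P : c₁ * (∫ τ in a..t₂, (t₁-τ) ^ (α-1) * (τ-a) ^ (α-1))
        = (t₁-a)^α * β - (t₁-a)^α * W := by
      have : c₁ * ((∫ τ in a..t₂, (t₁-τ) ^ (α-1) * (τ-a) ^ (α-1))
          + (∫ τ in t₂..t₁, (t₁-τ) ^ (α-1) * (τ-a) ^ (α-1))) = (t₁-a)^α * β := by
        rw [hPQ]; exact hcovA1
      rw [mul_add, hc₁Q] at this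
      linarith
    rw [hc₁P, hc₁Q] at hsum
    have : M * ((t₂-a)^α*β - ((t₁-a)^α*β - (t₁-a)^α*W)) + M * ((t₁-a)^α*W)
        = M * ((t₂-a)^α*β - (t₁-a)^α*β + 2*((t₁-a)^α*W)) := by ring
    rw [this] at hsum
    exact le_trans htot (le_trans hsum (mul_le_mul_of_nonneg_left hfin hM))
  calc (Real.Gamma α)⁻¹ * ‖V₁ + V₂‖ ≤ (Real.Gamma α)⁻¹ * (M * (K/α*(t₁-t₂)^α)) :=
        mul_le_mul_of_nonneg_left hchain (inv_nonneg.mpr hΓ.le)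
    _ = (2 / Real.Gamma (α + 1)) * (1 + Real.sin (α * π) / (α * π)) * M * (t₁ - t₂) ^ α := by
        rw [hconst]
        field_simp

end OpJHolderAux

open OpJHolderAux

/-- Hölder estimate for the operator
`(J^α_{a+} φ)(t) = ((t-a)^{1-α}/Γ(α)) ∫_a^t (t-τ)^{α-1}(τ-a)^{α-1} φ(τ) dτ`:
`‖(J^α_{a+}φ)(t₁) − (J^α_{a+}φ)(t₂)‖ ≤ (2/Γ(α+1))(1 + sin(απ)/(απ)) ‖φ‖_∞ |t₁−t₂|^α`;
in particular `J^α_{a+}φ` is continuous on `[a,b]`. -/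
theorem operator_J_holder
    (n : ℕ) (a b : ℝ) (hab : a ≤ b) (α : ℝ) (hα : α ∈ Set.Ioo (0 : ℝ) 1)
    (φ : ℝ → EuclideanSpace ℝ (Fin n)) (hφm : Measurable φ)
    (hφb : eLpNorm φ ⊤ (volume.restrict (Set.Icc a b)) < ⊤) :
    (∀ t₁ ∈ Set.Icc a b, ∀ t₂ ∈ Set.Icc a b,
      ‖((t₁ - a) ^ (1 - α) / Real.Gamma α) •
          (∫ τ in a..t₁, ((t₁ - τ) ^ (α - 1) * (τ - a) ^ (α - 1)) • φ τ)
        - ((t₂ - a) ^ (1 - α) / Real.Gamma α) •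
          (∫ τ in a..t₂, ((t₂ - τ) ^ (α - 1) * (τ - a) ^ (α - 1)) • φ τ)‖
        ≤ (2 / Real.Gamma (α + 1)) * (1 + Real.sin (α * π) / (α * π))
            * essSup (fun τ => (‖φ τ‖ : ℝ)) (volume.restrict (Set.Icc a b))
            * |t₁ - t₂| ^ α) ∧
    ContinuousOn
      (fun t => ((t - a) ^ (1 - α) / Real.Gamma α) •
        ∫ τ in a..t, ((t - τ) ^ (α - 1) * (τ - a) ^ (α - 1)) • φ τ)
      (Set.Icc a b) := by
  obtain ⟨h0, h1⟩ := hα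
  have hΓ : 0 < Real.Gamma α := Real.Gamma_pos_of_pos h0
  have hΓ1 : 0 < Real.Gamma (α+1) := Real.Gamma_pos_of_pos (by linarith)
  have hπ : 0 < π := Real.pi_pos
  have hsinc : 0 ≤ Real.sin (α*π)/(α*π) :=
    div_nonneg (Real.sin_nonneg_of_nonneg_of_le_pi (by positivity) (by nlinarith)) (by positivity)
  set ν := volume.restrict (Set.Icc a b) with hνdef
  set M := essSup (fun τ => (‖φ τ‖ : ℝ)) ν with hMdef
  rcases eq_or_lt_of_le hab with rfl | hab'
  · -- degenerate case a = b
    constructor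
    · intro t₁ ht₁ t₂ ht₂
      rw [Set.Icc_self, Set.mem_singleton_iff] at ht₁ ht₂
      subst ht₁; subst ht₂
      simp [Real.zero_rpow h0.ne']
    · rw [Set.Icc_self]
      intro x hx
      rw [Set.mem_singleton_iff] at hx
      subst hx
      exact continuousWithinAt_singleton
  -- nondegenerate
  have hν : ν ≠ 0 := by
    rw [hνdef]
    intro hcon
    rw [Measure.restrict_eq_zero, Real.volume_Icc] at hcon
    rw [ENNReal.ofReal_eq_zero] at hcon
    linarith
  have hNbound : ∀ᵐ τ ∂ν, ‖φ τ‖ ≤ (eLpNormEssSup φ ν).toReal := by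
    rw [MeasureTheory.eLpNorm_exponent_top] at hφb
    filter_upwards [MeasureTheory.ae_le_eLpNormEssSup (f := φ) (μ := ν)] with τ hτ
    have := ENNReal.toReal_mono hφb.ne hτ
    simpa using this
  have hbdd : Filter.IsBoundedUnder (· ≤ ·) (ae ν) (fun τ => ‖φ τ‖) :=
    ⟨(eLpNormEssSup φ ν).toReal, by simpa [Filter.eventually_map] using hNbound⟩
  have hMae : ∀ᵐ τ ∂ν, ‖φ τ‖ ≤ M := ae_le_essSup hbdd
  have hM0 : 0 ≤ M := by
    have hne : (ae ν).NeBot := ae_neBot.mpr hν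
    obtain ⟨τ, hτ⟩ := hMae.exists
    exact le_trans (norm_nonneg _) hτ
  have main : ∀ t₁ ∈ Set.Icc a b, ∀ t₂ ∈ Set.Icc a b,
      ‖((t₁ - a) ^ (1 - α) / Real.Gamma α) •
          (∫ τ in a..t₁, ((t₁ - τ) ^ (α - 1) * (τ - a) ^ (α - 1)) • φ τ)
        - ((t₂ - a) ^ (1 - α) / Real.Gamma α) •
          (∫ τ in a..t₂, ((t₂ - τ) ^ (α - 1) * (τ - a) ^ (α - 1)) • φ τ)‖
        ≤ (2 / Real.Gamma (α + 1)) * (1 + Real.sin (α * π) / (α * π)) * M * |t₁ - t₂| ^ α := by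
    intro t₁ ht₁ t₂ ht₂
    rcases le_total t₂ t₁ with hle | hle
    · rw [abs_of_nonneg (by linarith : (0:ℝ) ≤ t₁ - t₂)]
      exact key h0 h1 hφm hM0 hMae ht₂.1 hle ht₁.2
    · rw [abs_of_nonpos (by linarith : t₁ - t₂ ≤ 0), neg_sub, norm_sub_rev]
      exact key h0 h1 hφm hM0 hMae ht₁.1 hle ht₂.2
  refine ⟨main, ?_⟩
  -- continuity from the Hölder estimate
  set C := (2 / Real.Gamma (α + 1)) * (1 + Real.sin (α * π) / (α * π)) * M with hCdef
  have hC0 : 0 ≤ C := by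
    rw [hCdef]
    apply mul_nonneg (mul_nonneg (by positivity) (by linarith)) hM0
  intro t₀ ht₀
  rw [Metric.continuousWithinAt_iff]
  intro ε hε
  refine ⟨(ε/(C+1)) ^ (α⁻¹), Real.rpow_pos_of_pos (by positivity) _, ?_⟩
  intro x hx hdist
  have hest := main x hx t₀ ht₀
  rw [dist_eq_norm]
  have hd0 : 0 ≤ |x - t₀| := abs_nonneg _
  have hrp : |x - t₀| ^ α ≤ ((ε/(C+1)) ^ (α⁻¹)) ^ α := by
    apply Real.rpow_le_rpow hd0 _ h0.le
    rw [← Real.dist_eq]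
    exact hdist.le
  rw [Real.rpow_inv_rpow (by positivity) h0.ne'] at hrp
  have hfin : C * (|x - t₀| ^ α) ≤ C * (ε/(C+1)) := mul_le_mul_of_nonneg_left hrp hC0
  have hεeq : ε = (ε/(C+1))*(C+1) := by field_simp
  have hlast : C * (ε/(C+1)) < ε := by nlinarith [hε, hC0, hεeq, div_pos hε (by linarith : (0:ℝ) < C+1)]
  calc ‖(fun t => ((t - a) ^ (1 - α) / Real.Gamma α) •
        ∫ τ in a..t, ((t - τ) ^ (α - 1) * (τ - a) ^ (α - 1)) • φ τ) x
      - (fun t => ((t - a) ^ (1 - α) / Real.Gamma α) •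
        ∫ τ in a..t, ((t - τ) ^ (α - 1) * (τ - a) ^ (α - 1)) • φ τ) t₀‖
      ≤ C * (|x - t₀| ^ α) := hest
    _ ≤ C * (ε/(C+1)) := hfin
    _ < ε := hlast
end

section
/- For α ∈ (0,1), any real s, κ > 0, and t ≥ s, the inequality (1/Γ(α)) ∫_s^t e^{(τ−s)κ} / (t−τ)^{1−α} dτ ≤ e^{(t−s)κ} κ^{−α} holds. -/
open MeasureTheory Set Real

/-- The exponential estimate
`(1/Γ(α)) ∫_s^t e^{(τ-s)κ} (t-τ)^{α-1} dτ ≤ e^{(t-s)κ} κ^{-α}`. -/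
theorem exp_kernel_estimate (α s t κ : ℝ) (hα : α ∈ Set.Ioo (0 : ℝ) 1)
    (hκ : 0 < κ) (hst : s ≤ t) :
    (1 / Real.Gamma α) *
        ∫ τ in s..t, Real.exp ((τ - s) * κ) * (t - τ) ^ (α - 1)
      ≤ Real.exp ((t - s) * κ) * κ ^ (-α) := by
  obtain ⟨hα0, hα1⟩ := hα
  have hΓ : 0 < Real.Gamma α := Real.Gamma_pos_of_pos hα0
  -- substitute u = t - τ
  have hsub : (∫ τ in s..t, Real.exp ((τ - s) * κ) * (t - τ) ^ (α - 1))
      = ∫ u in (0:ℝ)..(t - s), Real.exp ((t - u - s) * κ) * u ^ (α - 1) := by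
    have := intervalIntegral.integral_comp_sub_left (a := s) (b := t)
      (fun u => Real.exp ((t - u - s) * κ) * u ^ (α - 1)) t
    simp only [sub_self] at this
    rw [← this]
    congr 1
    ext τ
    ring_nf
  rw [hsub]
  -- integrability of u^(α-1) * exp(-κ u) on Ioi 0
  have hint : IntegrableOn (fun u : ℝ => u ^ (α - 1) * Real.exp (-(κ * u))) (Ioi 0) := by
    have := integrableOn_rpow_mul_exp_neg_mul_rpow (s := α - 1) (p := 1) (b := κ)
      (by linarith) zero_lt_one hκ
    refine this.congr_fun (fun x hx => ?_) measurableSet_Ioi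
    dsimp only
    rw [Real.rpow_one, neg_mul]
  -- key bound on the integral
  have key : (∫ u in (0:ℝ)..(t - s), Real.exp ((t - u - s) * κ) * u ^ (α - 1))
      ≤ Real.exp ((t - s) * κ) * (κ ^ (-α) * Real.Gamma α) := by
    have hfac : ∀ u : ℝ, Real.exp ((t - u - s) * κ) * u ^ (α - 1)
        = Real.exp ((t - s) * κ) * (u ^ (α - 1) * Real.exp (-(κ * u))) := by
      intro u
      rw [show (t - u - s) * κ = (t - s) * κ + (-(κ * u)) by ring, Real.exp_add]
      ring
    simp_rw [hfac]
    rw [intervalIntegral.integral_const_mul]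
    refine mul_le_mul_of_nonneg_left ?_ (Real.exp_nonneg _)
    rw [intervalIntegral.integral_of_le (by linarith)]
    calc (∫ u in Ioc (0:ℝ) (t - s), u ^ (α - 1) * Real.exp (-(κ * u)))
        ≤ ∫ u in Ioi (0:ℝ), u ^ (α - 1) * Real.exp (-(κ * u)) := by
          apply setIntegral_mono_set hint
          · filter_upwards [self_mem_ae_restrict measurableSet_Ioi] with x hx
            have hx' : (0:ℝ) < x := hx
            positivity
          · exact Filter.Eventually.of_forall (fun x hx => hx.1)
      _ = (1 / κ) ^ α * Real.Gamma α := integral_rpow_mul_exp_neg_mul_Ioi hα0 hκ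
      _ = κ ^ (-α) * Real.Gamma α := by
          rw [Real.rpow_neg hκ.le, one_div, Real.inv_rpow hκ.le]
  calc (1 / Real.Gamma α) * ∫ u in (0:ℝ)..(t - s), Real.exp ((t - u - s) * κ) * u ^ (α - 1)
      ≤ (1 / Real.Gamma α) * (Real.exp ((t - s) * κ) * (κ ^ (-α) * Real.Gamma α)) := by
        apply mul_le_mul_of_nonneg_left key (by positivity)
    _ = Real.exp ((t - s) * κ) * κ ^ (-α) := by field_simp
end

section
/- (Fractional Bellman–Gronwall inequality.) Let α ∈ (0,1), a ≤ b, ε₁ ≥ 0, ε₂ ≥ 0, and let ψ : [a,b] → ℝ be continuous with 0 ≤ ψ(t) ≤ ε₁ + (ε₂/Γ(α)) ∫_a^t (max_{ξ∈[a,τ]} ψ(ξ)) / (t−τ)^{1−α} dτ for all t ∈ [a,b]. Then ψ(t) ≤ ε₁ E_α((t−a)^α ε₂) for all t ∈ [a,b], where E_α(z) = Σ_{k=0}^∞ z^k/Γ(αk+1) is the one-parameter Mittag-Leffler function. -/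
open MeasureTheory Set Real

/-- The one-parameter Mittag-Leffler function `E_α(z) = Σ_{k} z^k / Γ(αk+1)`. -/
noncomputable def mittagLefflerOne (α z : ℝ) : ℝ :=
  ∑' k : ℕ, z ^ k / Real.Gamma (α * k + 1)

lemma real_beta (s r : ℝ) (hs : 0 < s) (hr : 0 < r) :
    ∫ x in (0:ℝ)..1, x ^ (s-1) * (1-x) ^ (r-1) =
      Real.Gamma s * Real.Gamma r / Real.Gamma (s+r) := by
  have key : Complex.Gamma s * Complex.Gamma r
      = Complex.Gamma (s + r) * Complex.betaIntegral s r :=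
    Complex.Gamma_mul_Gamma_eq_betaIntegral (by simpa using hs) (by simpa using hr)
  have hbeta : Complex.betaIntegral s r
      = ((∫ x in (0:ℝ)..1, x ^ (s-1) * (1-x) ^ (r-1) : ℝ) : ℂ) := by
    rw [Complex.betaIntegral, ← intervalIntegral.integral_ofReal]
    refine intervalIntegral.integral_congr fun x hx => ?_
    rw [Set.uIcc_of_le (by norm_num : (0:ℝ) ≤ 1)] at hx
    rw [show ((s:ℂ)-1) = ((s-1:ℝ):ℂ) by push_cast; ring,
      show ((r:ℂ)-1) = ((r-1:ℝ):ℂ) by push_cast; ring,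
      show ((1:ℂ) - (x:ℂ)) = ((1-x:ℝ):ℂ) by push_cast; ring,
      ← Complex.ofReal_cpow hx.1, ← Complex.ofReal_cpow (by linarith [hx.2] : (0:ℝ) ≤ 1 - x)]
    norm_cast
  have hΓ : Real.Gamma (s+r) ≠ 0 := (Real.Gamma_pos_of_pos (by linarith)).ne'
  have : (Real.Gamma s * Real.Gamma r : ℂ) = (Real.Gamma (s+r) : ℂ) *
      ((∫ x in (0:ℝ)..1, x ^ (s-1) * (1-x) ^ (r-1) : ℝ) : ℂ) := by
    rw [← Complex.ofReal_mul]
    push_cast [← Complex.Gamma_ofReal]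
    rw [key, hbeta]
  have h2 : Real.Gamma s * Real.Gamma r = Real.Gamma (s+r) *
      ∫ x in (0:ℝ)..1, x ^ (s-1) * (1-x) ^ (r-1) := by
    exact_mod_cast this
  field_simp [h2]
  rw [h2]; ring

lemma scaled_beta (s r a t : ℝ) (hs : 0 < s) (hr : 0 < r) (hat : a < t) :
    ∫ τ in a..t, (τ - a) ^ (s-1) * (t - τ) ^ (r-1) =
      (t - a) ^ (s + r - 1) * (Real.Gamma s * Real.Gamma r / Real.Gamma (s+r)) := by
  have hc : (0:ℝ) < t - a := by linarith
  have h := intervalIntegral.integral_comp_mul_add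
    (a := (0:ℝ)) (b := 1) (fun τ => (τ - a) ^ (s-1) * (t - τ) ^ (r-1)) hc.ne' a
  simp only [mul_zero, zero_add, mul_one, sub_add_cancel] at h
  have h2 : (∫ x in (0:ℝ)..1, ((t-a)*x + a - a) ^ (s-1) * (t - ((t-a)*x + a)) ^ (r-1))
      = (t-a)^(s-1) * (t-a)^(r-1) * ∫ x in (0:ℝ)..1, x ^ (s-1) * (1-x) ^ (r-1) := by
    rw [← intervalIntegral.integral_const_mul]
    refine intervalIntegral.integral_congr fun x hx => ?_
    rw [Set.uIcc_of_le (by norm_num : (0:ℝ) ≤ 1)] at hx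
    have e1 : (t-a)*x + a - a = (t-a)*x := by ring
    have e2 : t - ((t-a)*x + a) = (t-a)*(1-x) := by ring
    rw [e1, e2, Real.mul_rpow hc.le hx.1, Real.mul_rpow hc.le (by linarith [hx.2])]
    ring
  rw [h2, real_beta s r hs hr] at h
  have h3 : (∫ τ in a..t, (τ - a) ^ (s-1) * (t - τ) ^ (r-1))
      = (t-a) * ((t-a)^(s-1) * (t-a)^(r-1) * (Real.Gamma s * Real.Gamma r / Real.Gamma (s+r))) := by
    rw [smul_eq_mul] at h
    have := congrArg (fun z => (t-a) * z) h
    simp only [← mul_assoc, mul_inv_cancel₀ hc.ne', one_mul] at this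
    rw [this.symm]; ring
  rw [h3]
  have e : (t-a) * ((t-a)^(s-1) * (t-a)^(r-1)) = (t-a)^(s+r-1) := by
    rw [← Real.rpow_add hc]
    nth_rewrite 1 [← Real.rpow_one (t-a)]
    rw [← Real.rpow_add hc]
    ring_nf
  rw [← mul_assoc, ← mul_assoc, mul_assoc (t-a), e]

lemma Gamma_ratio (α x : ℝ) (hα0 : 0 < α) (hα1 : α ≤ 1) (hx : 1 < x) :
    Real.Gamma x * (x - 1) ^ α ≤ Real.Gamma (x + α) := by
  have h1 : (0:ℝ) < x - 1 := by linarith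
  have hs := convexOn_log_Gamma.slope_mono_adjacent (x := x - 1) (y := x) (z := x + α)
    (by simpa using h1) (by simp; linarith) (by linarith) (by linarith)
  have hgx : Real.Gamma x = (x - 1) * Real.Gamma (x - 1) := by
    have := Real.Gamma_add_one (s := x - 1) h1.ne'
    simpa using this
  have hΓ1 : 0 < Real.Gamma (x - 1) := Real.Gamma_pos_of_pos h1
  have hΓx : 0 < Real.Gamma x := Real.Gamma_pos_of_pos (by linarith)
  have hΓxa : 0 < Real.Gamma (x + α) := Real.Gamma_pos_of_pos (by linarith)
  simp only [Function.comp] at hs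
  have e1 : (Real.log (Real.Gamma x) - Real.log (Real.Gamma (x-1))) / (x - (x - 1))
      = Real.log (x - 1) := by
    rw [hgx, Real.log_mul h1.ne' hΓ1.ne']
    field_simp
    ring
  rw [e1] at hs
  rw [show x + α - x = α by ring] at hs
  have hs2 := (le_div_iff₀ hα0).mp hs
  have h2 : Real.log (Real.Gamma x * (x-1)^α) ≤ Real.log (Real.Gamma (x+α)) := by
    rw [Real.log_mul hΓx.ne' (by positivity), Real.log_rpow h1]
    nlinarith
  exact (Real.log_le_log_iff (by positivity) hΓxa).mp h2

lemma ml_summable (α z : ℝ) (hα0 : 0 < α) (hα1 : α ≤ 1) (hz : 0 ≤ z) :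
    Summable (fun k : ℕ => z ^ k / Real.Gamma (α * k + 1)) := by
  apply summable_of_ratio_norm_eventually_le (r := 1/2) (by norm_num)
  rw [Filter.eventually_atTop]
  set c : ℝ := max 1 (2*z) with hc
  have hc1 : (1:ℝ) ≤ c := le_max_left _ _
  have hc0 : (0:ℝ) < c := by linarith
  refine ⟨⌈c ^ (1/α) / α⌉₊ + 1, fun n hn => ?_⟩
  have hn1 : 1 ≤ n := le_trans (Nat.le_add_left 1 _) hn
  have hx1 : (1:ℝ) < α * n + 1 := by
    have : (1:ℝ) ≤ (n:ℝ) := by exact_mod_cast hn1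
    nlinarith
  have hΓx : 0 < Real.Gamma (α * n + 1) := Real.Gamma_pos_of_pos (by linarith)
  have hΓx1 : 0 < Real.Gamma (α * (n+1:ℕ) + 1) := Real.Gamma_pos_of_pos (by positivity)
  have hr := Gamma_ratio α (α * n + 1) hα0 hα1 hx1
  have hαn : c ^ (1/α) ≤ α * n := by
    have h1 : (c ^ (1/α) / α) ≤ (⌈c ^ (1/α) / α⌉₊ + 1 : ℕ) := by
      calc (c ^ (1/α) / α) ≤ ⌈c ^ (1/α) / α⌉₊ := Nat.le_ceil _
      _ ≤ ((⌈c ^ (1/α) / α⌉₊ + 1 : ℕ) : ℝ) := by push_cast; linarith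
    have h2 : ((⌈c ^ (1/α) / α⌉₊ + 1 : ℕ) : ℝ) ≤ n := by exact_mod_cast hn
    have := (div_le_iff₀ hα0).mp (h1.trans h2)
    linarith
  have hpow : c ≤ (α * n) ^ α := by
    have h0 : (0:ℝ) ≤ c ^ (1/α) := by positivity
    have := Real.rpow_le_rpow h0 hαn hα0.le
    rwa [← Real.rpow_mul hc0.le, one_div, inv_mul_cancel₀ hα0.ne', Real.rpow_one] at this
  have hpow0 : (0:ℝ) < (α * n) ^ α := lt_of_lt_of_le hc0 hpow
  have hee : α * ((n:ℝ)+1) + 1 = (α * n + 1) + α := by ring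
  have hΓ2 : Real.Gamma (α * n + 1) * (α * n) ^ α ≤ Real.Gamma (α * ((n:ℝ)+1) + 1) := by
    rw [hee]
    simpa using hr
  have hnn : (0:ℝ) ≤ z^(n+1) := by positivity
  rw [Real.norm_eq_abs, Real.norm_eq_abs, abs_of_nonneg (by positivity),
    abs_of_nonneg (by positivity)]
  push_cast
  calc z ^ (n+1) / Real.Gamma (α * ((n:ℝ)+1) + 1)
      ≤ z ^ (n+1) / (Real.Gamma (α * n + 1) * (α * n) ^ α) := by
        apply div_le_div_of_nonneg_left hnn (by positivity) hΓ2
    _ = (z / (α * n) ^ α) * (z ^ n / Real.Gamma (α * n + 1)) := by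
        rw [pow_succ]; field_simp
    _ ≤ (1/2) * (z ^ n / Real.Gamma (α * n + 1)) := by
        apply mul_le_mul_of_nonneg_right _ (by positivity)
        rw [div_le_div_iff₀ hpow0 (by norm_num)]
        have : 2 * z ≤ c := le_max_right _ _
        linarith

set_option maxHeartbeats 2000000 in
/-- Fractional Bellman–Gronwall inequality: if a continuous nonnegative `ψ` satisfies
`ψ(t) ≤ ε₁ + (ε₂/Γ(α)) ∫_a^t (max_{[a,τ]} ψ) (t-τ)^{α-1} dτ` on `[a,b]`, then
`ψ(t) ≤ ε₁ E_α((t-a)^α ε₂)` on `[a,b]`. -/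
theorem fractional_gronwall (α a b ε₁ ε₂ : ℝ) (hα : α ∈ Set.Ioo (0 : ℝ) 1)
    (hab : a ≤ b) (hε₁ : 0 ≤ ε₁) (hε₂ : 0 ≤ ε₂)
    (ψ : ℝ → ℝ) (hψc : ContinuousOn ψ (Set.Icc a b))
    (hψ0 : ∀ t ∈ Set.Icc a b, 0 ≤ ψ t)
    (hψineq : ∀ t ∈ Set.Icc a b,
      ψ t ≤ ε₁ + (ε₂ / Real.Gamma α) *
        ∫ τ in a..t, (sSup (ψ '' Set.Icc a τ)) * (t - τ) ^ (α - 1)) :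
    ∀ t ∈ Set.Icc a b, ψ t ≤ ε₁ * mittagLefflerOne α ((t - a) ^ α * ε₂) := by
  obtain ⟨hα0, hα1⟩ := hα
  have hΓα : 0 < Real.Gamma α := Real.Gamma_pos_of_pos hα0
  set M : ℝ → ℝ := fun t => sSup (ψ '' Icc a (min t b)) with hM
  have hsub : ∀ t : ℝ, Icc a (min t b) ⊆ Icc a b :=
    fun t => Icc_subset_Icc le_rfl (min_le_right _ _)
  have hbdd : ∀ t : ℝ, BddAbove (ψ '' Icc a (min t b)) := fun t =>
    (isCompact_Icc.image_of_continuousOn (hψc.mono (hsub t))).bddAbove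
  have hMeq : ∀ t ∈ Icc a b, M t = sSup (ψ '' Icc a t) := by
    intro t ht
    rw [hM]; simp only [min_eq_left ht.2]
  have hMmono : Monotone M := by
    intro s t hst
    rcases lt_or_ge (min s b) a with h | h
    · rw [hM]; simp only
      rw [Set.Icc_eq_empty (not_le.mpr h), Set.image_empty, Real.sSup_empty]
      rcases lt_or_ge (min t b) a with h2 | h2
      · rw [Set.Icc_eq_empty (not_le.mpr h2), Set.image_empty, Real.sSup_empty]
      · exact le_trans (hψ0 a ⟨le_rfl, hab⟩)
          (le_csSup (hbdd t) ⟨a, ⟨le_rfl, h2⟩, rfl⟩)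
    · exact csSup_le_csSup (hbdd t)
        ⟨ψ a, ⟨a, ⟨le_rfl, h⟩, rfl⟩⟩
        (Set.image_mono (Icc_subset_Icc le_rfl (min_le_min hst le_rfl)))
  have hM0 : ∀ t, 0 ≤ M t := by
    intro t
    rcases lt_or_ge (min t b) a with h | h
    · rw [hM]; simp only
      rw [Set.Icc_eq_empty (not_le.mpr h), Set.image_empty, Real.sSup_empty]
    · exact le_trans (hψ0 a ⟨le_rfl, hab⟩) (le_csSup (hbdd t) ⟨a, ⟨le_rfl, h⟩, rfl⟩)
  have hψM : ∀ t ∈ Icc a b, ψ t ≤ M t := by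
    intro t ht
    exact le_csSup (hbdd t) ⟨t, ⟨ht.1, le_min le_rfl ht.2⟩, rfl⟩
  set K : ℝ := M b with hK
  have hMK : ∀ t, M t ≤ K := by
    intro t
    have e : M t = M (min t b) := by
      rw [hM]; simp only
      rw [min_assoc, min_self]
    rw [e]; exact hMmono (min_le_right t b)
  have hK0 : 0 ≤ K := hM0 b
  have hMmeas : Measurable M := hMmono.measurable
  -- integrability of the kernel
  have hIntPow : ∀ t, a ≤ t → IntervalIntegrable (fun τ => (t - τ)^(α-1)) volume a t := by
    intro t h
    have h1 := (intervalIntegral.intervalIntegrable_rpow' (a := 0) (b := t - a)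
      (r := α - 1) (by linarith)).comp_sub_left t
    simp only [sub_zero, sub_sub_cancel] at h1
    exact h1.symm
  have hIntM : ∀ t, a ≤ t → IntervalIntegrable (fun τ => M τ * (t - τ)^(α-1)) volume a t := by
    intro t h
    apply ((hIntPow t h).const_mul K).mono_fun
    · exact (hMmeas.mul ((measurable_const.sub measurable_id).pow_const (α-1))).aestronglyMeasurable
    · filter_upwards [ae_restrict_mem measurableSet_uIoc] with τ hτ
      rw [Set.uIoc_of_le h] at hτ
      have h1 : (0:ℝ) ≤ (t - τ)^(α-1) := Real.rpow_nonneg (by linarith [hτ.2]) _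
      rw [Real.norm_eq_abs, Real.norm_eq_abs, abs_of_nonneg (mul_nonneg hK0 h1),
        abs_of_nonneg (mul_nonneg (hM0 τ) h1)]
      exact mul_le_mul_of_nonneg_right (hMK τ) h1
  have hIntPowGen : ∀ t, a ≤ t → ∀ γ : ℝ, 0 ≤ γ →
      IntervalIntegrable (fun τ => (τ - a)^γ * (t - τ)^(α-1)) volume a t := by
    intro t h γ hγ
    apply ((hIntPow t h).const_mul ((t-a)^γ)).mono_fun
    · exact (((measurable_id.sub measurable_const).pow_const γ).mul
        ((measurable_const.sub measurable_id).pow_const (α-1))).aestronglyMeasurable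
    · filter_upwards [ae_restrict_mem measurableSet_uIoc] with τ hτ
      rw [Set.uIoc_of_le h] at hτ
      have h1 : (0:ℝ) ≤ (t - τ)^(α-1) := Real.rpow_nonneg (by linarith [hτ.2]) _
      have h2 : (τ - a)^γ ≤ (t - a)^γ :=
        Real.rpow_le_rpow (by linarith [hτ.1]) (by linarith [hτ.2]) hγ
      rw [Real.norm_eq_abs, Real.norm_eq_abs, abs_of_nonneg
        (mul_nonneg (Real.rpow_nonneg (by linarith [hτ.1]) _) h1),
        abs_of_nonneg (mul_nonneg (Real.rpow_nonneg (by linarith) _) h1)]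
      exact mul_le_mul_of_nonneg_right h2 h1
  -- substitution
  have hsubI : ∀ c : ℝ, (∫ τ in a..c, M τ * (c - τ)^(α-1))
      = ∫ u in (0:ℝ)..(c-a), M (c - u) * u^(α-1) := by
    intro c
    have h := intervalIntegral.integral_comp_sub_left (a := a) (b := c)
      (fun u => M (c - u) * u^(α-1)) c
    simp only [sub_sub_cancel, sub_self] at h
    exact h
  have hIu : ∀ (c x : ℝ), 0 ≤ x →
      IntervalIntegrable (fun u => M (c - u) * u^(α-1)) volume 0 x := by
    intro c x hx
    apply ((intervalIntegral.intervalIntegrable_rpow' (a := 0) (b := x)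
      (r := α - 1) (by linarith)).const_mul K).mono_fun
    · exact ((hMmeas.comp (measurable_const.sub measurable_id)).mul
        (measurable_id.pow_const (α-1))).aestronglyMeasurable
    · filter_upwards [ae_restrict_mem measurableSet_uIoc] with u hu
      rw [Set.uIoc_of_le hx] at hu
      have h1 : (0:ℝ) ≤ u^(α-1) := Real.rpow_nonneg hu.1.le _
      rw [Real.norm_eq_abs, Real.norm_eq_abs, abs_of_nonneg (mul_nonneg hK0 h1),
        abs_of_nonneg (mul_nonneg (hM0 _) h1)]
      exact mul_le_mul_of_nonneg_right (hMK _) h1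
  -- monotonicity of the fractional integral
  have hJmono : ∀ s t, a ≤ s → s ≤ t →
      (∫ τ in a..s, M τ * (s - τ)^(α-1)) ≤ ∫ τ in a..t, M τ * (t - τ)^(α-1) := by
    intro s t has hst
    have hs0 : (0:ℝ) ≤ s - a := by linarith
    have ht0 : (0:ℝ) ≤ t - a := by linarith
    rw [hsubI s, hsubI t]
    calc (∫ u in (0:ℝ)..(s-a), M (s - u) * u^(α-1))
        ≤ ∫ u in (0:ℝ)..(s-a), M (t - u) * u^(α-1) := by
          apply intervalIntegral.integral_mono_on hs0 (hIu s _ hs0) (hIu t _ hs0)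
          intro u hu
          exact mul_le_mul_of_nonneg_right (hMmono (by linarith))
            (Real.rpow_nonneg hu.1 _)
      _ ≤ ∫ u in (0:ℝ)..(t-a), M (t - u) * u^(α-1) := by
          apply intervalIntegral.integral_mono_interval le_rfl hs0 (by linarith)
          · filter_upwards [ae_restrict_mem measurableSet_Ioc] with u hu
            exact mul_nonneg (hM0 _) (Real.rpow_nonneg hu.1.le _)
          · exact hIu t _ ht0
  -- the integral inequality for M
  have hMineq : ∀ t ∈ Icc a b,
      M t ≤ ε₁ + (ε₂ / Real.Gamma α) * ∫ τ in a..t, M τ * (t - τ)^(α-1) := by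
    intro t ht
    rw [hMeq t ht]
    apply csSup_le ((Set.nonempty_Icc.mpr ht.1).image ψ)
    rintro y ⟨s, hs, rfl⟩
    have hs' : s ∈ Icc a b := ⟨hs.1, hs.2.trans ht.2⟩
    have h1 := hψineq s hs'
    have e : (∫ τ in a..s, sSup (ψ '' Icc a τ) * (s - τ)^(α-1))
        = ∫ τ in a..s, M τ * (s - τ)^(α-1) := by
      refine intervalIntegral.integral_congr fun τ hτ => ?_
      rw [Set.uIcc_of_le hs.1] at hτ
      rw [← hMeq τ ⟨hτ.1, hτ.2.trans hs'.2⟩]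
    rw [e] at h1
    refine h1.trans ?_
    have h2 := hJmono s t hs.1 hs.2
    have hc : 0 ≤ ε₂ / Real.Gamma α := div_nonneg hε₂ hΓα.le
    nlinarith [mul_le_mul_of_nonneg_left h2 hc]
  -- the iteration terms
  set T : ℕ → ℝ → ℝ := fun k t => ε₂^k * (t-a)^(α*(k:ℝ)) / Real.Gamma (α*k+1) with hT
  have hΓk : ∀ k : ℕ, 0 < Real.Gamma (α*k+1) := fun k => Real.Gamma_pos_of_pos (by positivity)
  have hT0 : ∀ k t, a ≤ t → 0 ≤ T k t := by
    intro k t h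
    rw [hT]
    exact div_nonneg (mul_nonneg (pow_nonneg hε₂ k)
      (Real.rpow_nonneg (by linarith) _)) (hΓk k).le
  have hTa : ∀ t, a ≤ t → T 0 t = 1 := by
    intro t h
    rw [hT]
    simp [Real.Gamma_one]
  -- key step: the fractional integral of T k
  have hTint : ∀ (k : ℕ) (t : ℝ), a < t →
      (ε₂ / Real.Gamma α) * (∫ τ in a..t, T k τ * (t - τ)^(α-1)) = T (k+1) t := by
    intro k t hat
    have e : (∫ τ in a..t, T k τ * (t - τ)^(α-1))
        = (ε₂^k / Real.Gamma (α*k+1)) * ∫ τ in a..t, (τ-a)^(α*(k:ℝ)) * (t - τ)^(α-1) := by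
      rw [← intervalIntegral.integral_const_mul]
      refine intervalIntegral.integral_congr fun τ hτ => ?_
      rw [hT]; simp only
      ring
    rw [e]
    have hb := scaled_beta (α*(k:ℝ)+1) α a t (by positivity) hα0 hat
    rw [show α*(k:ℝ)+1-1 = α*(k:ℝ) by ring] at hb
    rw [hb, hT]
    simp only
    have h1 : (0:ℝ) < Real.Gamma (α*(k:ℝ)+1) := hΓk k
    have h2 : (0:ℝ) < Real.Gamma (α*(k:ℝ)+1+α) := Real.Gamma_pos_of_pos (by positivity)
    have e2 : α*((k:ℝ)+1)+1 = α*(k:ℝ)+1+α := by ring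
    have e3 : α*(k:ℝ)+1+α-1 = α*((k:ℝ)+1) := by ring
    rw [e3]
    push_cast
    rw [e2]
    field_simp
    ring
  -- the induction
  have hInd : ∀ n : ℕ, ∀ t ∈ Icc a b,
      M t ≤ ε₁ * (∑ k ∈ Finset.range n, T k t) + K * T n t := by
    intro n
    induction n with
    | zero =>
      intro t ht
      simp only [Finset.range_zero, Finset.sum_empty, mul_zero, zero_add]
      rw [hTa t ht.1, mul_one]
      exact hMK t
    | succ n ih =>
      intro t ht
      rcases eq_or_lt_of_le ht.1 with heq | hat
      · -- t = a
        have ht0 : t - a = 0 := by rw [← heq]; ring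
        have hMa : M t ≤ ε₁ := by
          have h := hMineq t ht
          rw [← heq] at h
          simpa [← heq] using h
        have hTa' : ∀ k : ℕ, 1 ≤ k → T k t = 0 := by
          intro k hk
          rw [hT]; simp only
          have : α * (k:ℝ) ≠ 0 := by
            have : (1:ℝ) ≤ (k:ℝ) := by exact_mod_cast hk
            positivity
          rw [ht0, Real.zero_rpow this, mul_zero, zero_div]
        have hsum : ε₁ * (∑ k ∈ Finset.range (n+1), T k t) = ε₁ := by
          rw [Finset.sum_range_succ']
          simp only [hTa t ht.1]
          rw [Finset.sum_eq_zero (fun k _ => hTa' (k+1) (Nat.le_add_left 1 k))]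
          simp
        rw [hsum, hTa' (n+1) (Nat.le_add_left 1 n)]
        simpa using hMa
      · -- a < t
        have hIntT : ∀ k : ℕ, IntervalIntegrable (fun τ => T k τ * (t - τ)^(α-1)) volume a t := by
          intro k
          have h1 := (hIntPowGen t ht.1 (α*(k:ℝ)) (by positivity)).const_mul
            (ε₂^k / Real.Gamma (α*k+1))
          have heq : (fun τ => T k τ * (t - τ)^(α-1))
              = fun τ => (ε₂^k / Real.Gamma (α*k+1)) * ((τ-a)^(α*(k:ℝ)) * (t - τ)^(α-1)) := by
            funext τ
            rw [hT]
            simp only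
            ring
          rw [heq]
          exact h1
        have heq : (fun τ => (ε₁ * (∑ k ∈ Finset.range n, T k τ) + K * T n τ) * (t - τ)^(α-1))
            = fun τ => ε₁ * (∑ k ∈ Finset.range n, T k τ * (t - τ)^(α-1))
              + K * (T n τ * (t - τ)^(α-1)) := by
          funext τ
          rw [← Finset.sum_mul]
          ring
        have hIntSum : IntervalIntegrable
            (fun τ => ∑ k ∈ Finset.range n, T k τ * (t - τ)^(α-1)) volume a t := by
          have h := IntervalIntegrable.sum (μ := volume) (a := a) (b := t)
            (Finset.range n) (f := fun k => fun τ => T k τ * (t - τ)^(α-1))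
            (fun k _ => hIntT k)
          have e : (fun τ => ∑ k ∈ Finset.range n, T k τ * (t - τ)^(α-1))
              = (∑ k ∈ Finset.range n, fun τ => T k τ * (t - τ)^(α-1)) := by
            funext τ
            simp [Finset.sum_apply]
          rw [e]
          exact h
        have hIntRHS : IntervalIntegrable
            (fun τ => (ε₁ * (∑ k ∈ Finset.range n, T k τ) + K * T n τ) * (t - τ)^(α-1))
            volume a t := by
          rw [heq]
          exact (hIntSum.const_mul ε₁).add ((hIntT n).const_mul K)
        have step1 : M t ≤ ε₁ + (ε₂ / Real.Gamma α) *
            ∫ τ in a..t, (ε₁ * (∑ k ∈ Finset.range n, T k τ) + K * T n τ) * (t - τ)^(α-1) := by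
          refine (hMineq t ht).trans ?_
          have hmono := intervalIntegral.integral_mono_on ht.1 (hIntM t ht.1) hIntRHS
            (fun τ hτ => ?_)
          · have hc : 0 ≤ ε₂ / Real.Gamma α := div_nonneg hε₂ hΓα.le
            nlinarith [mul_le_mul_of_nonneg_left hmono hc]
          · have hτb : τ ∈ Icc a b := ⟨hτ.1, hτ.2.trans ht.2⟩
            exact mul_le_mul_of_nonneg_right (ih τ hτb)
              (Real.rpow_nonneg (by linarith [hτ.2]) _)
        have step2 : (ε₂ / Real.Gamma α) *
            (∫ τ in a..t, (ε₁ * (∑ k ∈ Finset.range n, T k τ) + K * T n τ) * (t - τ)^(α-1))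
            = ε₁ * (∑ k ∈ Finset.range n, T (k+1) t) + K * T (n+1) t := by
          rw [heq, intervalIntegral.integral_add
            (hIntSum.const_mul ε₁)
            ((hIntT n).const_mul K),
            intervalIntegral.integral_const_mul, intervalIntegral.integral_const_mul,
            intervalIntegral.integral_finset_sum (fun k _ => hIntT k)]
          have e1 : ∑ k ∈ Finset.range n, T (k+1) t
              = ∑ k ∈ Finset.range n,
                (ε₂ / Real.Gamma α) * ∫ x in a..t, T k x * (t-x)^(α-1) :=
            Finset.sum_congr rfl (fun k _ => (hTint k t hat).symm)
          rw [e1, ← hTint n t hat, ← Finset.mul_sum]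
          ring
        rw [step2] at step1
        refine step1.trans ?_
        rw [Finset.sum_range_succ' (fun k => T k t) n, hTa t ht.1]
        exact le_of_eq (by ring)
  -- conclusion
  intro t ht
  have hta : (0:ℝ) ≤ t - a := by linarith [ht.1]
  have hz : 0 ≤ (t-a)^α * ε₂ := mul_nonneg (Real.rpow_nonneg hta _) hε₂
  set z : ℝ := (t-a)^α * ε₂ with hzdef
  have hTz : ∀ k : ℕ, T k t = z^k / Real.Gamma (α*k+1) := by
    intro k
    rw [hT, hzdef]
    simp only
    rw [mul_pow, ← Real.rpow_natCast ((t-a)^α) k, ← Real.rpow_mul hta]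
    ring_nf
  have hsummable := ml_summable α z hα0 hα1.le hz
  have hlim1 : Filter.Tendsto (fun n => ∑ k ∈ Finset.range n, z^k / Real.Gamma (α*k+1))
      Filter.atTop (nhds (mittagLefflerOne α z)) := hsummable.hasSum.tendsto_sum_nat
  have hlim2 : Filter.Tendsto (fun n : ℕ => z^n / Real.Gamma (α*n+1))
      Filter.atTop (nhds 0) := hsummable.tendsto_atTop_zero
  have hlim : Filter.Tendsto
      (fun n : ℕ => ε₁ * (∑ k ∈ Finset.range n, z^k / Real.Gamma (α*k+1))
        + K * (z^n / Real.Gamma (α*n+1)))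
      Filter.atTop (nhds (ε₁ * mittagLefflerOne α z + K * 0)) :=
    (hlim1.const_mul ε₁).add (hlim2.const_mul K)
  rw [mul_zero, add_zero] at hlim
  refine ge_of_tendsto' hlim fun n => ?_
  have h1 := (hψM t ht).trans (hInd n t ht)
  simp only [hTz] at h1
  exact h1
end

section
/- Let α ∈ (0,1), t₀ < θ, and A ∈ L^∞([t₀,θ], ℝ^{n×n}). Let F be the fundamental matrix: for each s, t ↦ F(t,s) is the unique continuous solution of F(t,s) = Id/Γ(α) + ((t−s)^{1−α}/Γ(α)) ∫_s^t A(τ)F(τ,s)/((t−τ)^{1−α}(τ−s)^{1−α}) dτ. Similarly, for each t ∈ [t₀,θ] let s ↦ G(t,s) be the unique continuous solution on [t₀,t] of the dual integral equation G(t,s) = Id/Γ(α) + ((t−s)^{1−α}/Γ(α)) ∫_s^t G(t,τ) A(τ)/((t−τ)^{1−α}(τ−s)^{1−α}) dτ. Then G(t,s) = F(t,s) for all t₀ ≤ s ≤ t ≤ θ. -/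
open MeasureTheory Set Real
open scoped ENNReal NNReal
set_option maxHeartbeats 1000000
set_option synthInstance.maxHeartbeats 400000

lemma rpow_le_max {p c d t : ℝ} (hc : 0 < c) (hct : c ≤ t) (htd : t ≤ d) :
    t ^ p ≤ max (c ^ p) (d ^ p) := by
  rcases le_or_gt 0 p with h | h
  · exact le_max_of_le_right (Real.rpow_le_rpow (hc.le.trans hct) htd h)
  · exact le_max_of_le_left (Real.rpow_le_rpow_of_nonpos hc hct h.le)

lemma meas_ker (p q a b : ℝ) : Measurable (fun x : ℝ => (b - x) ^ p * (x - a) ^ q) := by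
  fun_prop

lemma intOn_rpow_right {q : ℝ} (hq : -1 < q) (a m : ℝ) (ham : a ≤ m) :
    IntegrableOn (fun x : ℝ => (x - a) ^ q) (Ioc a m) := by
  rw [← intervalIntegrable_iff_integrableOn_Ioc_of_le ham]
  have := (intervalIntegral.intervalIntegrable_rpow' (a := a - a) (b := m - a) hq).comp_sub_right a
  simpa using this

lemma intOn_rpow_left {p : ℝ} (hp : -1 < p) (m b : ℝ) (hmb : m ≤ b) :
    IntegrableOn (fun x : ℝ => (b - x) ^ p) (Ioc m b) := by
  rw [← intervalIntegrable_iff_integrableOn_Ioc_of_le hmb]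
  have := ((intervalIntegral.intervalIntegrable_rpow' (a := b - b) (b := b - m) hp).comp_sub_left b)
  simpa using this.symm
lemma integrableOn_ker {p q : ℝ} (hp : -1 < p) (hq : -1 < q) {a b : ℝ} (hab : a < b) :
    IntegrableOn (fun x : ℝ => (b - x) ^ p * (x - a) ^ q) (Ioc a b) := by
  set m := (a + b) / 2 with hm
  have ham : a < m := by simp [hm]; linarith
  have hmb : m < b := by simp [hm]; linarith
  have hsplit : Ioc a b = Ioc a m ∪ Ioc m b := (Set.Ioc_union_Ioc_eq_Ioc ham.le hmb.le).symm
  rw [hsplit]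
  apply IntegrableOn.union
  · -- on Ioc a m : (b-x)^p bounded
    apply Integrable.mono' (((intOn_rpow_right hq a m ham.le).const_mul
      (max ((b - m) ^ p) ((b - a) ^ p))))
      ((meas_ker p q a b).aestronglyMeasurable)
    filter_upwards [ae_restrict_mem measurableSet_Ioc] with x hx
    have h1 : 0 < b - m := by linarith
    have h2 : b - m ≤ b - x := by have := hx.2; linarith
    have h3 : b - x ≤ b - a := by have := hx.1; linarith
    have hxa : 0 < x - a := by have := hx.1; linarith
    rw [Real.norm_eq_abs, abs_mul, abs_of_nonneg (Real.rpow_nonneg (by linarith) _),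
      abs_of_nonneg (Real.rpow_nonneg hxa.le _)]
    exact mul_le_mul_of_nonneg_right (rpow_le_max h1 h2 h3) (Real.rpow_nonneg hxa.le _)
  · apply Integrable.mono' (((intOn_rpow_left hp m b hmb.le).const_mul
      (max ((m - a) ^ q) ((b - a) ^ q))))
      ((meas_ker p q a b).aestronglyMeasurable)
    filter_upwards [ae_restrict_mem measurableSet_Ioc] with x hx
    have h1 : 0 < m - a := by linarith
    have h2 : m - a ≤ x - a := by have := hx.1; linarith
    have h3 : x - a ≤ b - a := by have := hx.2; linarith
    have hbx : 0 ≤ b - x := by have := hx.2; linarith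
    rw [Real.norm_eq_abs, abs_mul, abs_of_nonneg (Real.rpow_nonneg hbx _),
      abs_of_nonneg (Real.rpow_nonneg (by linarith) _), mul_comm]
    calc (x - a) ^ q * (b - x) ^ p
        ≤ (max ((m - a) ^ q) ((b - a) ^ q)) * (b - x) ^ p :=
          mul_le_mul_of_nonneg_right (rpow_le_max h1 h2 h3) (Real.rpow_nonneg hbx _)

lemma int_rpow_right_eval {q : ℝ} (hq : -1 < q) (a m : ℝ) (ham : a ≤ m) :
    ∫ x in Ioc a m, (x - a) ^ q = (m - a) ^ (q + 1) / (q + 1) := by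
  rw [← intervalIntegral.integral_of_le ham]
  rw [intervalIntegral.integral_comp_sub_right (fun y : ℝ => y ^ q) a]
  rw [integral_rpow (Or.inl hq)]
  rw [sub_self, Real.zero_rpow (by linarith), sub_zero]

lemma int_rpow_left_eval {p : ℝ} (hp : -1 < p) (m b : ℝ) (hmb : m ≤ b) :
    ∫ x in Ioc m b, (b - x) ^ p = (b - m) ^ (p + 1) / (p + 1) := by
  rw [← intervalIntegral.integral_of_le hmb]
  rw [intervalIntegral.integral_comp_sub_left (fun y : ℝ => y ^ p) b]
  rw [sub_self, integral_rpow (Or.inl hp)]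
  rw [Real.zero_rpow (by linarith), sub_zero]

lemma integral_ker_le {p q : ℝ} (hp : -1 < p) (hq : -1 < q) :
    ∃ C : ℝ, ∀ a b : ℝ, a < b →
      ∫ x in Ioc a b, (b - x) ^ p * (x - a) ^ q ≤ C * (b - a) ^ (p + q + 1) := by
  refine ⟨(max ((1/2 : ℝ) ^ p) 1) * ((1/2 : ℝ) ^ (q + 1) / (q + 1))
    + (max ((1/2 : ℝ) ^ q) 1) * ((1/2 : ℝ) ^ (p + 1) / (p + 1)), ?_⟩
  intro a b hab
  set m := (a + b) / 2 with hm
  have ham : a < m := by simp only [hm]; linarith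
  have hmb : m < b := by simp only [hm]; linarith
  have hd : (0:ℝ) < b - a := by linarith
  have he : (0:ℝ) < b - m := by linarith
  have hea : m - a = b - m := by simp only [hm]; ring
  have heh : b - m = (b - a) * (1/2) := by simp only [hm]; ring
  have hint := integrableOn_ker hp hq hab
  have hint1 : IntegrableOn (fun x : ℝ => (b - x) ^ p * (x - a) ^ q) (Ioc a m) :=
    hint.mono_set (Set.Ioc_subset_Ioc_right hmb.le)
  have hint2 : IntegrableOn (fun x : ℝ => (b - x) ^ p * (x - a) ^ q) (Ioc m b) :=
    hint.mono_set (Set.Ioc_subset_Ioc_left ham.le)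
  have hsplit : (∫ x in Ioc a b, (b - x) ^ p * (x - a) ^ q)
      = (∫ x in Ioc a m, (b - x) ^ p * (x - a) ^ q)
        + ∫ x in Ioc m b, (b - x) ^ p * (x - a) ^ q := by
    rw [show Ioc a b = Ioc a m ∪ Ioc m b from (Set.Ioc_union_Ioc_eq_Ioc ham.le hmb.le).symm,
      setIntegral_union (Set.Ioc_disjoint_Ioc_of_le le_rfl) measurableSet_Ioc hint1 hint2]
  have hb1 : (∫ x in Ioc a m, (b - x) ^ p * (x - a) ^ q)
      ≤ (max ((b - m) ^ p) ((b - a) ^ p)) * ((m - a) ^ (q + 1) / (q + 1)) := by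
    calc (∫ x in Ioc a m, (b - x) ^ p * (x - a) ^ q)
        ≤ ∫ x in Ioc a m, (max ((b - m) ^ p) ((b - a) ^ p)) * (x - a) ^ q := by
          refine setIntegral_mono_on hint1 ((intOn_rpow_right hq a m ham.le).const_mul _)
            measurableSet_Ioc (fun x hx => ?_)
          exact mul_le_mul_of_nonneg_right
            (rpow_le_max he (by have := hx.2; linarith) (by have := hx.1; linarith))
            (Real.rpow_nonneg (by have := hx.1; linarith) _)
      _ = _ := by rw [integral_const_mul, int_rpow_right_eval hq a m ham.le]
  have hb2 : (∫ x in Ioc m b, (b - x) ^ p * (x - a) ^ q)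
      ≤ (max ((m - a) ^ q) ((b - a) ^ q)) * ((b - m) ^ (p + 1) / (p + 1)) := by
    calc (∫ x in Ioc m b, (b - x) ^ p * (x - a) ^ q)
        ≤ ∫ x in Ioc m b, (max ((m - a) ^ q) ((b - a) ^ q)) * (b - x) ^ p := by
          refine setIntegral_mono_on hint2 ((intOn_rpow_left hp m b hmb.le).const_mul _)
            measurableSet_Ioc (fun x hx => ?_)
          have h1 : (x - a) ^ q ≤ max ((m - a) ^ q) ((b - a) ^ q) :=
            rpow_le_max (by linarith) (by have := hx.1; linarith) (by have := hx.2; linarith)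
          calc (b - x) ^ p * (x - a) ^ q
              ≤ (b - x) ^ p * (max ((m - a) ^ q) ((b - a) ^ q)) :=
                mul_le_mul_of_nonneg_left h1 (Real.rpow_nonneg (by have := hx.2; linarith) _)
            _ = _ := mul_comm _ _
      _ = _ := by rw [integral_const_mul, int_rpow_left_eval hp m b hmb.le]
  rw [hsplit]
  have key1 : (max ((b - m) ^ p) ((b - a) ^ p)) * ((m - a) ^ (q + 1) / (q + 1))
      = (max ((1/2 : ℝ) ^ p) 1) * ((1/2 : ℝ) ^ (q + 1) / (q + 1)) * (b - a) ^ (p + q + 1) := by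
    rw [hea, heh, Real.mul_rpow hd.le (by norm_num), Real.mul_rpow hd.le (by norm_num)]
    rw [show max ((b - a) ^ p * (1/2 : ℝ) ^ p) ((b - a) ^ p)
        = (b - a) ^ p * max ((1/2 : ℝ) ^ p) 1 by
      rw [mul_max_of_nonneg _ _ (Real.rpow_nonneg hd.le p), mul_one]]
    rw [show (p + q + 1) = p + (q + 1) by ring, Real.rpow_add hd p (q+1)]
    ring
  have key2 : (max ((m - a) ^ q) ((b - a) ^ q)) * ((b - m) ^ (p + 1) / (p + 1))
      = (max ((1/2 : ℝ) ^ q) 1) * ((1/2 : ℝ) ^ (p + 1) / (p + 1)) * (b - a) ^ (p + q + 1) := by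
    rw [hea, heh, Real.mul_rpow hd.le (by norm_num), Real.mul_rpow hd.le (by norm_num)]
    rw [show max ((b - a) ^ q * (1/2 : ℝ) ^ q) ((b - a) ^ q)
        = (b - a) ^ q * max ((1/2 : ℝ) ^ q) 1 by
      rw [mul_max_of_nonneg _ _ (Real.rpow_nonneg hd.le q), mul_one]]
    rw [show (p + q + 1) = q + (p + 1) by ring, Real.rpow_add hd q (p+1)]
    ring
  rw [add_mul, ← key1, ← key2]
  exact add_le_add hb1 hb2

lemma integrable_ker_smul {E : Type*} [NormedAddCommGroup E] [NormedSpace ℝ E]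
    {a b : ℝ} (hab : a < b) {p q : ℝ} (hp : -1 < p) (hq : -1 < q)
    {g : ℝ → E} (hg : AEStronglyMeasurable g (volume.restrict (Ioc a b)))
    {C : ℝ} (hC : ∀ᵐ x ∂(volume.restrict (Ioc a b)), ‖g x‖ ≤ C) :
    IntegrableOn (fun x => ((b - x) ^ p * (x - a) ^ q) • g x) (Ioc a b) := by
  apply Integrable.mono' ((integrableOn_ker hp hq hab).const_mul C)
  · exact ((meas_ker p q a b).aestronglyMeasurable).smul hg
  · filter_upwards [hC, ae_restrict_mem measurableSet_Ioc] with x h1 h2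
    rw [norm_smul]
    have hk : 0 ≤ (b - x) ^ p * (x - a) ^ q :=
      mul_nonneg (Real.rpow_nonneg (by linarith [h2.2]) _)
        (Real.rpow_nonneg (by linarith [h2.1]) _)
    rw [Real.norm_eq_abs, abs_of_nonneg hk, mul_comm C]
    exact mul_le_mul_of_nonneg_left h1 hk

/-- Duality of the fundamental solution matrix: if `t ↦ F(t,s)` solves
`F(t,s) = Id/Γ(α) + ((t-s)^{1-α}/Γ(α)) ∫_s^t (t-τ)^{α-1}(τ-s)^{α-1} A(τ)F(τ,s) dτ`
and `s ↦ G(t,s)` solves the dual equation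
`G(t,s) = Id/Γ(α) + ((t-s)^{1-α}/Γ(α)) ∫_s^t (t-τ)^{α-1}(τ-s)^{α-1} G(t,τ)A(τ) dτ`,
then `G = F` on `Ω`. -/
theorem fundamental_matrix_duality
    (n : ℕ) (α t₀ θ : ℝ) (hα : α ∈ Set.Ioo (0 : ℝ) 1) (ht : t₀ < θ)
    (A : ℝ → (EuclideanSpace ℝ (Fin n) →L[ℝ] EuclideanSpace ℝ (Fin n)))
    (hAm : Measurable A)
    (hAb : eLpNorm A ⊤ (volume.restrict (Set.Icc t₀ θ)) < ⊤)
    (F G : ℝ → ℝ → (EuclideanSpace ℝ (Fin n) →L[ℝ] EuclideanSpace ℝ (Fin n)))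
    (hFc : ∀ s ∈ Set.Icc t₀ θ, ContinuousOn (fun t => F t s) (Set.Icc s θ))
    (hFeq : ∀ s ∈ Set.Icc t₀ θ, ∀ t ∈ Set.Icc s θ,
      F t s = (Real.Gamma α)⁻¹ • (1 : EuclideanSpace ℝ (Fin n) →L[ℝ] EuclideanSpace ℝ (Fin n))
        + ((t - s) ^ (1 - α) / Real.Gamma α) •
            ∫ τ in s..t, ((t - τ) ^ (α - 1) * (τ - s) ^ (α - 1)) • (A τ * F τ s))
    (hGc : ∀ t ∈ Set.Icc t₀ θ, ContinuousOn (fun s => G t s) (Set.Icc t₀ t))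
    (hGeq : ∀ t ∈ Set.Icc t₀ θ, ∀ s ∈ Set.Icc t₀ t,
      G t s = (Real.Gamma α)⁻¹ • (1 : EuclideanSpace ℝ (Fin n) →L[ℝ] EuclideanSpace ℝ (Fin n))
        + ((t - s) ^ (1 - α) / Real.Gamma α) •
            ∫ τ in s..t, ((t - τ) ^ (α - 1) * (τ - s) ^ (α - 1)) • (G t τ * A τ)) :
    ∀ s t : ℝ, t₀ ≤ s → s ≤ t → t ≤ θ → G t s = F t s := by
  obtain ⟨hα0, hα1⟩ := hα
  have hΓ : 0 < Real.Gamma α := Real.Gamma_pos_of_pos hα0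
  have hΓ' : (Real.Gamma α) ≠ 0 := ne_of_gt hΓ
  have hα1' : (-1:ℝ) < α - 1 := by linarith
  have h2α : (-1:ℝ) < α - 1 + (α - 1) + 1 := by linarith
  intro s t hs hst htθ
  haveI : IsScalarTower ℝ (EuclideanSpace ℝ (Fin n) →L[ℝ] EuclideanSpace ℝ (Fin n))
      (EuclideanSpace ℝ (Fin n) →L[ℝ] EuclideanSpace ℝ (Fin n)) :=
    ⟨fun r x y => by ext v; simp [smul_eq_mul, ContinuousLinearMap.mul_apply]⟩
  haveI : SMulCommClass ℝ (EuclideanSpace ℝ (Fin n) →L[ℝ] EuclideanSpace ℝ (Fin n))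
      (EuclideanSpace ℝ (Fin n) →L[ℝ] EuclideanSpace ℝ (Fin n)) :=
    ⟨fun r x y => by ext v; simp [smul_eq_mul, ContinuousLinearMap.mul_apply]⟩
  rcases eq_or_lt_of_le hst with rfl | hlt
  · rw [hGeq s ⟨hs, htθ⟩ s ⟨hs, le_refl s⟩, hFeq s ⟨hs, htθ⟩ s ⟨le_refl s, htθ⟩]
    simp
  have hts : t₀ ≤ t := hs.trans hlt.le
  have hsθ : s ≤ θ := hlt.le.trans htθ
  set μst := volume.restrict (Ioc s t) with hμst
  -- bounds
  obtain ⟨Cg', hCg'⟩ := isCompact_Icc.exists_bound_of_continuousOn (hGc t ⟨hts, htθ⟩)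
  obtain ⟨Cf', hCf'⟩ := isCompact_Icc.exists_bound_of_continuousOn (hFc s ⟨hs, hsθ⟩)
  set Cg := max Cg' 0 with hCgdef
  set Cf := max Cf' 0 with hCfdef
  have hCg : ∀ x ∈ Icc t₀ t, ‖G t x‖ ≤ Cg := fun x hx => (hCg' x hx).trans (le_max_left _ _)
  have hCf : ∀ x ∈ Icc s θ, ‖F x s‖ ≤ Cf := fun x hx => (hCf' x hx).trans (le_max_left _ _)
  have hCg0 : 0 ≤ Cg := le_max_right _ _
  have hCf0 : 0 ≤ Cf := le_max_right _ _
  set Ca := (eLpNorm A ⊤ (volume.restrict (Icc t₀ θ))).toReal with hCadef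
  have hCa0 : 0 ≤ Ca := ENNReal.toReal_nonneg
  have hAbd : ∀ S : Set ℝ, S ⊆ Icc t₀ θ → ∀ᵐ x ∂(volume.restrict S), ‖A x‖ ≤ Ca := by
    intro S hS
    refine ae_restrict_of_ae_restrict_of_subset hS ?_
    filter_upwards [MeasureTheory.ae_le_eLpNormEssSup
      (f := A) (μ := volume.restrict (Icc t₀ θ))] with x hx
    have h2 : (‖A x‖₊ : ℝ≥0∞) ≤ eLpNorm A ⊤ (volume.restrict (Icc t₀ θ)) := by
      rw [eLpNorm_exponent_top]; exact_mod_cast hx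
    have h3 := ENNReal.toReal_mono hAb.ne h2
    rw [show ‖A x‖ = ((‖A x‖₊ : ℝ≥0∞)).toReal by rw [ENNReal.coe_toReal, coe_nnnorm]]
    exact h3
  -- subsets & measurability
  have hsub1 : Ioc s t ⊆ Icc t₀ t := fun x hx => ⟨hs.trans hx.1.le, hx.2⟩
  have hsub2 : Ioc s t ⊆ Icc s θ := fun x hx => ⟨hx.1.le, hx.2.trans htθ⟩
  have hsub3 : Ioc s t ⊆ Icc t₀ θ := fun x hx => ⟨hs.trans hx.1.le, hx.2.trans htθ⟩
  have hGsm : AEStronglyMeasurable (fun τ => G t τ) μst :=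
    ((hGc t ⟨hts, htθ⟩).mono hsub1).aestronglyMeasurable measurableSet_Ioc
  have hFsm : AEStronglyMeasurable (fun τ => F τ s) μst :=
    ((hFc s ⟨hs, hsθ⟩).mono hsub2).aestronglyMeasurable measurableSet_Ioc
  have hAsm : AEStronglyMeasurable A μst := hAm.aestronglyMeasurable
  -- a.e. bounds for products on μst
  have hbGA : ∀ᵐ τ ∂μst, ‖G t τ * A τ‖ ≤ Cg * Ca := by
    filter_upwards [hAbd _ hsub3, ae_restrict_mem measurableSet_Ioc] with τ h1 h2
    calc ‖G t τ * A τ‖ ≤ ‖G t τ‖ * ‖A τ‖ := norm_mul_le _ _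
      _ ≤ Cg * Ca := mul_le_mul (hCg τ (hsub1 h2)) h1 (norm_nonneg _) hCg0
  have hbAF : ∀ᵐ τ ∂μst, ‖A τ * F τ s‖ ≤ Ca * Cf := by
    filter_upwards [hAbd _ hsub3, ae_restrict_mem measurableSet_Ioc] with τ h1 h2
    calc ‖A τ * F τ s‖ ≤ ‖A τ‖ * ‖F τ s‖ := norm_mul_le _ _
      _ ≤ Ca * Cf := mul_le_mul h1 (hCf τ (hsub2 h2)) (norm_nonneg _) hCa0
  have hbGAF : ∀ᵐ τ ∂μst, ‖G t τ * (A τ * F τ s)‖ ≤ Cg * (Ca * Cf) := by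
    filter_upwards [hbAF, ae_restrict_mem measurableSet_Ioc] with τ h1 h2
    calc ‖G t τ * (A τ * F τ s)‖ ≤ ‖G t τ‖ * ‖A τ * F τ s‖ := norm_mul_le _ _
      _ ≤ Cg * (Ca * Cf) := mul_le_mul (hCg τ (hsub1 h2)) h1 (norm_nonneg _) hCg0
  -- integrability of the main integrands
  have intPhi : Integrable
      (fun τ => ((t - τ) ^ (α - 1) * (τ - s) ^ (α - 1)) • (G t τ * (A τ * F τ s))) μst :=
    integrable_ker_smul hlt hα1' hα1' (hGsm.mul (hAsm.mul hFsm)) hbGAF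
  have intGA : Integrable
      (fun τ => ((t - τ) ^ (α - 1) * (τ - s) ^ (α - 1)) • (G t τ * A τ)) μst :=
    integrable_ker_smul hlt hα1' hα1' (hGsm.mul hAsm) hbGA
  have intAF : Integrable
      (fun τ => ((t - τ) ^ (α - 1) * (τ - s) ^ (α - 1)) • (A τ * F τ s)) μst :=
    integrable_ker_smul hlt hα1' hα1' (hAsm.mul hFsm) hbAF
  -- restricted versions
  have hGA_int_sub : ∀ σ ∈ Ioo s t, Integrable
      (fun τ => ((t - τ) ^ (α - 1) * (τ - σ) ^ (α - 1)) • (G t τ * A τ))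
      (volume.restrict (Ioc σ t)) := by
    intro σ hσ
    have hsub : Ioc σ t ⊆ Ioc s t := Ioc_subset_Ioc_left hσ.1.le
    refine integrable_ker_smul (C := Cg * Ca) hσ.2 hα1' hα1' ?_ ?_
    · exact (hGsm.mul hAsm).mono_measure (Measure.restrict_mono hsub le_rfl)
    · exact ae_restrict_of_ae_restrict_of_subset hsub hbGA
  have hAF_int_sub : ∀ τ ∈ Ioc s t, Integrable
      (fun σ => ((τ - σ) ^ (α - 1) * (σ - s) ^ (α - 1)) • (A σ * F σ s))
      (volume.restrict (Ioc s τ)) := by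
    intro τ hτ
    have hsub : Ioc s τ ⊆ Ioc s t := Ioc_subset_Ioc_right hτ.2
    refine integrable_ker_smul (C := Ca * Cf) hτ.1 hα1' hα1' ?_ ?_
    · exact (hAsm.mul hFsm).mono_measure (Measure.restrict_mono hsub le_rfl)
    · exact ae_restrict_of_ae_restrict_of_subset hsub hbAF
  -- rearranged integral equations
  have hFeq' : ∀ τ ∈ Ioc s t, F τ s
      = (Real.Gamma α)⁻¹ • (1 : EuclideanSpace ℝ (Fin n) →L[ℝ] EuclideanSpace ℝ (Fin n))
        + ((τ - s) ^ (1 - α) / Real.Gamma α) •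
            ∫ σ in Ioc s τ, ((τ - σ) ^ (α - 1) * (σ - s) ^ (α - 1)) • (A σ * F σ s) := by
    intro τ hτ
    rw [hFeq s ⟨hs, hsθ⟩ τ ⟨hτ.1.le, hτ.2.trans htθ⟩, intervalIntegral.integral_of_le hτ.1.le]
  have hIσ : ∀ σ ∈ Ico s t,
      (∫ τ in Ioc σ t, ((t - τ) ^ (α - 1) * (τ - σ) ^ (α - 1)) • (G t τ * A τ))
        = (Real.Gamma α * (t - σ) ^ (α - 1)) • G t σ
          - ((t - σ) ^ (α - 1)) •
              (1 : EuclideanSpace ℝ (Fin n) →L[ℝ] EuclideanSpace ℝ (Fin n)) := by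
    intro σ hσ
    have hσt : σ < t := hσ.2
    have h := hGeq t ⟨hts, htθ⟩ σ ⟨hs.trans hσ.1, hσt.le⟩
    rw [intervalIntegral.integral_of_le hσt.le] at h
    have hpos : (0:ℝ) < t - σ := by linarith
    have hsc : ((t - σ) ^ (1 - α) / Real.Gamma α) ≠ 0 :=
      div_ne_zero (ne_of_gt (Real.rpow_pos_of_pos hpos _)) hΓ'
    have h2 : ((t - σ) ^ (1 - α) / Real.Gamma α) •
        (∫ τ in Ioc σ t, ((t - τ) ^ (α - 1) * (τ - σ) ^ (α - 1)) • (G t τ * A τ))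
        = G t σ - (Real.Gamma α)⁻¹
            • (1 : EuclideanSpace ℝ (Fin n) →L[ℝ] EuclideanSpace ℝ (Fin n)) := by
      rw [h]; exact (add_sub_cancel_left _ _).symm
    have h3 := congrArg (fun z => ((t - σ) ^ (1 - α) / Real.Gamma α)⁻¹ • z) h2
    simp only [inv_smul_smul₀ hsc] at h3
    rw [h3, inv_div, div_eq_mul_inv, ← Real.rpow_neg hpos.le, neg_sub, smul_sub, smul_smul]
    congr 1
    rw [mul_comm (Real.Gamma α) ((t - σ) ^ (α - 1)), mul_assoc, mul_inv_cancel₀ hΓ', mul_one]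
  -- kernel function for Fubini
  set K : ℝ → ℝ → (EuclideanSpace ℝ (Fin n) →L[ℝ] EuclideanSpace ℝ (Fin n)) := fun τ σ =>
    ((t - τ) ^ (α - 1)) •
      ((G t τ * A τ) * (((τ - σ) ^ (α - 1) * (σ - s) ^ (α - 1)) • (A σ * F σ s))) with hKdef
  set f : ℝ → ℝ → (EuclideanSpace ℝ (Fin n) →L[ℝ] EuclideanSpace ℝ (Fin n)) := fun τ σ =>
    if σ < τ then K τ σ else 0 with hfdef
  have hKform2 : ∀ τ σ, K τ σ
      = ((σ - s) ^ (α - 1)) •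
          ((((t - τ) ^ (α - 1) * (τ - σ) ^ (α - 1)) • (G t τ * A τ)) * (A σ * F σ s)) := by
    intro τ σ
    simp only [hKdef]
    rw [mul_smul_comm, smul_smul, smul_mul_assoc, smul_smul]
    congr 1
    ring
  have hmul_prod : AEStronglyMeasurable (fun p : ℝ × ℝ => K p.1 p.2) (μst.prod μst) := by
    simp only [hKdef]
    apply AEStronglyMeasurable.fun_smul
    · apply Measurable.aestronglyMeasurable; fun_prop
    · apply AEStronglyMeasurable.fun_mul
      · exact (hGsm.fun_mul hAsm).comp_fst
      · apply AEStronglyMeasurable.fun_smul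
        · apply Measurable.aestronglyMeasurable; fun_prop
        · exact (hAsm.fun_mul hFsm).comp_snd
  have hfmeas : AEStronglyMeasurable (fun p : ℝ × ℝ => f p.1 p.2) (μst.prod μst) := by
    have hind : (fun p : ℝ × ℝ => f p.1 p.2)
        = Set.indicator {p : ℝ × ℝ | p.2 < p.1} (fun p => K p.1 p.2) := by
      funext p
      by_cases h : p.2 < p.1
      · simp only [hfdef, if_pos h]
        exact (Set.indicator_of_mem (show p ∈ {p : ℝ × ℝ | p.2 < p.1} from h) (fun p : ℝ × ℝ => K p.1 p.2)).symm
      · simp only [hfdef, if_neg h]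
        exact (Set.indicator_of_notMem (show p ∉ {p : ℝ × ℝ | p.2 < p.1} from h) (fun p : ℝ × ℝ => K p.1 p.2)).symm
    rw [hind]
    exact hmul_prod.indicator (measurableSet_lt measurable_snd measurable_fst)
  have haeIoo : ∀ᵐ τ ∂μst, τ ∈ Ioo s t := by
    have h1 : ∀ᵐ τ ∂(volume : Measure ℝ), τ ≠ t := by
      rw [ae_iff]
      simpa using measure_singleton t
    filter_upwards [ae_restrict_mem measurableSet_Ioc, ae_restrict_of_ae h1] with τ h2 h3
    exact ⟨h2.1, lt_of_le_of_ne h2.2 h3⟩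
  have hset1 : ∀ τ ∈ Ioo s t, Iio τ ∩ Ioc s t = Ioo s τ := by
    intro τ hτ; ext x
    constructor
    · rintro ⟨hx2, hx1⟩; exact ⟨hx1.1, hx2⟩
    · rintro ⟨hx1, hx2⟩; exact ⟨hx2, ⟨hx1, hx2.le.trans hτ.2.le⟩⟩
  have hset2 : ∀ σ ∈ Ioo s t, Ioi σ ∩ Ioc s t = Ioc σ t := by
    intro σ hσ; ext x
    constructor
    · rintro ⟨h2, h1⟩; exact ⟨h2, h1.2⟩
    · rintro ⟨h1, h2⟩; exact ⟨h1, ⟨hσ.1.trans h1, h2⟩⟩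
  have hindτ : ∀ τ : ℝ, (fun σ => f τ σ) = Set.indicator (Iio τ) (fun σ => K τ σ) := by
    intro τ; funext σ
    by_cases h : σ < τ
    · simp only [hfdef, if_pos h]
      exact (Set.indicator_of_mem (mem_Iio.mpr h) (fun σ => K τ σ)).symm
    · simp only [hfdef, if_neg h]
      exact (Set.indicator_of_notMem (fun hc => h (mem_Iio.mp hc)) (fun σ => K τ σ)).symm
  have hindσ : ∀ σ : ℝ, (fun τ => f τ σ) = Set.indicator (Ioi σ) (fun τ => K τ σ) := by
    intro σ; funext τ
    by_cases h : σ < τ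
    · simp only [hfdef, if_pos h]
      exact (Set.indicator_of_mem (mem_Ioi.mpr h) (fun τ => K τ σ)).symm
    · simp only [hfdef, if_neg h]
      exact (Set.indicator_of_notMem (fun hc => h (mem_Ioi.mp hc)) (fun τ => K τ σ)).symm
  have hslice : ∀ τ ∈ Ioo s t, Integrable (fun σ => f τ σ) μst := by
    intro τ hτ
    rw [hindτ τ, hμst]
    refine (integrable_indicator_iff (f := fun σ => K τ σ) (μ := volume.restrict (Ioc s t))
      measurableSet_Iio).mpr ?_
    rw [IntegrableOn,
      Measure.restrict_restrict measurableSet_Iio, hset1 τ hτ]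
    have base2 : Integrable
        (fun σ => ((τ - σ) ^ (α - 1) * (σ - s) ^ (α - 1)) • (A σ * F σ s))
        (volume.restrict (Ioo s τ)) :=
      (hAF_int_sub τ ⟨hτ.1, hτ.2.le⟩).mono_measure
        (Measure.restrict_mono Ioo_subset_Ioc_self le_rfl)
    have base3 := (ContinuousLinearMap.mul ℝ _ (G t τ * A τ)).integrable_comp base2
    have base4 := base3.smul ((t - τ) ^ (α - 1))
    exact base4.congr (ae_of_all _ fun σ => by
      simp [hKdef, ContinuousLinearMap.mul_apply', mul_smul_comm])
  obtain ⟨CK, hCK⟩ := integral_ker_le hα1' hα1'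
  set CM := (Cg * Ca) * (Ca * Cf) with hCMdef
  have hCM0 : 0 ≤ CM := mul_nonneg (mul_nonneg hCg0 hCa0) (mul_nonneg hCa0 hCf0)
  have hbint : Integrable (fun τ => ∫ σ, ‖f τ σ‖ ∂μst) μst := by
    apply Integrable.mono'
      (((integrableOn_ker hα1' h2α hlt).const_mul (CM * CK)) : Integrable _ μst)
    · exact hfmeas.norm.integral_prod_right'
    · filter_upwards [haeIoo, hbGA] with τ hτ hGAτ
      have hτt : (0:ℝ) ≤ t - τ := by linarith [hτ.2]
      have h0 : 0 ≤ ∫ σ, ‖f τ σ‖ ∂μst := integral_nonneg (fun σ => norm_nonneg _)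
      rw [Real.norm_eq_abs, abs_of_nonneg h0]
      have hsubIoo : Ioo s τ ⊆ Ioc s t := fun x hx => ⟨hx.1, hx.2.le.trans hτ.2.le⟩
      have hdomI : IntegrableOn
          (fun σ => (CM * (t - τ) ^ (α - 1)) * ((τ - σ) ^ (α - 1) * (σ - s) ^ (α - 1)))
          (Ioo s τ) := by
        refine (Integrable.const_mul ?_ _)
        exact (integrableOn_ker hα1' hα1' hτ.1).mono_set Ioo_subset_Ioc_self
      have hdom : Integrable (Set.indicator (Ioo s τ)
          (fun σ => (CM * (t - τ) ^ (α - 1)) * ((τ - σ) ^ (α - 1) * (σ - s) ^ (α - 1)))) μst := by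
        rw [hμst, integrable_indicator_iff measurableSet_Ioo, IntegrableOn,
          Measure.restrict_restrict measurableSet_Ioo,
          Set.inter_eq_self_of_subset_left hsubIoo]
        exact hdomI
      have hle : ∫ σ, ‖f τ σ‖ ∂μst ≤ ∫ σ, (Set.indicator (Ioo s τ)
          (fun σ => (CM * (t - τ) ^ (α - 1)) * ((τ - σ) ^ (α - 1) * (σ - s) ^ (α - 1)))) σ ∂μst := by
        refine integral_mono_of_nonneg (ae_of_all _ fun σ => norm_nonneg _) hdom ?_
        filter_upwards [hbAF, ae_restrict_mem measurableSet_Ioc] with σ hAFσ hσmem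
        by_cases h : σ < τ
        · have hσs : s < σ := hσmem.1
          simp only [hfdef, if_pos h]
          rw [Set.indicator_of_mem (show σ ∈ Ioo s τ from ⟨hσs, h⟩)]
          have hb' : (0:ℝ) ≤ (τ - σ) ^ (α - 1) * (σ - s) ^ (α - 1) :=
            mul_nonneg (Real.rpow_nonneg (by linarith) _) (Real.rpow_nonneg (by linarith) _)
          calc ‖K τ σ‖ = ((t - τ) ^ (α - 1)) *
              ‖(G t τ * A τ) * (((τ - σ) ^ (α - 1) * (σ - s) ^ (α - 1)) • (A σ * F σ s))‖ := by
                simp only [hKdef]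
                rw [norm_smul ((t - τ) ^ (α - 1))
                  ((G t τ * A τ) * (((τ - σ) ^ (α - 1) * (σ - s) ^ (α - 1)) • (A σ * F σ s))),
                  Real.norm_eq_abs, abs_of_nonneg (Real.rpow_nonneg hτt _)]
            _ ≤ ((t - τ) ^ (α - 1)) *
                ((Cg * Ca) * (((τ - σ) ^ (α - 1) * (σ - s) ^ (α - 1)) * (Ca * Cf))) := by
                refine mul_le_mul_of_nonneg_left ?_ (Real.rpow_nonneg hτt _)
                calc ‖(G t τ * A τ) * (((τ - σ) ^ (α - 1) * (σ - s) ^ (α - 1)) • (A σ * F σ s))‖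
                    ≤ ‖G t τ * A τ‖ * ‖((τ - σ) ^ (α - 1) * (σ - s) ^ (α - 1)) • (A σ * F σ s)‖ :=
                      norm_mul_le _ _
                  _ = ‖G t τ * A τ‖ *
                      (((τ - σ) ^ (α - 1) * (σ - s) ^ (α - 1)) * ‖A σ * F σ s‖) := by
                      rw [norm_smul ((τ - σ) ^ (α - 1) * (σ - s) ^ (α - 1)) (A σ * F σ s),
                        Real.norm_eq_abs, abs_of_nonneg hb']
                  _ ≤ (Cg * Ca) * (((τ - σ) ^ (α - 1) * (σ - s) ^ (α - 1)) * (Ca * Cf)) := by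
                      apply mul_le_mul hGAτ _ (mul_nonneg hb' (norm_nonneg _))
                        (mul_nonneg hCg0 hCa0)
                      exact mul_le_mul_of_nonneg_left hAFσ hb'
            _ = (CM * (t - τ) ^ (α - 1)) * ((τ - σ) ^ (α - 1) * (σ - s) ^ (α - 1)) := by
                rw [hCMdef]; ring
        · simp only [hfdef, if_neg h]
          rw [Set.indicator_of_notMem (fun hc : σ ∈ Ioo s τ => h hc.2), norm_zero]
      refine hle.trans ?_
      have heval : ∫ σ, (Set.indicator (Ioo s τ)
          (fun σ => (CM * (t - τ) ^ (α - 1)) * ((τ - σ) ^ (α - 1) * (σ - s) ^ (α - 1)))) σ ∂μst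
          = (CM * (t - τ) ^ (α - 1)) * ∫ σ in Ioc s τ, (τ - σ) ^ (α - 1) * (σ - s) ^ (α - 1) := by
        rw [hμst, integral_indicator measurableSet_Ioo,
          Measure.restrict_restrict measurableSet_Ioo,
          Set.inter_eq_self_of_subset_left hsubIoo, ← integral_Ioc_eq_integral_Ioo,
          integral_const_mul]
      rw [heval]
      calc (CM * (t - τ) ^ (α - 1)) * ∫ σ in Ioc s τ, (τ - σ) ^ (α - 1) * (σ - s) ^ (α - 1)
          ≤ (CM * (t - τ) ^ (α - 1)) * (CK * (τ - s) ^ (α - 1 + (α - 1) + 1)) := by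
            refine mul_le_mul_of_nonneg_left (hCK s τ hτ.1) ?_
            exact mul_nonneg hCM0 (Real.rpow_nonneg hτt _)
        _ = (CM * CK) * ((t - τ) ^ (α - 1) * (τ - s) ^ (α - 1 + (α - 1) + 1)) := by ring
  have hfint : Integrable (fun p : ℝ × ℝ => f p.1 p.2) (μst.prod μst) := by
    rw [integrable_prod_iff hfmeas]
    constructor
    · filter_upwards [haeIoo] with τ hτ
      exact hslice τ hτ
    · exact hbint
  have hswap : ∫ τ, (∫ σ, f τ σ ∂μst) ∂μst = ∫ σ, (∫ τ, f τ σ ∂μst) ∂μst :=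
    integral_integral_swap (by exact hfint)
  -- step 1
  have step1 : ∀ᵐ τ ∂μst,
      ((t - τ) ^ (α - 1) * (τ - s) ^ (α - 1)) • (G t τ * (A τ * F τ s))
        - ((Real.Gamma α)⁻¹ * ((t - τ) ^ (α - 1) * (τ - s) ^ (α - 1))) • (G t τ * A τ)
      = (Real.Gamma α)⁻¹ • ∫ σ, f τ σ ∂μst := by
    filter_upwards [haeIoo] with τ hτ
    have hτs : (0:ℝ) < τ - s := by linarith [hτ.1]
    have hR1 : ∫ σ, f τ σ ∂μst = ∫ σ in Ioc s τ, K τ σ := by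
      rw [hindτ τ, hμst, integral_indicator measurableSet_Iio,
        Measure.restrict_restrict measurableSet_Iio, hset1 τ hτ,
        ← integral_Ioc_eq_integral_Ioo]
    have hcomm := (ContinuousLinearMap.mul ℝ
        (EuclideanSpace ℝ (Fin n) →L[ℝ] EuclideanSpace ℝ (Fin n))
        (G t τ * A τ)).integral_comp_comm (hAF_int_sub τ ⟨hτ.1, hτ.2.le⟩)
    simp only [ContinuousLinearMap.mul_apply'] at hcomm
    have hR2 : ∫ σ in Ioc s τ, K τ σ = ((t - τ) ^ (α - 1)) •
        ((G t τ * A τ) *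
          ∫ σ in Ioc s τ, ((τ - σ) ^ (α - 1) * (σ - s) ^ (α - 1)) • (A σ * F σ s)) := by
      simp only [hKdef]
      rw [integral_smul, ← hcomm]
    rw [hR1, hR2, hFeq' τ ⟨hτ.1, hτ.2.le⟩]
    have hone : (τ - s) ^ (α - 1) * (τ - s) ^ (1 - α) = 1 := by
      rw [← Real.rpow_add hτs, show α - 1 + (1 - α) = 0 by ring, Real.rpow_zero]
    have hsc2 : ((t - τ) ^ (α - 1) * (τ - s) ^ (α - 1)) * ((τ - s) ^ (1 - α) / Real.Gamma α)
        = (Real.Gamma α)⁻¹ * (t - τ) ^ (α - 1) := by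
      rw [div_eq_mul_inv]
      linear_combination (Real.Gamma α)⁻¹ * (t - τ) ^ (α - 1) * hone
    simp only [mul_add, mul_one, mul_smul_comm, smul_add, smul_smul]
    rw [mul_comm ((t - τ) ^ (α - 1) * (τ - s) ^ (α - 1)) (Real.Gamma α)⁻¹,
      add_sub_cancel_left, hsc2, ← mul_assoc (G t τ) (A τ)]
  -- step 2
  have step2 : ∀ᵐ σ ∂μst,
      (∫ τ, f τ σ ∂μst)
        = Real.Gamma α • (((t - σ) ^ (α - 1) * (σ - s) ^ (α - 1)) • (G t σ * (A σ * F σ s)))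
          - ((t - σ) ^ (α - 1) * (σ - s) ^ (α - 1)) • (A σ * F σ s) := by
    filter_upwards [haeIoo] with σ hσ
    have hL1 : ∫ τ, f τ σ ∂μst = ∫ τ in Ioc σ t, K τ σ := by
      rw [hindσ σ, hμst, integral_indicator measurableSet_Ioi,
        Measure.restrict_restrict measurableSet_Ioi, hset2 σ hσ]
    have hcomm := ((ContinuousLinearMap.mul ℝ
        (EuclideanSpace ℝ (Fin n) →L[ℝ] EuclideanSpace ℝ (Fin n))).flip
        (A σ * F σ s)).integral_comp_comm (hGA_int_sub σ hσ)
    simp only [ContinuousLinearMap.flip_apply, ContinuousLinearMap.mul_apply'] at hcomm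
    have hL2 : ∫ τ in Ioc σ t, K τ σ = ((σ - s) ^ (α - 1)) •
        ((∫ τ in Ioc σ t, ((t - τ) ^ (α - 1) * (τ - σ) ^ (α - 1)) • (G t τ * A τ)) *
          (A σ * F σ s)) := by
      simp only [hKform2]
      rw [integral_smul, ← hcomm]
    rw [hL1, hL2, hIσ σ ⟨hσ.1.le, hσ.2⟩]
    simp only [sub_mul, smul_mul_assoc, one_mul, smul_sub, smul_smul]
    module
  -- integrate step 1
  have intGA' : Integrable
      (fun τ => ((Real.Gamma α)⁻¹ * ((t - τ) ^ (α - 1) * (τ - s) ^ (α - 1))) • (G t τ * A τ))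
      μst :=
    (intGA.smul ((Real.Gamma α)⁻¹)).congr (ae_of_all _ fun τ => by
      simp [smul_smul])
  have hseq1 : (∫ τ, ((t - τ) ^ (α - 1) * (τ - s) ^ (α - 1)) • (G t τ * (A τ * F τ s)) ∂μst)
      - (Real.Gamma α)⁻¹ • (∫ τ, ((t - τ) ^ (α - 1) * (τ - s) ^ (α - 1)) • (G t τ * A τ) ∂μst)
      = (Real.Gamma α)⁻¹ • ∫ τ, (∫ σ, f τ σ ∂μst) ∂μst := by
    have h := integral_congr_ae step1
    rw [integral_sub intPhi intGA', integral_smul] at h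
    have h2 : ∫ τ, ((Real.Gamma α)⁻¹ * ((t - τ) ^ (α - 1) * (τ - s) ^ (α - 1))) • (G t τ * A τ) ∂μst
        = (Real.Gamma α)⁻¹ • ∫ τ, ((t - τ) ^ (α - 1) * (τ - s) ^ (α - 1)) • (G t τ * A τ) ∂μst := by
      rw [← integral_smul]
      apply integral_congr_ae
      exact ae_of_all _ fun τ => by simp only [smul_smul]
    rw [h2] at h
    exact h
  -- integrate step 2
  have intPhi' : Integrable
      (fun σ => Real.Gamma α •
        (((t - σ) ^ (α - 1) * (σ - s) ^ (α - 1)) • (G t σ * (A σ * F σ s)))) μst :=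
    (intPhi.smul (Real.Gamma α)).congr (ae_of_all _ fun σ => by simp)
  have hseq2 : ∫ σ, (∫ τ, f τ σ ∂μst) ∂μst
      = Real.Gamma α •
          (∫ σ, ((t - σ) ^ (α - 1) * (σ - s) ^ (α - 1)) • (G t σ * (A σ * F σ s)) ∂μst)
        - ∫ σ, ((t - σ) ^ (α - 1) * (σ - s) ^ (α - 1)) • (A σ * F σ s) ∂μst := by
    have h := integral_congr_ae step2
    rw [integral_sub intPhi' intAF, integral_smul] at h
    exact h
  -- combine
  have hcomb := hseq1
  rw [hswap, hseq2] at hcomb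
  have hred : (Real.Gamma α)⁻¹ • (Real.Gamma α •
      (∫ σ, ((t - σ) ^ (α - 1) * (σ - s) ^ (α - 1)) • (G t σ * (A σ * F σ s)) ∂μst)
      - ∫ σ, ((t - σ) ^ (α - 1) * (σ - s) ^ (α - 1)) • (A σ * F σ s) ∂μst)
      = (∫ σ, ((t - σ) ^ (α - 1) * (σ - s) ^ (α - 1)) • (G t σ * (A σ * F σ s)) ∂μst)
        - (Real.Gamma α)⁻¹ •
          ∫ σ, ((t - σ) ^ (α - 1) * (σ - s) ^ (α - 1)) • (A σ * F σ s) ∂μst := by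
    rw [smul_sub, smul_smul, inv_mul_cancel₀ hΓ', one_smul]
  rw [hred] at hcomb
  have hfin : (Real.Gamma α)⁻¹ • (∫ τ, ((t - τ) ^ (α - 1) * (τ - s) ^ (α - 1)) • (G t τ * A τ) ∂μst)
      = (Real.Gamma α)⁻¹ • ∫ σ, ((t - σ) ^ (α - 1) * (σ - s) ^ (α - 1)) • (A σ * F σ s) ∂μst :=
    sub_right_injective hcomb
  have hIgIf : (∫ τ, ((t - τ) ^ (α - 1) * (τ - s) ^ (α - 1)) • (G t τ * A τ) ∂μst)
      = ∫ σ, ((t - σ) ^ (α - 1) * (σ - s) ^ (α - 1)) • (A σ * F σ s) ∂μst :=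
    smul_right_injective _ (inv_ne_zero hΓ') hfin
  rw [hGeq t ⟨hts, htθ⟩ s ⟨hs, hst⟩, hFeq s ⟨hs, hsθ⟩ t ⟨hst, htθ⟩,
    intervalIntegral.integral_of_le hst, intervalIntegral.integral_of_le hst, ← hμst, hIgIf]
end

section
/- Let α ∈ (0,1), t₀ < t* < θ, and φ ∈ L^∞([t₀,t*], ℝⁿ). Define ψ(t) = (sin(απ)/π) ∫_{t₀}^{t*} (t*−τ)^α φ(τ)/(t−τ) dτ for t ∈ [t*,θ]. Then ψ is continuous on [t*,θ] and, for every t ∈ (t*,θ], the identity ∫_{t₀}^{t*} φ(τ)/(t−τ)^{1−α} dτ = ∫_{t*}^{t} ψ(τ)/((t−τ)^{1−α}(τ−t*)^α) dτ holds. -/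
open MeasureTheory Set Real intervalIntegral
open scoped ENNReal NNReal


lemma beta_real {α : ℝ} (h0 : 0 < α) (h1 : α < 1) :
    ∫ x in (0:ℝ)..1, x ^ (-α) * (1 - x) ^ (α - 1) = π / Real.sin (π * α) := by
  have hsin : Real.sin (π * α) ≠ 0 := by
    have := Real.sin_pos_of_pos_of_lt_pi (x := π * α) (by positivity)
      (by nlinarith [Real.pi_pos])
    linarith
  have hb : Complex.betaIntegral (1 - α) α = ((π / Real.sin (π * α) : ℝ) : ℂ) := by
    have h₁ : Complex.Gamma (1 - α) * Complex.Gamma α =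
        Complex.Gamma 1 * Complex.betaIntegral (1 - α) α := by
      have := Complex.Gamma_mul_Gamma_eq_betaIntegral
        (s := (1 - α : ℂ)) (t := (α : ℂ)) ?_ ?_
      · simpa using this
      · simp [Complex.sub_re]; linarith
      · simpa using h0
    have h₂ : Complex.Gamma (α : ℂ) * Complex.Gamma (1 - (α:ℂ)) =
        (π : ℂ) / Complex.sin (π * α) := Complex.Gamma_mul_Gamma_one_sub _
    rw [Complex.Gamma_one, one_mul] at h₁
    rw [← h₁, mul_comm, h₂]
    push_cast [Complex.ofReal_sin]
    rfl
  have hb2 : Complex.betaIntegral (1 - α) α =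
      ((∫ x in (0:ℝ)..1, x ^ (-α) * (1 - x) ^ (α - 1) : ℝ) : ℂ) := by
    rw [Complex.betaIntegral, ← intervalIntegral.integral_ofReal]
    refine intervalIntegral.integral_congr fun x hx => ?_
    rw [uIcc_of_le zero_le_one] at hx
    have e1 : (1 - (α:ℂ) - 1) = ((-α : ℝ) : ℂ) := by push_cast; ring
    have e2 : ((α:ℂ) - 1) = ((α - 1 : ℝ) : ℂ) := by push_cast; ring
    rw [e1, e2, ← Complex.ofReal_one, ← Complex.ofReal_sub,
      ← Complex.ofReal_cpow hx.1, ← Complex.ofReal_cpow (by linarith [hx.2] : (0:ℝ) ≤ 1 - x)]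
    push_cast
    ring_nf
  have := hb.symm.trans hb2
  exact_mod_cast (Complex.ofReal_injective this).symm

lemma key_integral {α a b c : ℝ} (h0 : 0 < α) (h1 : α < 1) (hca : c < a) (hab : a < b)
    (hbeta : ∫ x in Ioo (0:ℝ) 1, x ^ (-α) * (1 - x) ^ (α - 1) = π / Real.sin (π * α)) :
    ∫ τ in Ioo a b, (b - τ) ^ (α - 1) * ((τ - a) ^ (-α) * (τ - c)⁻¹)
      = (π / Real.sin (π * α)) * ((b - c) ^ (α - 1) * (a - c) ^ (-α)) := by
  set v : ℝ → ℝ := fun τ => ((b - c) * (τ - a)) / ((b - a) * (τ - c)) with hv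
  set v' : ℝ → ℝ := fun τ => ((b - c) * (a - c)) / ((b - a) * (τ - c) ^ 2) with hv'
  have hac : (0:ℝ) < a - c := by linarith
  have hba : (0:ℝ) < b - a := by linarith
  have hbc : (0:ℝ) < b - c := by linarith
  -- strict monotonicity on Icc a b
  have hmono : StrictMonoOn v (Icc a b) := by
    intro x hx y hy hxy
    have hxc : (0:ℝ) < x - c := by have := hx.1; linarith
    have hyc : (0:ℝ) < y - c := by have := hy.1; linarith
    simp only [hv]
    rw [div_lt_div_iff₀ (by positivity) (by positivity)]
    nlinarith [mul_pos (mul_pos hbc hba) (mul_pos (sub_pos.mpr hxy) hac)]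
  -- derivative
  have hderiv : ∀ τ ∈ Ioo a b, HasDerivWithinAt v (v' τ) (Ioo a b) τ := by
    intro τ hτ
    have hτc : (0:ℝ) < τ - c := by have := hτ.1; linarith
    have h : HasDerivAt v (v' τ) τ := by
      have hnum : HasDerivAt (fun τ : ℝ => (b - c) * (τ - a)) (b - c) τ := by
        simpa using ((hasDerivAt_id τ).sub_const a).const_mul (b - c)
      have hden : HasDerivAt (fun τ : ℝ => (b - a) * (τ - c)) (b - a) τ := by
        simpa using ((hasDerivAt_id τ).sub_const c).const_mul (b - a)
      have := hnum.div hden (by positivity)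
      refine this.congr_deriv ?_
      simp only [hv']
      field_simp
      ring
    exact h.hasDerivWithinAt
  -- endpoint values
  have hva : v a = 0 := by simp [hv]
  have hvb : v b = 1 := by
    simp only [hv]; rw [div_eq_one_iff_eq (by positivity)]; ring
  -- continuity on Icc
  have hcont : ContinuousOn v (Icc a b) := by
    apply ContinuousOn.div (by fun_prop) (by fun_prop)
    intro x hx
    have : (0:ℝ) < x - c := by have := hx.1; linarith
    positivity
  -- image
  have himg : v '' Ioo a b = Ioo 0 1 := by
    apply Subset.antisymm
    · have := hmono.image_Ioo_subset
      rwa [hva, hvb] at this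
    · rw [← hva, ← hvb]
      exact intermediate_value_Ioo hab.le hcont
  -- change of variables
  have hcov := integral_image_eq_integral_abs_deriv_smul (f := v) (f' := v')
    measurableSet_Ioo hderiv (hmono.injOn.mono Ioo_subset_Icc_self)
    (fun x => x ^ (-α) * (1 - x) ^ (α - 1))
  rw [himg, hbeta] at hcov
  -- pointwise identity
  have hpt : ∀ τ ∈ Ioo a b, |v' τ| • ((v τ) ^ (-α) * (1 - v τ) ^ (α - 1))
      = ((b - c) ^ (1 - α) * (a - c) ^ α) *
        ((b - τ) ^ (α - 1) * ((τ - a) ^ (-α) * (τ - c)⁻¹)) := by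
    intro τ hτ
    have hτa : (0:ℝ) < τ - a := by have := hτ.1; linarith
    have hbτ : (0:ℝ) < b - τ := by have := hτ.2; linarith
    have hτc : (0:ℝ) < τ - c := by linarith
    have hvpos : 0 < v τ := by simp only [hv]; positivity
    have h1v : 1 - v τ = ((a - c) * (b - τ)) / ((b - a) * (τ - c)) := by
      simp only [hv]; field_simp; ring
    have habs : |v' τ| = v' τ := abs_of_pos (by simp only [hv']; positivity)
    rw [habs, h1v, smul_eq_mul]
    simp only [hv, hv']
    rw [Real.div_rpow (by positivity) (by positivity),
        Real.div_rpow (by positivity) (by positivity),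
        Real.mul_rpow (le_of_lt hbc) (le_of_lt hτa),
        Real.mul_rpow (le_of_lt hba) (le_of_lt hτc),
        Real.mul_rpow (le_of_lt hac) (le_of_lt hbτ),
        Real.mul_rpow (le_of_lt hba) (le_of_lt hτc)]
    have r1 : ∀ x : ℝ, 0 < x → x ^ (α - 1) = x ^ α / x := fun x hx =>
      Real.rpow_sub_one hx.ne' α
    have r2 : ∀ x : ℝ, 0 < x → x ^ (-α) = (x ^ α)⁻¹ := fun x hx =>
      Real.rpow_neg hx.le α
    have r3 : ∀ x : ℝ, 0 < x → x ^ (1 - α) = x / x ^ α := fun x hx => by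
      rw [Real.rpow_sub hx, Real.rpow_one]
    rw [r1 _ hac, r1 _ hbτ, r1 _ hba, r1 _ hτc,
        r2 _ hbc, r2 _ hτa, r2 _ hba, r2 _ hτc, r3 _ hbc]
    have p1 := Real.rpow_pos_of_pos hbc α
    have p2 := Real.rpow_pos_of_pos hτa α
    have p3 := Real.rpow_pos_of_pos hba α
    have p4 := Real.rpow_pos_of_pos hτc α
    have p5 := Real.rpow_pos_of_pos hac α
    have p6 := Real.rpow_pos_of_pos hbτ α
    field_simp
  rw [MeasureTheory.setIntegral_congr_fun measurableSet_Ioo hpt] at hcov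
  rw [MeasureTheory.integral_const_mul] at hcov
  -- solve for the integral
  have hK1 : ((b - c) ^ (α - 1) * (a - c) ^ (-α)) * ((b - c) ^ (1 - α) * (a - c) ^ α) = 1 := by
    rw [mul_mul_mul_comm, ← Real.rpow_add hbc, ← Real.rpow_add hac]
    norm_num
  have h2 : (∫ τ in Ioo a b, (b - τ) ^ (α - 1) * ((τ - a) ^ (-α) * (τ - c)⁻¹))
      = ((b - c) ^ (α - 1) * (a - c) ^ (-α)) * (((b - c) ^ (1 - α) * (a - c) ^ α) *
        ∫ τ in Ioo a b, (b - τ) ^ (α - 1) * ((τ - a) ^ (-α) * (τ - c)⁻¹)) := by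
    rw [← mul_assoc, hK1, one_mul]
  rw [h2, ← hcov, mul_comm]

lemma integrableOn_two_rpow {a b p q : ℝ} (hab : a < b) (hp : -1 < p) (hq : -1 < q) :
    IntegrableOn (fun τ => (b - τ) ^ p * (τ - a) ^ q) (Ioo a b) := by
  set m := (a + b) / 2 with hm
  have ham : a < m := by rw [hm]; linarith
  have hmb : m < b := by rw [hm]; linarith
  have h1 : IntervalIntegrable (fun τ : ℝ => (τ - a) ^ q) volume a m := by
    have := (intervalIntegrable_rpow' (a := 0) (b := m - a) hq).comp_sub_right a
    simpa using this
  have h2 : IntervalIntegrable (fun τ : ℝ => (b - τ) ^ p * (τ - a) ^ q) volume a m := by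
    apply h1.continuousOn_mul
    apply ContinuousOn.rpow_const (by fun_prop)
    intro x hx
    rw [uIcc_of_le ham.le] at hx
    left
    have : x < b := lt_of_le_of_lt hx.2 hmb
    intro h; linarith [sub_eq_zero.mp h]
  have h3 : IntervalIntegrable (fun τ : ℝ => (b - τ) ^ p) volume m b := by
    have := (intervalIntegrable_rpow' (a := 0) (b := b - m) hp).comp_sub_left b
    simpa using this.symm
  have h4 : IntervalIntegrable (fun τ : ℝ => (b - τ) ^ p * (τ - a) ^ q) volume m b := by
    apply h3.mul_continuousOn
    apply ContinuousOn.rpow_const (by fun_prop)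
    intro x hx
    rw [uIcc_of_le hmb.le] at hx
    left
    have : a < x := lt_of_lt_of_le ham hx.1
    intro h; linarith [sub_eq_zero.mp h]
  have i1 : IntegrableOn (fun τ : ℝ => (b - τ) ^ p * (τ - a) ^ q) (Ioc a m) :=
    (intervalIntegrable_iff_integrableOn_Ioc_of_le ham.le).mp h2
  have i2 : IntegrableOn (fun τ : ℝ => (b - τ) ^ p * (τ - a) ^ q) (Ioc m b) :=
    (intervalIntegrable_iff_integrableOn_Ioc_of_le hmb.le).mp h4
  refine (i1.union i2).mono_set ?_
  rw [Ioc_union_Ioc_eq_Ioc ham.le hmb.le]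
  exact Ioo_subset_Ioc_self


/-- For `φ ∈ L^∞([t₀,t*],ℝⁿ)` and
`ψ(t) = (sin(απ)/π) ∫_{t₀}^{t*} (t*-τ)^α (t-τ)⁻¹ φ(τ) dτ`, the function `ψ` is
continuous on `[t*,θ]`, and for every `t ∈ (t*,θ]`,
`∫_{t₀}^{t*} (t-τ)^{α-1} φ(τ) dτ = ∫_{t*}^{t} (t-τ)^{α-1}(τ-t*)^{-α} ψ(τ) dτ`. -/
theorem continuation_lemma_identity
    (n : ℕ) (α t₀ tst θ : ℝ) (hα : α ∈ Set.Ioo (0 : ℝ) 1)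
    (h₁ : t₀ < tst) (h₂ : tst < θ)
    (φ : ℝ → EuclideanSpace ℝ (Fin n)) (hφm : Measurable φ)
    (hφb : eLpNorm φ ⊤ (volume.restrict (Set.Icc t₀ tst)) < ⊤)
    (ψ : ℝ → EuclideanSpace ℝ (Fin n))
    (hψ : ∀ t ∈ Set.Icc tst θ,
      ψ t = (Real.sin (α * π) / π) •
        ∫ τ in t₀..tst, ((tst - τ) ^ α / (t - τ)) • φ τ) :
    ContinuousOn ψ (Set.Icc tst θ) ∧
    ∀ t ∈ Set.Ioc tst θ,
      (∫ τ in t₀..tst, ((t - τ) ^ (α - 1)) • φ τ)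
        = ∫ τ in tst..t, ((t - τ) ^ (α - 1) * (τ - tst) ^ (-α)) • ψ τ := by
  obtain ⟨hα0, hα1⟩ := hα
  have hsin : 0 < Real.sin (π * α) :=
    Real.sin_pos_of_pos_of_lt_pi (by positivity) (by nlinarith [Real.pi_pos])
  have hbeta : ∫ x in Ioo (0:ℝ) 1, x ^ (-α) * (1 - x) ^ (α - 1) = π / Real.sin (π * α) := by
    rw [← MeasureTheory.integral_Ioc_eq_integral_Ioo,
      ← intervalIntegral.integral_of_le zero_le_one]
    exact beta_real hα0 hα1
  -- replace φ by a globally bounded function φ'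
  set μ := volume.restrict (Set.Icc t₀ tst) with hμ
  set M := (eLpNorm φ ⊤ μ).toReal with hM
  have hM0 : 0 ≤ M := ENNReal.toReal_nonneg
  set E := {σ : ℝ | ‖φ σ‖ ≤ M} with hE
  have hEm : MeasurableSet E := measurableSet_le hφm.norm measurable_const
  set φ' := E.indicator φ with hφ'
  have hφ'm : Measurable φ' := hφm.indicator hEm
  have hφ'b : ∀ σ, ‖φ' σ‖ ≤ M := by
    intro σ
    by_cases h : σ ∈ E
    · rw [hφ', indicator_of_mem h]; exact h
    · rw [hφ', indicator_of_notMem h]; simpa using hM0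
  have hae : ∀ᵐ σ ∂μ, φ' σ = φ σ := by
    have h1 : ∀ᵐ σ ∂μ, (‖φ σ‖₊ : ℝ≥0∞) ≤ eLpNormEssSup φ μ := ae_le_eLpNormEssSup
    filter_upwards [h1] with σ hσ
    have hmem : σ ∈ E := by
      rw [hE]
      simp only [mem_setOf_eq]
      have : (‖φ σ‖₊ : ℝ≥0∞).toReal ≤ M := by
        rw [hM, MeasureTheory.eLpNorm_exponent_top]
        exact ENNReal.toReal_mono (by rw [← MeasureTheory.eLpNorm_exponent_top]; exact hφb.ne) hσ
      simpa using this
    rw [hφ', indicator_of_mem hmem]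
  -- reformulation of ψ
  have key : ∀ t ∈ Set.Icc tst θ, ψ t = (Real.sin (α * π) / π) •
      ∫ σ in Ioc t₀ tst, ((tst - σ) ^ α / (t - σ)) • φ' σ := by
    intro t ht
    rw [hψ t ht, intervalIntegral.integral_of_le h₁.le]
    congr 1
    refine MeasureTheory.integral_congr_ae ?_
    have := ae_restrict_of_ae_restrict_of_subset Ioc_subset_Icc_self hae
    filter_upwards [this] with σ hσ
    rw [hσ]
  constructor
  · -- continuity
    have hFcont : ContinuousOn (fun t => (Real.sin (α * π) / π) •
        ∫ σ in Ioc t₀ tst, ((tst - σ) ^ α / (t - σ)) • φ' σ) (Set.Icc tst θ) := by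
      refine ContinuousOn.const_smul (g := fun t => ∫ σ in Ioc t₀ tst, ((tst - σ) ^ α / (t - σ)) • φ' σ) ?_ (Real.sin (α * π) / π)
      apply MeasureTheory.continuousOn_of_dominated
        (bound := fun σ => M * (tst - σ) ^ (α - 1))
      · intro t _
        apply Measurable.aestronglyMeasurable
        exact (Measurable.div (f := fun σ : ℝ => (tst - σ) ^ α) (g := fun σ : ℝ => t - σ) (by fun_prop) (by fun_prop)).smul hφ'm
      · intro t ht
        refine (ae_restrict_iff' measurableSet_Ioc).mpr (Filter.Eventually.of_forall ?_)
        intro σ hσ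
        rcases eq_or_lt_of_le hσ.2 with h | h
        · rw [h]
          simp [Real.zero_rpow hα0.ne', Real.zero_rpow (by linarith : α - 1 ≠ 0)]
        · have hp1 : (0:ℝ) < tst - σ := by linarith
          have hp2 : (0:ℝ) < t - σ := by have := ht.1; linarith
          rw [norm_smul, Real.norm_eq_abs, abs_of_nonneg (by positivity)]
          calc (tst - σ) ^ α / (t - σ) * ‖φ' σ‖
              ≤ (tst - σ) ^ α / (tst - σ) * M := by
                apply mul_le_mul _ (hφ'b σ) (norm_nonneg _) (by positivity)
                apply div_le_div_of_nonneg_left (by positivity) hp1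
                have := ht.1; linarith
            _ = M * (tst - σ) ^ (α - 1) := by
                rw [← Real.rpow_sub_one hp1.ne']; ring
      · have hi : IntegrableOn (fun σ : ℝ => (tst - σ) ^ (α - 1) * (σ - t₀) ^ (0:ℝ))
            (Ioo t₀ tst) := integrableOn_two_rpow h₁ (by linarith) (by norm_num)
        simp only [Real.rpow_zero, mul_one] at hi
        exact (hi.congr_set_ae (Ioo_ae_eq_Ioc (a := t₀) (b := tst)).symm).const_mul M
      · refine (ae_restrict_iff' measurableSet_Ioc).mpr (Filter.Eventually.of_forall ?_)
        intro σ hσ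
        rcases eq_or_lt_of_le hσ.2 with h | h
        · rw [h]
          have : (fun t : ℝ => ((tst - tst) ^ α / (t - tst)) • φ' tst)
              = fun _ : ℝ => (0 : EuclideanSpace ℝ (Fin n)) := by
            funext t
            simp [Real.zero_rpow hα0.ne']
          rw [this]
          exact continuousOn_const
        · apply ContinuousOn.smul (f := fun x : ℝ => (tst - σ) ^ α / (x - σ)) _ continuousOn_const
          apply ContinuousOn.div continuousOn_const (by fun_prop)
          intro t ht
          have := ht.1
          have : (0:ℝ) < t - σ := by linarith
          exact this.ne'
    exact hFcont.congr key
  · -- identity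
    intro t ht
    set c₀ := Real.sin (α * π) / π with hc₀
    have htt : tst < t := ht.1
    have htθ : t ≤ θ := ht.2
    set K : ℝ → ℝ → ℝ := fun τ σ =>
      ((t - τ) ^ (α - 1) * ((τ - tst) ^ (-α) * (τ - σ)⁻¹)) * (tst - σ) ^ α with hK
    have step1 : (∫ τ in tst..t, ((t - τ) ^ (α - 1) * (τ - tst) ^ (-α)) • ψ τ)
        = c₀ • ∫ τ in Ioo tst t, ∫ σ in Ioo t₀ tst, K τ σ • φ' σ := by
      rw [intervalIntegral.integral_of_le htt.le, MeasureTheory.integral_Ioc_eq_integral_Ioo,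
        ← MeasureTheory.integral_smul]
      refine MeasureTheory.setIntegral_congr_fun measurableSet_Ioo ?_
      intro τ hτ
      dsimp only
      have hτIcc : τ ∈ Set.Icc tst θ := ⟨hτ.1.le, le_trans hτ.2.le htθ⟩
      rw [key τ hτIcc, MeasureTheory.integral_Ioc_eq_integral_Ioo, smul_comm]
      congr 1
      rw [← MeasureTheory.integral_smul]
      refine MeasureTheory.integral_congr_ae (Filter.Eventually.of_forall fun σ => ?_)
      dsimp only
      rw [smul_smul]
      congr 1
      simp only [hK]
      ring
    have hg₁ : Integrable (fun τ => (t - τ) ^ (α - 1) * (τ - tst) ^ (-α))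
        (volume.restrict (Ioo tst t)) := integrableOn_two_rpow htt (by linarith) (by linarith)
    have hg₂ : Integrable (fun σ => M * (tst - σ) ^ (α - 1))
        (volume.restrict (Ioo t₀ tst)) := by
      have hi : IntegrableOn (fun σ : ℝ => (tst - σ) ^ (α - 1) * (σ - t₀) ^ (0:ℝ))
          (Ioo t₀ tst) := integrableOn_two_rpow h₁ (by linarith) (by norm_num)
      simp only [Real.rpow_zero, mul_one] at hi
      exact hi.const_mul M
    have hint : Integrable (Function.uncurry fun τ σ => K τ σ • φ' σ)
        ((volume.restrict (Ioo tst t)).prod (volume.restrict (Ioo t₀ tst))) := by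
      apply MeasureTheory.Integrable.mono' (hg₁.mul_prod hg₂)
      · apply Measurable.aestronglyMeasurable
        apply Measurable.smul (f := fun p : ℝ × ℝ => K p.1 p.2) _ (hφ'm.comp measurable_snd)
        simp only [hK, Function.uncurry]
        fun_prop
      · rw [Measure.prod_restrict]
        refine (ae_restrict_iff' (measurableSet_Ioo.prod measurableSet_Ioo)).mpr
          (Filter.Eventually.of_forall ?_)
        rintro ⟨τ, σ⟩ ⟨hτ, hσ⟩
        simp only [Function.uncurry]
        have hA : (0:ℝ) < t - τ := by have := hτ.2; simp at this ⊢; linarith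
        have hB : (0:ℝ) < τ - tst := by have := hτ.1; simp at this ⊢; linarith
        have hC : (0:ℝ) < tst - σ := by have := hσ.2; simp at this ⊢; linarith
        have hD : (0:ℝ) < τ - σ := by linarith
        have hK0 : 0 ≤ K τ σ := by
          simp only [hK]
          positivity
        have hP0 : 0 ≤ (t - τ) ^ (α - 1) * (τ - tst) ^ (-α) := by positivity
        have hsub : (τ - σ)⁻¹ * (tst - σ) ^ α ≤ (tst - σ) ^ (α - 1) := by
          rw [Real.rpow_sub_one hC.ne']
          calc (τ - σ)⁻¹ * (tst - σ) ^ α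
              ≤ (tst - σ)⁻¹ * (tst - σ) ^ α := by
                apply mul_le_mul_of_nonneg_right _ (Real.rpow_nonneg hC.le α)
                apply inv_anti₀ hC
                linarith
            _ = (tst - σ) ^ α / (tst - σ) := by rw [mul_comm, div_eq_mul_inv]
        rw [norm_smul, Real.norm_eq_abs, abs_of_nonneg hK0]
        calc K τ σ * ‖φ' σ‖
            ≤ K τ σ * M := mul_le_mul_of_nonneg_left (hφ'b σ) hK0
          _ = ((t - τ) ^ (α - 1) * (τ - tst) ^ (-α) * M) * ((τ - σ)⁻¹ * (tst - σ) ^ α) := by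
              simp only [hK]; ring
          _ ≤ ((t - τ) ^ (α - 1) * (τ - tst) ^ (-α) * M) * (tst - σ) ^ (α - 1) :=
              mul_le_mul_of_nonneg_left hsub (mul_nonneg hP0 hM0)
          _ = (t - τ) ^ (α - 1) * (τ - tst) ^ (-α) * (M * (tst - σ) ^ (α - 1)) := by ring
    have step3 : ∀ σ ∈ Ioo t₀ tst, (∫ τ in Ioo tst t, K τ σ • φ' σ)
        = ((π / Real.sin (π * α)) * (t - σ) ^ (α - 1)) • φ' σ := by
      intro σ hσ
      rw [_root_.integral_smul_const]
      congr 1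
      have hC : (0:ℝ) < tst - σ := by linarith [hσ.2]
      have : (∫ τ in Ioo tst t, K τ σ)
          = (∫ τ in Ioo tst t,
              (t - τ) ^ (α - 1) * ((τ - tst) ^ (-α) * (τ - σ)⁻¹)) * (tst - σ) ^ α := by
        simp only [hK]
        rw [MeasureTheory.integral_mul_const]
      rw [this, key_integral hα0 hα1 hσ.2 htt hbeta, mul_assoc, mul_assoc,
        ← Real.rpow_add hC]
      norm_num
    calc (∫ τ in t₀..tst, (t - τ) ^ (α - 1) • φ τ)
        = ∫ σ in Ioo t₀ tst, (t - σ) ^ (α - 1) • φ' σ := by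
          rw [intervalIntegral.integral_of_le h₁.le, MeasureTheory.integral_Ioc_eq_integral_Ioo]
          refine MeasureTheory.integral_congr_ae ?_
          have := ae_restrict_of_ae_restrict_of_subset
            (Ioo_subset_Icc_self : Ioo t₀ tst ⊆ Icc t₀ tst) hae
          filter_upwards [this] with σ hσ
          rw [hσ]
      _ = c₀ • ∫ σ in Ioo t₀ tst, ((π / Real.sin (π * α)) * (t - σ) ^ (α - 1)) • φ' σ := by
          have hone : c₀ * (π / Real.sin (π * α)) = 1 := by
            rw [hc₀, mul_comm α π]
            field_simp
          rw [← MeasureTheory.integral_smul]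
          refine MeasureTheory.integral_congr_ae (Filter.Eventually.of_forall fun σ => ?_)
          dsimp only
          rw [smul_smul, ← mul_assoc, hone, one_mul]
      _ = c₀ • ∫ σ in Ioo t₀ tst, ∫ τ in Ioo tst t, K τ σ • φ' σ := by
          congr 1
          exact (MeasureTheory.setIntegral_congr_fun measurableSet_Ioo step3).symm
      _ = c₀ • ∫ τ in Ioo tst t, ∫ σ in Ioo t₀ tst, K τ σ • φ' σ := by
          rw [MeasureTheory.integral_integral_swap hint]
      _ = ∫ τ in tst..t, ((t - τ) ^ (α - 1) * (τ - tst) ^ (-α)) • ψ τ := step1.symm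
end

section
/- Let α ∈ (0,1), t₀ < t* < θ, φ ∈ L^∞([t₀,t*], ℝⁿ), and set x(t) = (1/Γ(α)) ∫_{t₀}^t φ(τ)/(t−τ)^{1−α} dτ for t ∈ [t₀,t*]. Define ψ(t) = (sin(απ)/π) ∫_{t₀}^{t*} (t*−τ)^α φ(τ)/(t−τ) dτ for t ∈ [t*,θ]. Then for every t ∈ (t*,θ], ψ(t) = ((t−t*)^α α / Γ(1−α)) ∫_{t₀}^{t*} x(τ)/(t−τ)^{1+α} dτ. -/
open MeasureTheory Set Real

set_option maxHeartbeats 1000000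

section AuxiliaryLemmas
open intervalIntegral


lemma kint (α t s b : ℝ) (hα : α ∈ Set.Ioo (0:ℝ) 1) (hsb : s ≤ b) (hbt : b < t) :
    IntervalIntegrable (fun τ => (τ - s) ^ (α-1) * (t - τ) ^ (-(1+α))) volume s b := by
  have h1 : IntervalIntegrable (fun τ => (τ - s) ^ (α-1)) volume s b := by
    have := (intervalIntegrable_rpow' (a := s - s) (b := b - s) (r := α - 1) (by linarith [hα.1])).comp_sub_right s
    simpa using this
  apply h1.mul_continuousOn
  apply ContinuousOn.rpow_const
  · exact (continuous_const.sub continuous_id).continuousOn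
  · intro τ hτ
    rw [uIcc_of_le hsb] at hτ
    left; nlinarith [hτ.2]

lemma ftc_kernel (α t s b : ℝ) (hα : α ∈ Set.Ioo (0:ℝ) 1) (hsb : s < b) (hbt : b < t) :
    ∫ τ in s..b, (τ - s) ^ (α-1) * (t - τ) ^ (-(1+α))
      = (b-s) ^ α * (t-b) ^ (-α) / (α * (t-s)) := by
  obtain ⟨hα0, hα1⟩ := hα
  have key := intervalIntegral.integral_eq_sub_of_hasDerivAt_of_le hsb.le
    (f := fun τ => (τ-s) ^ α * (t-τ) ^ (-α) / (α * (t-s)))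
    (f' := fun τ => (τ-s) ^ (α-1) * (t-τ) ^ (-(1+α)))
    ?_ ?_ (kint α t s b ⟨hα0, hα1⟩ hsb.le hbt)
  · rw [key]; norm_num [Real.zero_rpow hα0.ne']
  · -- continuity
    apply ContinuousOn.div_const
    apply ContinuousOn.mul
    · intro τ _
      exact (Real.continuousAt_rpow_const _ _ (Or.inr hα0.le)).comp
        ((continuous_id.sub continuous_const).continuousAt) |>.continuousWithinAt
    · apply ContinuousOn.rpow_const ((continuous_const.sub continuous_id).continuousOn)
      intro τ hτ; left; intro h; simp only [Pi.sub_apply, id_eq] at h; linarith [hτ.2]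
  · intro τ hτ
    obtain ⟨h1, h2⟩ := hτ
    have ha : (0:ℝ) < τ - s := by linarith
    have hb : (0:ℝ) < t - τ := by linarith
    have d1 : HasDerivAt (fun τ => (τ-s) ^ α) (α * (τ-s) ^ (α-1)) τ := by
      have := (Real.hasDerivAt_rpow_const (x := τ - s) (p := α) (Or.inl ha.ne')).comp τ
        ((hasDerivAt_id τ).sub_const s)
      simpa [Function.comp_def] using this
    have d2 : HasDerivAt (fun τ => (t-τ) ^ (-α)) (α * (t-τ) ^ (-α-1)) τ := by
      have := (Real.hasDerivAt_rpow_const (x := t - τ) (p := -α) (Or.inl hb.ne')).comp τ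
        ((hasDerivAt_id τ).const_sub t)
      refine this.congr_deriv ?_
      ring
    have := ((d1.mul d2).div_const (α * (t-s)))
    refine this.congr_deriv ?_
    symm
    have e1 : (τ-s) ^ α = (τ-s) ^ (α-1) * (τ-s) := by
      rw [← Real.rpow_add_one ha.ne']; ring_nf
    have e2 : (t-τ) ^ (-α) = (t-τ) ^ (-α-1) * (t-τ) := by
      rw [← Real.rpow_add_one hb.ne']; ring_nf
    have e3 : (-(1+α)) = -α - 1 := by ring
    rw [e3, e1, e2, eq_div_iff (mul_ne_zero hα0.ne' (by linarith : (0:ℝ) < t - s).ne')]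
    ring


variable {n : ℕ}

lemma fubini_step (n : ℕ) (α t₀ tst t M : ℝ) (hα : α ∈ Set.Ioo (0:ℝ) 1)
    (h₁ : t₀ < tst) (ht : tst < t)
    (φ : ℝ → EuclideanSpace ℝ (Fin n)) (hφm : Measurable φ) (hb : ∀ s, ‖φ s‖ ≤ M) :
    ∫ τ in Set.Ioc t₀ tst, ((t - τ) ^ (-(1+α))) • (∫ s in Set.Ioc t₀ τ, ((τ - s) ^ (α-1)) • φ s)
      = ∫ s in Set.Ioc t₀ tst,
          (∫ τ in Set.Ioc s tst, (τ - s) ^ (α-1) * (t - τ) ^ (-(1+α))) • φ s := by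
  obtain ⟨hα0, hα1⟩ := hα
  set μ : Measure ℝ := volume.restrict (Set.Ioc t₀ tst) with hμ
  haveI : IsFiniteMeasure μ := ⟨by rw [Measure.restrict_apply_univ]; exact measure_Ioc_lt_top⟩
  set S : Set (ℝ × ℝ) := {q : ℝ × ℝ | q.2 < q.1} with hS
  have hSm : MeasurableSet S := measurableSet_lt measurable_snd measurable_fst
  set F : ℝ × ℝ → EuclideanSpace ℝ (Fin n) :=
    fun p => S.indicator (fun p => ((p.1 - p.2) ^ (α-1) * (t - p.1) ^ (-(1+α))) • φ p.2) p with hF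
  set H : ℝ × ℝ → ℝ := fun p => S.indicator (fun p => (p.1 - p.2) ^ (α-1)) p with hH
  have hM0 : 0 ≤ M := le_trans (norm_nonneg (φ 0)) (hb 0)
  have hkm : Measurable fun p : ℝ × ℝ => (p.1 - p.2) ^ (α-1) * (t - p.1) ^ (-(1+α)) := by
    measurability
  have hFsm : StronglyMeasurable F := by
    apply StronglyMeasurable.indicator _ hSm
    exact (hkm.stronglyMeasurable).smul (hφm.comp measurable_snd).stronglyMeasurable
  have hHsm : StronglyMeasurable H := by
    apply StronglyMeasurable.indicator _ hSm
    exact Measurable.stronglyMeasurable (by measurability)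
  have hHnn : ∀ p, 0 ≤ H p := by
    intro p
    rw [hH]
    apply Set.indicator_nonneg
    intro q hq
    have : (0:ℝ) < q.1 - q.2 := sub_pos.2 hq
    positivity
  -- slice description
  have hHslice : ∀ τ : ℝ, (fun s => H (τ, s))
      = fun s => (Set.Iio τ).indicator (fun s => (τ - s) ^ (α-1)) s := by
    intro τ; funext s
    simp only [hH, hS, Set.indicator_apply, Set.mem_setOf_eq, Set.mem_Iio]
  have hslice_int : ∀ τ : ℝ, Integrable (fun s => H (τ, s)) μ := by
    intro τ
    rw [hHslice τ]
    have i1 : IntervalIntegrable (fun u : ℝ => u ^ (α-1)) volume (τ - tst) (τ - t₀) :=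
      intervalIntegrable_rpow' (by linarith)
    have i2 := i1.comp_sub_left τ
    simp only [sub_sub_cancel] at i2
    have i3 : IntegrableOn (fun s : ℝ => (τ - s) ^ (α-1)) (Set.Ioc t₀ tst) volume := i2.symm.1
    exact i3.indicator measurableSet_Iio
  -- slice integral value
  have hslice_val : ∀ τ ∈ Set.Ioc t₀ tst,
      (∫ s, ‖H (τ, s)‖ ∂μ) = (τ - t₀) ^ α / α := by
    intro τ hτ
    have : (fun s => ‖H (τ, s)‖) = fun s => H (τ, s) := by
      funext s; exact Real.norm_of_nonneg (hHnn _)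
    rw [this, hHslice τ, hμ, setIntegral_indicator measurableSet_Iio]
    have hset : Set.Ioc t₀ tst ∩ Set.Iio τ = Set.Ioo t₀ τ := by
      ext s
      simp only [Set.mem_inter_iff, Set.mem_Ioc, Set.mem_Iio, Set.mem_Ioo]
      constructor
      · rintro ⟨⟨a, b⟩, c⟩; exact ⟨a, c⟩
      · rintro ⟨a, c⟩; exact ⟨⟨a, by linarith [hτ.2]⟩, c⟩
    rw [hset, ← MeasureTheory.integral_Ioc_eq_integral_Ioo,
      ← intervalIntegral.integral_of_le hτ.1.le,
      intervalIntegral.integral_comp_sub_left (fun u : ℝ => u ^ (α-1)) τ]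
    rw [sub_self]
    rw [integral_rpow (Or.inl (by linarith))]
    rw [sub_add_cancel, Real.zero_rpow hα0.ne', sub_zero]
  have hHi : Integrable H (μ.prod μ) := by
    rw [MeasureTheory.integrable_prod_iff hHsm.aestronglyMeasurable]
    constructor
    · exact Filter.Eventually.of_forall hslice_int
    · apply Integrable.mono' (integrable_const ((tst - t₀) ^ α / α))
        (hHsm.norm.integral_prod_right').aestronglyMeasurable
      rw [hμ]
      rw [ae_restrict_iff' measurableSet_Ioc]
      apply Filter.Eventually.of_forall
      intro τ hτ
      obtain ⟨hτ1, hτ2⟩ := hτ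
      rw [Real.norm_of_nonneg (integral_nonneg fun s => norm_nonneg _)]
      rw [hslice_val τ ⟨hτ1, hτ2⟩]
      gcongr <;> linarith
  have hFi : Integrable F (μ.prod μ) := by
    apply Integrable.mono' (hHi.mul_const ((t - tst) ^ (-(1+α)) * M))
      hFsm.aestronglyMeasurable
    rw [hμ, Measure.prod_restrict, ae_restrict_iff' (measurableSet_Ioc.prod measurableSet_Ioc)]
    apply Filter.Eventually.of_forall
    rintro ⟨τ, s⟩ hp
    simp only [Set.mem_prod, Set.mem_Ioc] at hp
    by_cases hst : s < τ
    · have hmem : (τ, s) ∈ S := hst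
      simp only [hF, hH, Set.indicator_of_mem hmem, norm_smul]
      have ha : (0:ℝ) < τ - s := sub_pos.2 hst
      have hb2 : (0:ℝ) < t - τ := by linarith [hp.1.2]
      have h2 : (t - τ) ^ (-(1+α)) ≤ (t - tst) ^ (-(1+α)) :=
        Real.rpow_le_rpow_of_nonpos (by linarith) (by linarith [hp.1.2]) (by linarith)
      have h3 : ‖(τ - s) ^ (α-1) * (t - τ) ^ (-(1+α))‖
          = (τ - s) ^ (α-1) * (t - τ) ^ (-(1+α)) := by
        apply Real.norm_of_nonneg; positivity
      rw [h3]
      calc (τ - s) ^ (α-1) * (t - τ) ^ (-(1+α)) * ‖φ s‖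
          ≤ (τ - s) ^ (α-1) * (t - tst) ^ (-(1+α)) * M := by
            apply mul_le_mul (by apply mul_le_mul_of_nonneg_left h2 (Real.rpow_nonneg ha.le _))
              (hb s) (norm_nonneg _)
              (mul_nonneg (Real.rpow_nonneg ha.le _)
                (Real.rpow_nonneg (by linarith : (0:ℝ) ≤ t - tst) _))
        _ = (τ - s) ^ (α-1) * ((t - tst) ^ (-(1+α)) * M) := by ring
    · have hmem : (τ, s) ∉ S := hst
      simp only [hF, hH, Set.indicator_of_notMem hmem, norm_zero, zero_mul, le_refl]
  have hswap := MeasureTheory.integral_integral_swap (f := fun τ s => F (τ, s)) hFi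
  -- identify LHS
  have hL : ∫ τ in Set.Ioc t₀ tst, ((t - τ) ^ (-(1+α))) •
      (∫ s in Set.Ioc t₀ τ, ((τ - s) ^ (α-1)) • φ s)
      = ∫ τ, (∫ s, F (τ, s) ∂μ) ∂μ := by
    rw [hμ]
    apply setIntegral_congr_fun measurableSet_Ioc
    intro τ hτ
    show ((t - τ) ^ (-(1+α))) • (∫ s in Set.Ioc t₀ τ, ((τ - s) ^ (α-1)) • φ s)
      = ∫ s in Set.Ioc t₀ tst, F (τ, s)
    have hfun : (fun s => F (τ, s)) = fun s =>
        (Set.Iio τ).indicator (fun s => ((τ - s) ^ (α-1) * (t - τ) ^ (-(1+α))) • φ s) s := by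
      funext s
      simp only [hF, hS, Set.indicator_apply, Set.mem_setOf_eq, Set.mem_Iio]
    rw [hfun, setIntegral_indicator measurableSet_Iio]
    have hset : Set.Ioc t₀ tst ∩ Set.Iio τ = Set.Ioo t₀ τ := by
      ext s
      simp only [Set.mem_inter_iff, Set.mem_Ioc, Set.mem_Iio, Set.mem_Ioo]
      constructor
      · rintro ⟨⟨a, b⟩, c⟩; exact ⟨a, c⟩
      · rintro ⟨a, c⟩; exact ⟨⟨a, by linarith [hτ.2]⟩, c⟩
    rw [hset, ← MeasureTheory.integral_Ioc_eq_integral_Ioo]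
    have : (fun s => ((τ - s) ^ (α-1) * (t - τ) ^ (-(1+α))) • φ s)
        = fun s => (t - τ) ^ (-(1+α)) • (((τ - s) ^ (α-1)) • φ s) := by
      funext s; rw [smul_smul, mul_comm]
    rw [this, MeasureTheory.integral_smul]
  -- identify RHS
  have hR : ∫ s in Set.Ioc t₀ tst,
      (∫ τ in Set.Ioc s tst, (τ - s) ^ (α-1) * (t - τ) ^ (-(1+α))) • φ s
      = ∫ s, (∫ τ, F (τ, s) ∂μ) ∂μ := by
    rw [hμ]
    apply setIntegral_congr_fun measurableSet_Ioc
    intro s hs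
    show (∫ τ in Set.Ioc s tst, (τ - s) ^ (α-1) * (t - τ) ^ (-(1+α))) • φ s
      = ∫ τ in Set.Ioc t₀ tst, F (τ, s)
    have hfun : (fun τ => F (τ, s)) = fun τ =>
        (Set.Ioi s).indicator (fun τ => ((τ - s) ^ (α-1) * (t - τ) ^ (-(1+α))) • φ s) τ := by
      funext τ
      simp only [hF, hS, Set.indicator_apply, Set.mem_setOf_eq, Set.mem_Ioi]
    rw [hfun, setIntegral_indicator measurableSet_Ioi]
    have hset : Set.Ioc t₀ tst ∩ Set.Ioi s = Set.Ioc s tst := by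
      ext τ
      simp only [Set.mem_inter_iff, Set.mem_Ioc, Set.mem_Ioi]
      constructor
      · rintro ⟨⟨a, b⟩, c⟩; exact ⟨c, b⟩
      · rintro ⟨a, c⟩; exact ⟨⟨by linarith [hs.1], c⟩, a⟩
    rw [hset, _root_.integral_smul_const]
  have hswap' : ∫ τ, (∫ s, F (τ, s) ∂μ) ∂μ = ∫ s, (∫ τ, F (τ, s) ∂μ) ∂μ := hswap
  rw [hL, hR, hswap']

end AuxiliaryLemmas

/-- For `φ ∈ L^∞([t₀,t*],ℝⁿ)`, `x = I^α_{t₀+}φ`, and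
`ψ(t) = (sin(απ)/π) ∫_{t₀}^{t*} (t*-τ)^α (t-τ)⁻¹ φ(τ) dτ`, one has
`ψ(t) = ((t-t*)^α α / Γ(1-α)) ∫_{t₀}^{t*} (t-τ)^{-1-α} x(τ) dτ` for `t ∈ (t*,θ]`. -/
theorem continuation_lemma_second_identity
    (n : ℕ) (α t₀ tst θ : ℝ) (hα : α ∈ Set.Ioo (0 : ℝ) 1)
    (h₁ : t₀ < tst) (h₂ : tst < θ)
    (φ : ℝ → EuclideanSpace ℝ (Fin n)) (hφm : Measurable φ)
    (hφb : eLpNorm φ ⊤ (volume.restrict (Set.Icc t₀ tst)) < ⊤)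
    (x : ℝ → EuclideanSpace ℝ (Fin n))
    (hx : ∀ t ∈ Set.Icc t₀ tst,
      x t = (Real.Gamma α)⁻¹ • ∫ τ in t₀..t, ((t - τ) ^ (α - 1)) • φ τ) :
    ∀ t ∈ Set.Ioc tst θ,
      (Real.sin (α * π) / π) • (∫ τ in t₀..tst, ((tst - τ) ^ α / (t - τ)) • φ τ)
        = ((t - tst) ^ α * α / Real.Gamma (1 - α)) •
            ∫ τ in t₀..tst, ((t - τ) ^ (-(1 + α))) • x τ := by
  obtain ⟨hα0, hα1⟩ := hα
  intro t htmem
  have htt : tst < t := htmem.1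
  set μic := volume.restrict (Set.Icc t₀ tst) with hμic
  set M : ℝ := (eLpNorm φ ⊤ μic).toReal with hM
  have hM0 : (0:ℝ) ≤ M := ENNReal.toReal_nonneg
  set φ' : ℝ → EuclideanSpace ℝ (Fin n) := fun s => if ‖φ s‖ ≤ M then φ s else 0 with hφ'
  have hφ'm : Measurable φ' :=
    Measurable.ite (measurableSet_le hφm.norm measurable_const) hφm measurable_const
  have hb' : ∀ s, ‖φ' s‖ ≤ M := by
    intro s
    rw [hφ']
    dsimp only
    split
    · assumption
    · simpa using hM0
  have haeIcc : ∀ᵐ s ∂μic, φ s = φ' s := by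
    filter_upwards [MeasureTheory.ae_le_eLpNormEssSup (f := φ) (μ := μic)] with s hs
    have h1 : ‖φ s‖ ≤ M := by
      have h2 : ‖φ s‖ ≤ (eLpNormEssSup φ μic).toReal := by
        have h3 := ENNReal.toReal_mono (by rw [← eLpNorm_exponent_top]; exact hφb.ne) hs
        simpa using h3
      rw [hM, eLpNorm_exponent_top]
      exact h2
    rw [hφ']
    simp [h1]
  have haeIoc : ∀ᵐ s ∂(volume.restrict (Set.Ioc t₀ tst)), φ s = φ' s :=
    ae_mono (Measure.restrict_mono Set.Ioc_subset_Icc_self le_rfl) haeIcc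
  have hx' : ∀ τ ∈ Set.Icc t₀ tst,
      x τ = (Real.Gamma α)⁻¹ • ∫ s in Set.Ioc t₀ τ, ((τ - s) ^ (α - 1)) • φ' s := by
    intro τ hτ
    have haeτ : ∀ᵐ s ∂(volume.restrict (Set.Ioc t₀ τ)), φ s = φ' s :=
      ae_mono (Measure.restrict_mono
        (Set.Ioc_subset_Icc_self.trans (Set.Icc_subset_Icc le_rfl hτ.2)) le_rfl) haeIcc
    rw [hx τ hτ, intervalIntegral.integral_of_le hτ.1]
    congr 1
    apply MeasureTheory.integral_congr_ae
    filter_upwards [haeτ] with s hs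
    rw [hs]
  have hLHS : ∫ τ in t₀..tst, ((tst - τ) ^ α / (t - τ)) • φ τ
      = ∫ s in Set.Ioc t₀ tst, ((tst - s) ^ α / (t - s)) • φ' s := by
    rw [intervalIntegral.integral_of_le h₁.le]
    apply MeasureTheory.integral_congr_ae
    filter_upwards [haeIoc] with s hs
    rw [hs]
  have hR1 : ∫ τ in t₀..tst, ((t - τ) ^ (-(1 + α))) • x τ
      = ∫ τ in Set.Ioc t₀ tst, (Real.Gamma α)⁻¹ •
          (((t - τ) ^ (-(1 + α))) • (∫ s in Set.Ioc t₀ τ, ((τ - s) ^ (α - 1)) • φ' s)) := by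
    rw [intervalIntegral.integral_of_le h₁.le]
    apply setIntegral_congr_fun measurableSet_Ioc
    intro τ hτ
    show ((t - τ) ^ (-(1 + α))) • x τ = (Real.Gamma α)⁻¹ •
        (((t - τ) ^ (-(1 + α))) • (∫ s in Set.Ioc t₀ τ, ((τ - s) ^ (α - 1)) • φ' s))
    rw [hx' τ ⟨hτ.1.le, hτ.2⟩, smul_comm]
  have hR2 := fubini_step n α t₀ tst t M ⟨hα0, hα1⟩ h₁ htt φ' hφ'm hb'
  have hR3 : ∫ s in Set.Ioc t₀ tst,
      (∫ τ in Set.Ioc s tst, (τ - s) ^ (α - 1) * (t - τ) ^ (-(1 + α))) • φ' s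
      = ∫ s in Set.Ioc t₀ tst,
          ((tst - s) ^ α * (t - tst) ^ (-α) / (α * (t - s))) • φ' s := by
    apply setIntegral_congr_fun measurableSet_Ioc
    intro s hs
    show (∫ τ in Set.Ioc s tst, (τ - s) ^ (α - 1) * (t - τ) ^ (-(1 + α))) • φ' s
        = ((tst - s) ^ α * (t - tst) ^ (-α) / (α * (t - s))) • φ' s
    rcases eq_or_lt_of_le hs.2 with he | hlt
    · rw [he]
      simp [Set.Ioc_self, sub_self, Real.zero_rpow hα0.ne']
    · congr 1
      rw [← intervalIntegral.integral_of_le hlt.le]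
      exact ftc_kernel α t s tst ⟨hα0, hα1⟩ hlt htt
  have hsplit : (fun s => ((tst - s) ^ α * (t - tst) ^ (-α) / (α * (t - s))) • φ' s)
      = fun s => ((t - tst) ^ (-α) / α) • (((tst - s) ^ α / (t - s)) • φ' s) := by
    funext s
    rw [smul_smul]
    congr 1
    rw [div_mul_div_comm]
    ring
  have hGα : 0 < Real.Gamma α := Real.Gamma_pos_of_pos hα0
  have hG1α : 0 < Real.Gamma (1 - α) := Real.Gamma_pos_of_pos (by linarith)
  have hGmul : Real.Gamma α * Real.Gamma (1 - α) = π / Real.sin (π * α) :=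
    Real.Gamma_mul_Gamma_one_sub α
  have hpow : (t - tst) ^ α * (t - tst) ^ (-α) = 1 := by
    rw [← Real.rpow_add (by linarith)]
    simp
  have hsc : (t - tst) ^ α * α / Real.Gamma (1 - α) * (Real.Gamma α)⁻¹ *
      ((t - tst) ^ (-α) / α) = Real.sin (α * π) / π := by
    have h9 : Real.sin (α * π) = Real.sin (π * α) := by rw [mul_comm]
    calc (t - tst) ^ α * α / Real.Gamma (1 - α) * (Real.Gamma α)⁻¹ * ((t - tst) ^ (-α) / α)
        = ((t - tst) ^ α * (t - tst) ^ (-α)) * (α / α) *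
            ((Real.Gamma (1 - α))⁻¹ * (Real.Gamma α)⁻¹) := by ring
      _ = (Real.Gamma α * Real.Gamma (1 - α))⁻¹ := by
            rw [hpow, div_self hα0.ne', mul_inv]
            ring
      _ = (π / Real.sin (π * α))⁻¹ := by rw [hGmul]
      _ = Real.sin (π * α) / π := by rw [inv_div]
      _ = Real.sin (α * π) / π := by rw [h9]
  rw [hLHS, hR1, MeasureTheory.integral_smul, hR2, hR3, hsplit,
    MeasureTheory.integral_smul, smul_smul, smul_smul, hsc]
end
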